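/- arXiv:1909.09630 — 5 statements merged into one kernel-verified Lean document; each statement's English description precedes it below -/
import Mathlib

section
/- Fix an integer n ≥ (128/49)·ln 6 and an integer m with 0 ≤ m ≤ n/8, and let p(m,n) = 1/2 + m/(2n) + √(ln(6)/(2n)). If W⁺ is distributed as Bin(n, p(m,n)), then Pr[ W⁺ < (n+m)/2 or W⁺ > (n+m)/2 + √(2n·ln 6) ] < 1/3. -/
open Real Finset

lemma bernoulli_mgf_le (p : ℝ) (hp0 : 0 ≤ p) (hp1 : p ≤ 1) (t : ℝ) :
    (1 - p) + p * Real.exp t ≤ Real.exp (t * p + t ^ 2 / 8) := by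
  set q : ℝ := 1 - p with hq
  have hq0 : 0 ≤ q := by simp [hq]; linarith
  -- positivity of h
  have hpos : ∀ x : ℝ, 0 < q + p * Real.exp x := by
    intro x
    rcases eq_or_lt_of_le hp0 with h | h
    · simp [← h]; linarith [hq0, (by linarith : (0:ℝ) < 1 - p)]
    · have := Real.exp_pos x
      nlinarith
  set g' : ℝ → ℝ := fun x => p + x / 4 - p * Real.exp x / (q + p * Real.exp x) with hg'
  set g : ℝ → ℝ := fun x => x * p + x ^ 2 / 8 - Real.log (q + p * Real.exp x) with hg
  have hderiv_g : ∀ x : ℝ, HasDerivAt g (g' x) x := by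
    intro x
    have h1 : HasDerivAt (fun y : ℝ => q + p * Real.exp y) (p * Real.exp x) x := by
      exact ((hasDerivAt_const x q).add ((Real.hasDerivAt_exp x).const_mul p)).congr_deriv (by ring)
    have h2 : HasDerivAt (fun y : ℝ => Real.log (q + p * Real.exp y))
        (p * Real.exp x / (q + p * Real.exp x)) x := h1.log (hpos x).ne'
    have h3 : HasDerivAt (fun y : ℝ => y * p + y ^ 2 / 8) (p + x / 4) x := by
      have := ((hasDerivAt_id x).mul_const p).add
        (((hasDerivAt_pow 2 x)).div_const 8)
      exact this.congr_deriv (by norm_num; ring)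
    exact h3.sub h2
  have hderiv_g' : ∀ x : ℝ, HasDerivAt g'
      (1 / 4 - p * q * Real.exp x / (q + p * Real.exp x) ^ 2) x := by
    intro x
    have h1 : HasDerivAt (fun y : ℝ => q + p * Real.exp y) (p * Real.exp x) x := by
      exact ((hasDerivAt_const x q).add ((Real.hasDerivAt_exp x).const_mul p)).congr_deriv (by ring)
    have h2 : HasDerivAt (fun y : ℝ => p * Real.exp y) (p * Real.exp x) x :=
      (Real.hasDerivAt_exp x).const_mul p
    have h3 := h2.div h1 (hpos x).ne'
    have h4 : HasDerivAt (fun y : ℝ => p + y / 4) (1 / 4) x := by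
      exact ((hasDerivAt_const x p).add ((hasDerivAt_id x).div_const 4)).congr_deriv (by norm_num)
    have h5 := h4.sub h3
    refine h5.congr_deriv ?_
    field_simp
    ring
  have hmono_g' : Monotone g' := by
    apply monotone_of_deriv_nonneg (fun x => (hderiv_g' x).differentiableAt)
    intro x
    rw [(hderiv_g' x).deriv]
    have he := Real.exp_pos x
    have hsq : 0 ≤ (q - p * Real.exp x) ^ 2 := sq_nonneg _
    have h2 := hpos x
    rw [sub_nonneg, div_le_iff₀ (by positivity)]
    nlinarith
  have hqp : q + p = 1 := by simp [hq]
  have hg'0 : g' 0 = 0 := by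
    simp [hg']
    rw [hqp]
    simp
  have hg0 : g 0 = 0 := by
    have h1 : q + p * Real.exp 0 = 1 := by simp [hq]
    simp [hg, h1, hqp]
  have hgnonneg : ∀ x : ℝ, 0 ≤ g x := by
    intro x
    rcases le_or_gt 0 x with hx | hx
    · have hmg : MonotoneOn g (Set.Ici (0:ℝ)) := by
        apply monotoneOn_of_deriv_nonneg (convex_Ici 0)
          (fun y _ => (hderiv_g y).differentiableAt.continuousAt.continuousWithinAt)
          (fun y _ => (hderiv_g y).differentiableAt.differentiableWithinAt)
        intro y hy
        rw [(hderiv_g y).deriv, ← hg'0]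
        exact hmono_g' (le_of_lt (by simpa using hy))
      have := hmg (Set.self_mem_Ici) (Set.mem_Ici.mpr hx) hx
      linarith [hg0]
    · have hmg : AntitoneOn g (Set.Iic (0:ℝ)) := by
        apply antitoneOn_of_deriv_nonpos (convex_Iic 0)
          (fun y _ => (hderiv_g y).differentiableAt.continuousAt.continuousWithinAt)
          (fun y _ => (hderiv_g y).differentiableAt.differentiableWithinAt)
        intro y hy
        rw [(hderiv_g y).deriv, ← hg'0]
        exact hmono_g' (le_of_lt (by simpa using hy))
      have := hmg (Set.mem_Iic.mpr hx.le) (Set.self_mem_Iic) hx.le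
      linarith [hg0]
    
  have := hgnonneg t
  simp only [hg] at this
  have hlog : Real.log (q + p * Real.exp t) ≤ t * p + t ^ 2 / 8 := by linarith
  calc q + p * Real.exp t = Real.exp (Real.log (q + p * Real.exp t)) :=
        (Real.exp_log (hpos t)).symm
    _ ≤ Real.exp (t * p + t ^ 2 / 8) := Real.exp_le_exp.mpr hlog

/-- The probability that a binomial random variable with `n` trials and
success probability `p` equals `k`. -/
noncomputable def binomPMF (n : ℕ) (p : ℝ) (k : ℕ) : ℝ :=
  (n.choose k : ℝ) * p ^ k * (1 - p) ^ (n - k)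

lemma binomPMF_nonneg {n : ℕ} {p : ℝ} (hp0 : 0 ≤ p) (hp1 : p ≤ 1) (k : ℕ) :
    0 ≤ binomPMF n p k := by
  unfold binomPMF
  have : (0:ℝ) ≤ 1 - p := by linarith
  positivity

lemma binom_mgf (n : ℕ) (p t : ℝ) :
    ∑ k ∈ Finset.range (n + 1), binomPMF n p k * Real.exp (t * k)
      = ((1 - p) + p * Real.exp t) ^ n := by
  rw [add_comm (1 - p), add_pow]
  apply Finset.sum_congr rfl
  intro k _
  unfold binomPMF
  rw [mul_comm t (k:ℝ), Real.exp_nat_mul, mul_pow]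
  ring

lemma chernoff_upper (n : ℕ) (p t a : ℝ) (hp0 : 0 < p) (hp1 : p < 1) (ht : 0 < t)
    (ha : 0 ≤ a) :
    (∑ k ∈ Finset.range (n + 1), if a < (k:ℝ) then binomPMF n p k else 0)
      < Real.exp (-(t * a)) * ((1 - p) + p * Real.exp t) ^ n := by
  have key : (∑ k ∈ Finset.range (n + 1), if a < (k:ℝ) then binomPMF n p k else 0)
      < ∑ k ∈ Finset.range (n + 1), binomPMF n p k * Real.exp (t * ((k:ℝ) - a)) := by
    apply Finset.sum_lt_sum
    · intro k _
      by_cases h : a < (k:ℝ)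
      · simp only [h, if_true]
        have h1 : (1:ℝ) ≤ Real.exp (t * ((k:ℝ) - a)) := by
          rw [Real.one_le_exp_iff]
          nlinarith
        nlinarith [binomPMF_nonneg hp0.le hp1.le (n := n) k]
      · simp only [h, if_false]
        have := binomPMF_nonneg hp0.le hp1.le (n := n) k
        positivity
    · refine ⟨0, Finset.mem_range.mpr (Nat.succ_pos n), ?_⟩
      have h : ¬ (a < ((0:ℕ):ℝ)) := by push_neg; simpa using ha
      simp only [h, if_false]
      have hq : (0:ℝ) < 1 - p := by linarith
      have : binomPMF n p 0 = (1 - p) ^ n := by unfold binomPMF; simp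
      rw [this]
      positivity
  calc _ < ∑ k ∈ Finset.range (n + 1), binomPMF n p k * Real.exp (t * ((k:ℝ) - a)) := key
    _ = Real.exp (-(t * a)) * ∑ k ∈ Finset.range (n + 1),
          binomPMF n p k * Real.exp (t * k) := by
        rw [Finset.mul_sum]
        apply Finset.sum_congr rfl
        intro k _
        rw [mul_sub, Real.exp_sub, Real.exp_neg]
        ring
    _ = _ := by rw [binom_mgf]

lemma chernoff_lower (n : ℕ) (p t b : ℝ) (hp0 : 0 < p) (hp1 : p < 1) (ht : 0 < t)
    (hb : b ≤ n) :
    (∑ k ∈ Finset.range (n + 1), if (k:ℝ) < b then binomPMF n p k else 0)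
      < Real.exp (t * b) * ((1 - p) + p * Real.exp (-t)) ^ n := by
  have key : (∑ k ∈ Finset.range (n + 1), if (k:ℝ) < b then binomPMF n p k else 0)
      < ∑ k ∈ Finset.range (n + 1), binomPMF n p k * Real.exp (t * (b - (k:ℝ))) := by
    apply Finset.sum_lt_sum
    · intro k _
      by_cases h : (k:ℝ) < b
      · simp only [h, if_true]
        have h1 : (1:ℝ) ≤ Real.exp (t * (b - (k:ℝ))) := by
          rw [Real.one_le_exp_iff]
          nlinarith
        nlinarith [binomPMF_nonneg hp0.le hp1.le (n := n) k]
      · simp only [h, if_false]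
        have := binomPMF_nonneg hp0.le hp1.le (n := n) k
        positivity
    · refine ⟨n, Finset.mem_range.mpr (Nat.lt_succ_self n), ?_⟩
      have h : ¬ ((n:ℝ) < b) := by push_neg; exact hb
      simp only [h, if_false]
      have : binomPMF n p n = p ^ n := by unfold binomPMF; simp
      rw [this]
      positivity
  calc _ < ∑ k ∈ Finset.range (n + 1), binomPMF n p k * Real.exp (t * (b - (k:ℝ))) := key
    _ = Real.exp (t * b) * ∑ k ∈ Finset.range (n + 1),
          binomPMF n p k * Real.exp ((-t) * k) := by
        rw [Finset.mul_sum]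
        apply Finset.sum_congr rfl
        intro k _
        rw [mul_sub, Real.exp_sub, show (-t) * (k:ℝ) = -(t * k) by ring, Real.exp_neg]
        ring
    _ = _ := by rw [binom_mgf]

lemma log6_bounds : 1.69 < Real.log 6 ∧ Real.log 6 < 1.8 := by
  have h6 : (6:ℝ) = 2 * 3 := by norm_num
  have hlog6 : Real.log 6 = Real.log 2 + Real.log 3 := by
    rw [h6, Real.log_mul (by norm_num) (by norm_num)]
  have h3lb : (1:ℝ) < Real.log 3 := by
    rw [Real.lt_log_iff_exp_lt (by norm_num)]
    calc Real.exp 1 < 2.7182818286 := Real.exp_one_lt_d9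
      _ < 3 := by norm_num
  have h3ub : Real.log 3 < 1.104 := by
    have h1 : Real.log (3 / Real.exp 1) ≤ 3 / Real.exp 1 - 1 :=
      Real.log_le_sub_one_of_pos (by positivity)
    rw [Real.log_div (by norm_num) (Real.exp_ne_zero 1), Real.log_exp] at h1
    have h2 : 3 / Real.exp 1 < 3 / 2.7182818283 :=
      div_lt_div_of_pos_left (by norm_num) (by norm_num) Real.exp_one_gt_d9
    have h3 : (3:ℝ) / 2.7182818283 < 1.104 := by norm_num
    linarith
  constructor
  · have := Real.log_two_gt_d9
    rw [hlog6]; linarith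
  · have := Real.log_two_lt_d9
    rw [hlog6]; linarith

/-- for `n ≥ (128/49)·ln 6`, `0 ≤ m ≤ n/8`, and
`W⁺ ~ Bin(n, p(m,n))` with `p(m,n) = 1/2 + m/(2n) + √(ln 6/(2n))`,
`Pr[W⁺ < (n+m)/2 or W⁺ > (n+m)/2 + √(2n ln 6)] < 1/3`. -/
theorem stmt_1 (n m : ℕ) (hn : (128 / 49 : ℝ) * Real.log 6 ≤ (n : ℝ))
    (hm : (m : ℝ) ≤ (n : ℝ) / 8) :
    (∑ k ∈ Finset.range (n + 1),
        if ((k : ℝ) < ((n : ℝ) + (m : ℝ)) / 2 ∨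
            ((n : ℝ) + (m : ℝ)) / 2 + Real.sqrt (2 * n * Real.log 6) < (k : ℝ)) then
          binomPMF n (1/2 + (m : ℝ) / (2 * n) + Real.sqrt (Real.log 6 / (2 * n))) k
        else 0)
      < 1/3 := by
  obtain ⟨hL1, hL2⟩ := log6_bounds
  set L : ℝ := Real.log 6 with hLdef
  have hN4 : (4:ℝ) < (n:ℝ) := by nlinarith
  have hN5 : (5:ℝ) ≤ (n:ℝ) := by
    have h1 : (4:ℕ) < n := by exact_mod_cast hN4
    exact_mod_cast h1
  have hN0 : (0:ℝ) < (n:ℝ) := by linarith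
  have hN0' : (n:ℝ) ≠ 0 := ne_of_gt hN0
  have hL0 : (0:ℝ) < L := by linarith
  have hm0 : (0:ℝ) ≤ (m:ℝ) := Nat.cast_nonneg m
  set s : ℝ := Real.sqrt (2 * (n:ℝ) * L) with hsdef
  have hs2 : s ^ 2 = 2 * (n:ℝ) * L := Real.sq_sqrt (by positivity)
  have hs0 : 0 < s := Real.sqrt_pos.mpr (by positivity)
  set p : ℝ := 1/2 + (m:ℝ) / (2 * (n:ℝ)) + Real.sqrt (L / (2 * (n:ℝ))) with hpdef
  have hmdiv : (m:ℝ) / (2 * (n:ℝ)) ≤ 1/16 := by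
    rw [div_le_iff₀ (by linarith)]
    linarith
  have hmdiv0 : 0 ≤ (m:ℝ) / (2 * (n:ℝ)) := by positivity
  have hsqrt_small : Real.sqrt (L / (2 * (n:ℝ))) < 7/16 := by
    rw [Real.sqrt_lt' (by norm_num)]
    rw [div_lt_iff₀ (by linarith)]
    nlinarith
  have hp0 : 0 < p := by
    have := Real.sqrt_nonneg (L / (2 * (n:ℝ)))
    rw [hpdef]; linarith
  have hp1 : p < 1 := by
    rw [hpdef]; linarith
  -- mean identity
  have hq : (n:ℝ) * Real.sqrt (L / (2 * (n:ℝ))) = s / 2 := by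
    have h1 : Real.sqrt (L / (2 * (n:ℝ))) = s / (2 * (n:ℝ)) := by
      rw [show L / (2 * (n:ℝ)) = (2 * (n:ℝ) * L) / (2 * (n:ℝ)) ^ 2 by
            field_simp,
          Real.sqrt_div (by positivity), Real.sqrt_sq (by positivity), hsdef]
    rw [h1]; field_simp
  have hmu : (n:ℝ) * p = ((n:ℝ) + (m:ℝ)) / 2 + s / 2 := by
    have hmdiv2 : (n:ℝ) * ((m:ℝ) / (2 * (n:ℝ))) = (m:ℝ) / 2 := by field_simp
    rw [hpdef]
    linear_combination hq + hmdiv2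
  -- the parameter t
  set t : ℝ := 2 * s / (n:ℝ) with htdef
  have ht0 : 0 < t := by rw [htdef]; positivity
  -- common exponent computation
  have hcore : -(t * s / 2) + (n:ℝ) * t ^ 2 / 8 = -L := by
    rw [htdef]
    field_simp
    linear_combination (-4) * hs2
  clear_value L s p t
  -- upper tail
  have ha0 : (0:ℝ) ≤ ((n:ℝ) + (m:ℝ)) / 2 + s := by positivity
  have hupper : (∑ k ∈ Finset.range (n + 1),
      if ((n:ℝ) + (m:ℝ)) / 2 + s < (k:ℝ) then binomPMF n p k else 0) < 1/6 := by
    have h1 := chernoff_upper n p t (((n:ℝ) + (m:ℝ)) / 2 + s) hp0 hp1 ht0 ha0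
    have h2 : ((1 - p) + p * Real.exp t) ^ n ≤ Real.exp (t * p + t ^ 2 / 8) ^ n := by
      apply pow_le_pow_left₀ ?_ (bernoulli_mgf_le p hp0.le hp1.le t)
      have := mul_pos hp0 (Real.exp_pos t)
      linarith
    have h3 : Real.exp (-(t * (((n:ℝ) + (m:ℝ)) / 2 + s))) * Real.exp (t * p + t ^ 2 / 8) ^ n
        = 1/6 := by
      rw [← Real.exp_nat_mul, ← Real.exp_add]
      have hexp : -(t * (((n:ℝ) + (m:ℝ)) / 2 + s)) + (n:ℝ) * (t * p + t ^ 2 / 8) = -L := by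
        have e1 : -(t * (((n:ℝ) + (m:ℝ)) / 2 + s)) + (n:ℝ) * (t * p + t ^ 2 / 8)
            = -(t * s / 2) + (n:ℝ) * t ^ 2 / 8 := by linear_combination t * hmu
        rw [e1, hcore]
      rw [hexp, hLdef, Real.exp_neg, Real.exp_log (by norm_num : (0:ℝ) < 6)]
      norm_num
    have h4 : Real.exp (-(t * (((n:ℝ) + (m:ℝ)) / 2 + s))) * ((1 - p) + p * Real.exp t) ^ n
        ≤ 1/6 := by
      rw [← h3]
      exact mul_le_mul_of_nonneg_left h2 (Real.exp_pos _).le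
    exact h1.trans_le h4
  -- lower tail
  have hb : ((n:ℝ) + (m:ℝ)) / 2 ≤ (n:ℝ) := by linarith
  have hlower : (∑ k ∈ Finset.range (n + 1),
      if (k:ℝ) < ((n:ℝ) + (m:ℝ)) / 2 then binomPMF n p k else 0) < 1/6 := by
    have h1 := chernoff_lower n p t (((n:ℝ) + (m:ℝ)) / 2) hp0 hp1 ht0 hb
    have h2 : ((1 - p) + p * Real.exp (-t)) ^ n ≤ Real.exp ((-t) * p + (-t) ^ 2 / 8) ^ n := by
      apply pow_le_pow_left₀ ?_ (bernoulli_mgf_le p hp0.le hp1.le (-t))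
      have := mul_pos hp0 (Real.exp_pos (-t))
      linarith
    have h3 : Real.exp (t * (((n:ℝ) + (m:ℝ)) / 2)) * Real.exp ((-t) * p + (-t) ^ 2 / 8) ^ n
        = 1/6 := by
      rw [← Real.exp_nat_mul, ← Real.exp_add]
      have hexp : t * (((n:ℝ) + (m:ℝ)) / 2) + (n:ℝ) * ((-t) * p + (-t) ^ 2 / 8) = -L := by
        have e1 : t * (((n:ℝ) + (m:ℝ)) / 2) + (n:ℝ) * ((-t) * p + (-t) ^ 2 / 8)
            = -(t * s / 2) + (n:ℝ) * t ^ 2 / 8 := by linear_combination (-t) * hmu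
        rw [e1, hcore]
      rw [hexp, hLdef, Real.exp_neg, Real.exp_log (by norm_num : (0:ℝ) < 6)]
      norm_num
    have h4 : Real.exp (t * (((n:ℝ) + (m:ℝ)) / 2)) * ((1 - p) + p * Real.exp (-t)) ^ n
        ≤ 1/6 := by
      rw [← h3]
      exact mul_le_mul_of_nonneg_left h2 (Real.exp_pos _).le
    exact h1.trans_le h4
  -- combine
  have hsplit : (∑ k ∈ Finset.range (n + 1),
        if ((k : ℝ) < ((n : ℝ) + (m : ℝ)) / 2 ∨
            ((n : ℝ) + (m : ℝ)) / 2 + s < (k : ℝ)) then binomPMF n p k else 0)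
      ≤ (∑ k ∈ Finset.range (n + 1),
          if (k:ℝ) < ((n:ℝ) + (m:ℝ)) / 2 then binomPMF n p k else 0)
        + (∑ k ∈ Finset.range (n + 1),
          if ((n:ℝ) + (m:ℝ)) / 2 + s < (k:ℝ) then binomPMF n p k else 0) := by
    rw [← Finset.sum_add_distrib]
    apply Finset.sum_le_sum
    intro k _
    have hpk := binomPMF_nonneg hp0.le hp1.le (n := n) k
    by_cases h1 : (k:ℝ) < ((n:ℝ) + (m:ℝ)) / 2 <;>
      by_cases h2 : ((n:ℝ) + (m:ℝ)) / 2 + s < (k:ℝ) <;>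
      simp [h1, h2] <;> linarith
  linarith
end

section
/- Fix ε > 0, β ∈ (0,1), an even integer d > 4(e^{2ε}−1)²·ln(2/β), and an ε-private randomizer R from [d] to a countable message set 𝒴. Fix any message y ∈ 𝒴. If H is chosen uniformly at random among subsets of [d] of size d/2, then with probability at least 1−β over the choice of H, the message y is not v-leaky with respect to H and R, where v = (e^{2ε}−1)·√((4/d)·ln(2/β)). -/
open scoped Classical
open Finset

lemma exists_perm_image {α : Type*} [Fintype α] [DecidableEq α] {s t : Finset α}
    (h : s.card = t.card) : ∃ τ : Equiv.Perm α, ∀ x, τ x ∈ t ↔ x ∈ s := by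
  have e : {x // x ∈ s} ≃ {x // x ∈ t} :=
    Fintype.equivOfCardEq (by simpa [Fintype.card_coe] using h)
  have hc : Fintype.card {x // ¬ x ∈ s} = Fintype.card {x // ¬ x ∈ t} := by
    rw [Fintype.card_subtype_compl, Fintype.card_subtype_compl]
    simp [Fintype.card_coe, h]
  have f : {x // ¬ x ∈ s} ≃ {x // ¬ x ∈ t} := Fintype.equivOfCardEq hc
  refine ⟨e.subtypeCongr f, fun x => ?_⟩
  by_cases hx : x ∈ s
  · simp only [Equiv.subtypeCongr, Equiv.trans_apply, Equiv.sumCompl_symm_apply_of_pos hx,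
      Equiv.sumCongr_apply, Sum.map_inl, Equiv.sumCompl_apply_inl]
    exact iff_of_true (e ⟨x, hx⟩).2 hx
  · simp only [Equiv.subtypeCongr, Equiv.trans_apply, Equiv.sumCompl_symm_apply_of_neg hx,
      Equiv.sumCongr_apply, Sum.map_inr, Equiv.sumCompl_apply_inr]
    exact iff_of_false (f ⟨x, hx⟩).2 hx

-- fibers of π ↦ F.image π over size-n subsets all have the same cardinality
lemma fiber_const {α : Type*} [Fintype α] [DecidableEq α] {F : Finset α} {H H' : Finset α}
    (h : H.card = H'.card) (hF : F.card = H.card) :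
    (univ.filter (fun π : Equiv.Perm α => F.image ⇑π = H)).card
      = (univ.filter (fun π : Equiv.Perm α => F.image ⇑π = H')).card := by
  obtain ⟨τ, hτ⟩ := exists_perm_image h
  have himg : H.image ⇑τ = H' := by
    apply Finset.eq_of_subset_of_card_le
    · intro x hx
      obtain ⟨z, hz, rfl⟩ := Finset.mem_image.1 hx
      exact (hτ z).2 hz
    · rw [Finset.card_image_of_injective _ τ.injective, h]
  apply Finset.card_bij' (fun π _ => τ * π) (fun π _ => τ⁻¹ * π)
  · intro π hπ
    simp only [mem_filter, mem_univ, true_and] at hπ ⊢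
    rw [Equiv.Perm.coe_mul, ← Finset.image_image, hπ, himg]
  · intro π hπ
    simp only [mem_filter, mem_univ, true_and] at hπ ⊢
    rw [Equiv.Perm.coe_mul, ← Finset.image_image, hπ, ← himg,
      Finset.image_image]
    have hid : ⇑τ⁻¹ ∘ ⇑τ = id := by funext x; simp
    rw [hid, Finset.image_id]
  · intro π _; group
  · intro π _; group

lemma count_transfer {α : Type*} [Fintype α] [DecidableEq α] {n : ℕ} (F : Finset α)
    (hF : F.card = n) (P : Finset α → Prop) [DecidablePred P] {c : ℝ} (hc : 0 ≤ c)
    (hperm : ((univ.filter (fun π : Equiv.Perm α => P (F.image ⇑π))).card : ℝ)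
        ≤ c * (Fintype.card (Equiv.Perm α))) :
    (((powersetCard n (univ : Finset α)).filter P).card : ℝ)
      ≤ c * ((powersetCard n (univ : Finset α)).card) := by
  classical
  set K := powersetCard n (univ : Finset α) with hK
  have hmem : ∀ π : Equiv.Perm α, F.image ⇑π ∈ K := by
    intro π
    rw [hK, Finset.mem_powersetCard_univ, Finset.card_image_of_injective _ π.injective, hF]
  -- pick a base fiber size
  obtain ⟨H₀, hH₀⟩ : ∃ H₀, H₀ ∈ K := ⟨F.image ⇑(1 : Equiv.Perm α), hmem 1⟩
  set k := (univ.filter (fun π : Equiv.Perm α => F.image ⇑π = H₀)).card with hk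
  have hfib : ∀ H ∈ K, (univ.filter (fun π : Equiv.Perm α => F.image ⇑π = H)).card = k := by
    intro H hH
    rw [hk]
    apply fiber_const
    · rw [Finset.mem_powersetCard_univ] at hH hH₀; rw [hH, hH₀]
    · rw [Finset.mem_powersetCard_univ] at hH; rw [hH, hF]
  have htot : Fintype.card (Equiv.Perm α) = k * K.card := by
    rw [← Finset.card_univ, Finset.card_eq_sum_card_fiberwise (fun π _ => hmem π)]
    rw [Finset.sum_congr rfl (fun H hH => hfib H hH), Finset.sum_const, smul_eq_mul, mul_comm]
  have hcount : (univ.filter (fun π : Equiv.Perm α => P (F.image ⇑π))).card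
      = k * (K.filter P).card := by
    rw [Finset.card_eq_sum_card_fiberwise
      (f := fun π : Equiv.Perm α => F.image ⇑π) (t := K.filter P)
      (fun π hπ => Finset.mem_filter.2 ⟨hmem π, (Finset.mem_filter.1 hπ).2⟩)]
    rw [Finset.sum_congr rfl (fun H hH => ?_), Finset.sum_const, smul_eq_mul, mul_comm]
    have hPH : P H := (Finset.mem_filter.1 hH).2
    rw [← hfib H (Finset.mem_filter.1 hH).1]
    congr 1
    ext π
    simp only [Finset.mem_filter, mem_univ, true_and, and_iff_right_iff_imp]
    intro h; rw [h]; exact hPH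
  have hkpos : 0 < k := by
    rcases Nat.eq_zero_or_pos k with h0 | h0
    · exfalso
      have hcp := Fintype.card_pos (α := Equiv.Perm α)
      rw [htot, h0] at hcp
      simp at hcp
    · exact h0
  have := hperm
  rw [hcount, htot] at this
  push_cast at this
  have h2 : (k : ℝ) * ((K.filter P).card : ℝ) ≤ (k:ℝ) * (c * K.card) := by
    rw [mul_comm (c) _] at this ⊢
    calc (k : ℝ) * ((K.filter P).card : ℝ) ≤ (k:ℝ) * (K.card) * c := this
    _ = (k:ℝ) * ((K.card) * c) := by ring
  have := le_of_mul_le_mul_left h2 (by exact_mod_cast hkpos)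
  linarith

lemma exp_add_exp_le (x y : ℝ) :
    Real.exp x + Real.exp y ≤ 2 * Real.exp ((x + y) / 2 + (x - y) ^ 2 / 8) := by
  have ex : Real.exp x = Real.exp ((x + y) / 2) * Real.exp ((x - y) / 2) := by
    rw [← Real.exp_add]; ring_nf
  have ey : Real.exp y = Real.exp ((x + y) / 2) * Real.exp (-((x - y) / 2)) := by
    rw [← Real.exp_add]; ring_nf
  have h2 : Real.cosh ((x - y) / 2) ≤ Real.exp (((x - y) / 2) ^ 2 / 2) :=
    Real.cosh_le_exp_half_sq _
  rw [Real.cosh_eq] at h2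
  have h3 : (((x - y) / 2) ^ 2 / 2) = (x - y) ^ 2 / 8 := by ring
  rw [h3] at h2
  rw [ex, ey, Real.exp_add]
  nlinarith [Real.exp_pos ((x + y) / 2)]

def swp {n : ℕ} (σ : Fin n → Bool) : Equiv.Perm (Fin n × Bool) :=
  Function.Involutive.toPerm (fun p => (p.1, xor (σ p.1) p.2))
    (fun p => by simp)

@[simp] lemma swp_apply {n : ℕ} (σ : Fin n → Bool) (i : Fin n) (b : Bool) :
    swp σ (i, b) = (i, xor (σ i) b) := rfl

lemma mgf_bound {n : ℕ} (t : Fin n × Bool → ℝ) (R₀ l : ℝ)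
    (hsum : ∑ p, t p = 0) (hR : ∀ p q, t p - t q ≤ R₀) :
    ∑ π : Equiv.Perm (Fin n × Bool), Real.exp (l * ∑ i : Fin n, t (π (i, false)))
      ≤ (Fintype.card (Equiv.Perm (Fin n × Bool))) *
          Real.exp ((n : ℝ) * l ^ 2 * R₀ ^ 2 / 8) := by
  set S := ∑ π : Equiv.Perm (Fin n × Bool), Real.exp (l * ∑ i : Fin n, t (π (i, false)))
    with hS
  have step1 : ∀ σ : Fin n → Bool,
      S = ∑ π : Equiv.Perm (Fin n × Bool), Real.exp (l * ∑ i : Fin n, t (π (i, σ i))) := by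
    intro σ
    rw [hS]
    rw [← Equiv.sum_comp (Equiv.mulRight (swp σ))
      (fun π : Equiv.Perm (Fin n × Bool) => Real.exp (l * ∑ i : Fin n, t (π (i, σ i))))]
    apply Finset.sum_congr rfl
    intro π _
    simp [Equiv.Perm.mul_apply]
  have step2 : (2 ^ n : ℝ) * S
      = ∑ π : Equiv.Perm (Fin n × Bool), ∑ σ : Fin n → Bool,
          Real.exp (l * ∑ i : Fin n, t (π (i, σ i))) := by
    rw [Finset.sum_comm]
    have h1 : ∑ σ : Fin n → Bool, ∑ π : Equiv.Perm (Fin n × Bool),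
        Real.exp (l * ∑ i : Fin n, t (π (i, σ i))) = ∑ _σ : Fin n → Bool, S :=
      Finset.sum_congr rfl (fun σ _ => (step1 σ).symm)
    rw [h1, Finset.sum_const, Finset.card_univ]
    simp [mul_comm]
  have step3 : ∀ π : Equiv.Perm (Fin n × Bool),
      ∑ σ : Fin n → Bool, Real.exp (l * ∑ i : Fin n, t (π (i, σ i)))
        ≤ (2 ^ n : ℝ) * Real.exp ((n : ℝ) * l ^ 2 * R₀ ^ 2 / 8) := by
    intro π
    have hre : ∀ σ : Fin n → Bool, Real.exp (l * ∑ i : Fin n, t (π (i, σ i)))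
        = ∏ i : Fin n, Real.exp (l * t (π (i, σ i))) := by
      intro σ
      rw [Finset.mul_sum, Real.exp_sum]
    rw [Finset.sum_congr rfl (fun σ _ => hre σ)]
    rw [← Fintype.prod_sum (f := fun (i : Fin n) (b : Bool) => Real.exp (l * t (π (i, b))))]
    -- now: ∏ i, ∑ b : Bool, exp (l * t (π (i, b))) ≤ ...
    set c : Fin n → ℝ :=
      fun i => l * (t (π (i, true)) + t (π (i, false))) / 2 + l ^ 2 * R₀ ^ 2 / 8 with hc
    have hfac : ∀ i : Fin n, ∑ b : Bool, Real.exp (l * t (π (i, b)))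
        ≤ 2 * Real.exp (c i) := by
      intro i
      rw [Fintype.sum_bool]
      have := exp_add_exp_le (l * t (π (i, true))) (l * t (π (i, false)))
      have habs : (l * t (π (i, true)) - l * t (π (i, false))) ^ 2 ≤ l ^ 2 * R₀ ^ 2 := by
        have h1 := hR (π (i, true)) (π (i, false))
        have h2 := hR (π (i, false)) (π (i, true))
        have hd : (t (π (i, true)) - t (π (i, false))) ^ 2 ≤ R₀ ^ 2 := by nlinarith
        calc (l * t (π (i, true)) - l * t (π (i, false))) ^ 2
            = l ^ 2 * (t (π (i, true)) - t (π (i, false))) ^ 2 := by ring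
          _ ≤ l ^ 2 * R₀ ^ 2 := by nlinarith [sq_nonneg l]
      have hmono : Real.exp ((l * t (π (i, true)) + l * t (π (i, false))) / 2
            + (l * t (π (i, true)) - l * t (π (i, false))) ^ 2 / 8)
          ≤ Real.exp (c i) := by
        apply Real.exp_le_exp.2
        rw [hc]
        dsimp only
        nlinarith
      calc Real.exp (l * t (π (i, true))) + Real.exp (l * t (π (i, false)))
          ≤ 2 * Real.exp ((l * t (π (i, true)) + l * t (π (i, false))) / 2
              + (l * t (π (i, true)) - l * t (π (i, false))) ^ 2 / 8) := this
        _ ≤ 2 * Real.exp (c i) := by linarith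
    have hprod : ∏ i : Fin n, (∑ b : Bool, Real.exp (l * t (π (i, b))))
        ≤ ∏ i : Fin n, 2 * Real.exp (c i) := by
      apply Finset.prod_le_prod
      · intro i _
        apply Finset.sum_nonneg; intro b _; positivity
      · intro i _; exact hfac i
    have hcsum : ∑ i : Fin n, c i = (n : ℝ) * l ^ 2 * R₀ ^ 2 / 8 := by
      rw [hc]
      rw [Finset.sum_add_distrib, Finset.sum_const, Finset.card_univ]
      have hzero : ∑ i : Fin n, l * (t (π (i, true)) + t (π (i, false))) / 2 = 0 := by
        have h0 : ∑ i : Fin n, (t (π (i, true)) + t (π (i, false))) = 0 := by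
          have h1 : ∑ p : Fin n × Bool, t (π p) = 0 := by
            rw [Equiv.sum_comp π t]; exact hsum
          rw [Fintype.sum_prod_type] at h1
          calc ∑ i : Fin n, (t (π (i, true)) + t (π (i, false)))
              = ∑ i : Fin n, ∑ b : Bool, t (π (i, b)) := by
                apply Finset.sum_congr rfl; intro i _; rw [Fintype.sum_bool]
            _ = 0 := h1
        calc ∑ i : Fin n, l * (t (π (i, true)) + t (π (i, false))) / 2
            = (l / 2) * ∑ i : Fin n, (t (π (i, true)) + t (π (i, false))) := by
              rw [Finset.mul_sum]; apply Finset.sum_congr rfl; intro i _; ring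
          _ = 0 := by rw [h0]; ring
      rw [hzero]
      simp
      ring
    have hprodval : ∏ i : Fin n, 2 * Real.exp (c i)
        = (2 ^ n : ℝ) * Real.exp ((n : ℝ) * l ^ 2 * R₀ ^ 2 / 8) := by
      rw [Finset.prod_mul_distrib, Finset.prod_const, Finset.card_univ, ← Real.exp_sum, hcsum]
      simp
    calc ∏ i : Fin n, (∑ b : Bool, Real.exp (l * t (π (i, b))))
        ≤ ∏ i : Fin n, 2 * Real.exp (c i) := hprod
      _ = _ := hprodval
  have final : (2 ^ n : ℝ) * S ≤ (2 ^ n : ℝ) *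
      ((Fintype.card (Equiv.Perm (Fin n × Bool))) *
        Real.exp ((n : ℝ) * l ^ 2 * R₀ ^ 2 / 8)) := by
    rw [step2]
    calc ∑ π : Equiv.Perm (Fin n × Bool), ∑ σ : Fin n → Bool,
          Real.exp (l * ∑ i : Fin n, t (π (i, σ i)))
        ≤ ∑ _π : Equiv.Perm (Fin n × Bool),
            (2 ^ n : ℝ) * Real.exp ((n : ℝ) * l ^ 2 * R₀ ^ 2 / 8) :=
          Finset.sum_le_sum (fun π _ => step3 π)
      _ = (Fintype.card (Equiv.Perm (Fin n × Bool))) *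
            ((2 ^ n : ℝ) * Real.exp ((n : ℝ) * l ^ 2 * R₀ ^ 2 / 8)) := by
          rw [Finset.sum_const, Finset.card_univ]; simp
      _ = _ := by ring
  have h2n : (0 : ℝ) < 2 ^ n := by positivity
  exact le_of_mul_le_mul_left final h2n

lemma subset_tail {n : ℕ} (hn : 0 < n) (t : Fin n × Bool → ℝ) (R₀ a : ℝ)
    (hR₀ : 0 < R₀) (ha : 0 ≤ a)
    (hsum : ∑ p, t p = 0) (hR : ∀ p q, t p - t q ≤ R₀) :
    (((powersetCard n (univ : Finset (Fin n × Bool))).filter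
        (fun H => a ≤ ∑ x ∈ H, t x)).card : ℝ)
      ≤ Real.exp (-(2 * a ^ 2 / (n * R₀ ^ 2)))
          * ((powersetCard n (univ : Finset (Fin n × Bool))).card) := by
  set l : ℝ := 4 * a / (n * R₀ ^ 2) with hl
  have hnR : (0 : ℝ) < (n : ℝ) * R₀ ^ 2 := by positivity
  have hl0 : 0 ≤ l := by positivity
  set F : Finset (Fin n × Bool) :=
    univ.map ⟨fun i : Fin n => (i, false), fun i j h => by simpa using h⟩ with hF
  have hFcard : F.card = n := by simp [hF]
  have hsumF : ∀ π : Equiv.Perm (Fin n × Bool),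
      ∑ x ∈ F.image ⇑π, t x = ∑ i : Fin n, t (π (i, false)) := by
    intro π
    rw [Finset.sum_image (fun x _ y _ h => π.injective h), hF, Finset.sum_map]
    rfl
  apply count_transfer F hFcard _ (by positivity)
  -- Markov
  have hmarkov : ((univ.filter (fun π : Equiv.Perm (Fin n × Bool) =>
        a ≤ ∑ x ∈ F.image ⇑π, t x)).card : ℝ) * Real.exp (l * a)
      ≤ ∑ π : Equiv.Perm (Fin n × Bool), Real.exp (l * ∑ i : Fin n, t (π (i, false))) := by
    set Bad := univ.filter (fun π : Equiv.Perm (Fin n × Bool) =>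
        a ≤ ∑ x ∈ F.image ⇑π, t x) with hBad
    have h1 : (Bad.card : ℝ) * Real.exp (l * a)
        = ∑ _π ∈ Bad, Real.exp (l * a) := by
      rw [Finset.sum_const, nsmul_eq_mul]
    rw [h1]
    calc ∑ π ∈ Bad, Real.exp (l * a)
        ≤ ∑ π ∈ Bad, Real.exp (l * ∑ i : Fin n, t (π (i, false))) := by
          apply Finset.sum_le_sum
          intro π hπ
          apply Real.exp_le_exp.2
          apply mul_le_mul_of_nonneg_left _ hl0
          rw [← hsumF π]
          exact (Finset.mem_filter.1 hπ).2
      _ ≤ ∑ π : Equiv.Perm (Fin n × Bool), Real.exp (l * ∑ i : Fin n, t (π (i, false))) := by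
          apply Finset.sum_le_sum_of_subset_of_nonneg (Finset.filter_subset _ _)
          intro π _ _; positivity
  have hmgf := mgf_bound t R₀ l hsum hR
  have hexp : (n : ℝ) * l ^ 2 * R₀ ^ 2 / 8 - l * a = -(2 * a ^ 2 / (n * R₀ ^ 2)) := by
    rw [hl]
    field_simp
    ring
  have hepos : (0 : ℝ) < Real.exp (l * a) := Real.exp_pos _
  have step : ((univ.filter (fun π : Equiv.Perm (Fin n × Bool) =>
        a ≤ ∑ x ∈ F.image ⇑π, t x)).card : ℝ)
      ≤ (Fintype.card (Equiv.Perm (Fin n × Bool))) *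
          Real.exp ((n : ℝ) * l ^ 2 * R₀ ^ 2 / 8) / Real.exp (l * a) := by
    rw [le_div_iff₀ hepos]
    exact le_trans hmarkov hmgf
  calc ((univ.filter (fun π : Equiv.Perm (Fin n × Bool) =>
        a ≤ ∑ x ∈ F.image ⇑π, t x)).card : ℝ)
      ≤ (Fintype.card (Equiv.Perm (Fin n × Bool))) *
          Real.exp ((n : ℝ) * l ^ 2 * R₀ ^ 2 / 8) / Real.exp (l * a) := step
    _ = Real.exp (-(2 * a ^ 2 / (n * R₀ ^ 2))) *
          (Fintype.card (Equiv.Perm (Fin n × Bool))) := by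
        rw [← hexp, Real.exp_sub]
        ring

lemma card_filter_equiv {β γ : Type*} [Fintype β] [Fintype γ] [DecidableEq β] [DecidableEq γ]
    (e : β ≃ γ) (k : ℕ) (P : Finset γ → Prop) [DecidablePred P] :
    ((powersetCard k (univ : Finset β)).filter (fun H => P (H.image e))).card
      = ((powersetCard k (univ : Finset γ)).filter P).card := by
  apply Finset.card_bij (fun H _ => H.image e)
  · intro H hH
    rw [Finset.mem_filter] at hH ⊢
    refine ⟨?_, hH.2⟩
    rw [Finset.mem_powersetCard_univ] at hH ⊢
    rw [Finset.card_image_of_injective _ e.injective]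
    exact hH.1
  · intro H₁ h₁ H₂ h₂ h
    exact Finset.image_injective e.injective h
  · intro H' hH'
    refine ⟨H'.image e.symm, ?_, ?_⟩
    · rw [Finset.mem_filter] at hH' ⊢
      have himg : (H'.image ⇑e.symm).image ⇑e = H' := by
        rw [Finset.image_image]
        have : ⇑e ∘ ⇑e.symm = id := by funext x; simp
        rw [this, Finset.image_id]
      refine ⟨?_, by rw [himg]; exact hH'.2⟩
      rw [Finset.mem_powersetCard_univ] at hH' ⊢
      rw [Finset.card_image_of_injective _ e.symm.injective]
      exact hH'.1
    · rw [Finset.image_image]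
      have : ⇑e ∘ ⇑e.symm = id := by funext x; simp
      rw [this, Finset.image_id]

lemma subset_tail_d {d n : ℕ} (hn : 0 < n) (hd : d = 2 * n) (t : Fin d → ℝ) (R₀ a : ℝ)
    (hR₀ : 0 < R₀) (ha : 0 ≤ a) (hsum : ∑ p, t p = 0) (hR : ∀ p q, t p - t q ≤ R₀) :
    (((powersetCard n (univ : Finset (Fin d))).filter
        (fun H => a ≤ ∑ x ∈ H, t x)).card : ℝ)
      ≤ Real.exp (-(2 * a ^ 2 / (n * R₀ ^ 2)))
          * ((powersetCard n (univ : Finset (Fin d))).card) := by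
  have hcard : Fintype.card (Fin d) = Fintype.card (Fin n × Bool) := by
    simp [hd]; ring
  set e : Fin d ≃ Fin n × Bool := Fintype.equivOfCardEq hcard with he
  set t' : Fin n × Bool → ℝ := fun p => t (e.symm p) with ht'
  have hsum' : ∑ p, t' p = 0 := by
    rw [ht']
    rw [Equiv.sum_comp e.symm t]
    exact hsum
  have hR' : ∀ p q, t' p - t' q ≤ R₀ := fun p q => hR _ _
  have key := subset_tail hn t' R₀ a hR₀ ha hsum' hR'
  have heq : ((powersetCard n (univ : Finset (Fin d))).filter
        (fun H => a ≤ ∑ x ∈ H, t x)).card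
      = ((powersetCard n (univ : Finset (Fin n × Bool))).filter
        (fun H => a ≤ ∑ x ∈ H, t' x)).card := by
    rw [← card_filter_equiv e n (fun H => a ≤ ∑ x ∈ H, t' x)]
    congr 1
    apply Finset.filter_congr
    intro H hH
    have : ∑ x ∈ H.image ⇑e, t' x = ∑ x ∈ H, t x := by
      rw [Finset.sum_image (fun x _ y _ h => e.injective h)]
      apply Finset.sum_congr rfl
      intro x _
      rw [ht']
      simp
    rw [this]
  have hKcard : ((powersetCard n (univ : Finset (Fin d))).card : ℝ)
      = ((powersetCard n (univ : Finset (Fin n × Bool))).card : ℝ) := by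
    rw [Finset.card_powersetCard, Finset.card_powersetCard]
    simp [Finset.card_univ, hcard]
  rw [heq, hKcard]
  exact key


/-- `probU R S y` is the probability that a sample from `R(U_S)` (draw `x`
uniformly from `S`, then sample a message from `R x`) equals `y`, where
`R x y` is the probability that randomizer `R` on input `x` outputs `y`. -/
noncomputable def probU {d : ℕ} {Y : Type*} (R : Fin d → Y → ℝ)
    (S : Finset (Fin d)) (y : Y) : ℝ :=
  (∑ x ∈ S, R x y) / (S.card : ℝ)

/-- A message `y` is `v`-leaky with respect to `H, R` if
`|ln (Pr[R(U_H) = y] / Pr[R(U) = y])| > v`. -/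
noncomputable def leaky {d : ℕ} {Y : Type*} (R : Fin d → Y → ℝ)
    (H : Finset (Fin d)) (v : ℝ) (y : Y) : Prop :=
  v < |Real.log (probU R H y / probU R Finset.univ y)|

set_option maxHeartbeats 2000000 in
/-- for `ε > 0`, `β ∈ (0,1)`, even `d > 4(e^{2ε}-1)² ln(2/β)`,
an `ε`-private randomizer `R : [d] → 𝒴` with `𝒴` countable, and a fixed message `y`:
if `H` is uniform among size-`d/2` subsets of `[d]`, then with probability at least
`1-β` over `H`, `y` is not `(e^{2ε}-1)√((4/d) ln(2/β))`-leaky w.r.t. `H, R`. -/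
theorem stmt_3 {Y : Type*} [Countable Y] (ε β : ℝ) (d : ℕ)
    (hε : 0 < ε) (hβ : β ∈ Set.Ioo (0 : ℝ) 1) (hd : Even d)
    (hd2 : 4 * (Real.exp (2 * ε) - 1) ^ 2 * Real.log (2 / β) < (d : ℝ))
    (R : Fin d → Y → ℝ)
    (hR0 : ∀ x y, 0 ≤ R x y) (hR1 : ∀ x, ∑' y, R x y = 1)
    (hpriv : ∀ x x' y, R x y ≤ Real.exp ε * R x' y)
    (y : Y) :
    1 - β ≤
      (((Finset.powersetCard (d / 2) (Finset.univ : Finset (Fin d))).filter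
          (fun H => ¬ leaky R H
            ((Real.exp (2 * ε) - 1) * Real.sqrt (4 / (d : ℝ) * Real.log (2 / β))) y)).card : ℝ)
        / ((Finset.powersetCard (d / 2) (Finset.univ : Finset (Fin d))).card : ℝ) := by
  obtain ⟨hβ0, hβ1⟩ := hβ
  set L : ℝ := Real.log (2 / β) with hLdef
  have hL : 0 < L := Real.log_pos (by rw [lt_div_iff₀ hβ0]; linarith)
  set R' : ℝ := Real.exp (2 * ε) - 1 with hR'def
  have hR' : 0 < R' := by
    have : (1 : ℝ) < Real.exp (2 * ε) := by
      rw [← Real.exp_zero]; exact Real.exp_lt_exp.2 (by linarith)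
    simp [hR'def]; linarith
  have hdpos : 0 < d := by
    by_contra h
    have : d = 0 := by omega
    rw [this] at hd2
    simp at hd2
    nlinarith
  obtain ⟨r, hr⟩ := hd
  set n : ℕ := d / 2 with hndef
  have hdn : d = 2 * n := by omega
  have hn : 0 < n := by omega
  have hdR : (d : ℝ) = 2 * (n : ℝ) := by exact_mod_cast hdn
  set v : ℝ := R' * Real.sqrt (4 / (d : ℝ) * L) with hvdef
  have hargpos : 0 < 4 / (d : ℝ) * L := by
    have : (0:ℝ) < d := by exact_mod_cast hdpos
    positivity
  have hv0 : 0 < v := by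
    have := Real.sqrt_pos.2 hargpos
    positivity
  have hv2 : v ^ 2 = R' ^ 2 * (4 / (d : ℝ) * L) := by
    rw [hvdef, mul_pow, Real.sq_sqrt hargpos.le]
  have hv1 : v < 1 := by
    have hdR0 : (0:ℝ) < d := by exact_mod_cast hdpos
    have h1 : v ^ 2 < 1 := by
      rw [hv2, show R' ^ 2 * (4 / (d:ℝ) * L) = (4 * R' ^ 2 * L) / d by ring,
        div_lt_one hdR0]
      exact hd2
    nlinarith
  set K := Finset.powersetCard (d / 2) (Finset.univ : Finset (Fin d)) with hKdef
  have hKcard : 0 < K.card := by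
    rw [hKdef, Finset.card_powersetCard, Finset.card_univ, Fintype.card_fin]
    exact Nat.choose_pos (Nat.div_le_self _ _)
  have hKpos : (0 : ℝ) < K.card := by exact_mod_cast hKcard
  clear_value L R' v K n
  rw [le_div_iff₀ hKpos]
  by_cases hall : ∀ x : Fin d, R x y = 0
  · have hgood : K.filter (fun H => ¬ leaky R H v y) = K := by
      apply Finset.filter_true_of_mem
      intro H _
      intro hlk
      have h0 : probU R H y = 0 := by simp [probU, hall]
      rw [leaky, h0] at hlk
      simp at hlk
      linarith
    rw [hgood]
    nlinarith
  · push_neg at hall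
    obtain ⟨x0, hx0⟩ := hall
    set a : Fin d → ℝ := fun x => R x y with hadef
    have ha0 : ∀ x, 0 < a x := by
      intro x
      rcases lt_or_eq_of_le (hR0 x y) with h | h
      · exact h
      · exfalso
        have h1 := hpriv x0 x y
        rw [← h] at h1
        simp at h1
        exact hx0 (le_antisymm h1 (hR0 x0 y))
    have hne : Nonempty (Fin d) := ⟨⟨0, hdpos⟩⟩
    set T : ℝ := ∑ x, a x with hTdef
    have hT : 0 < T := Finset.sum_pos (fun x _ => ha0 x) Finset.univ_nonempty
    have hdR0 : (0:ℝ) < d := by exact_mod_cast hdpos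
    set A : ℝ := T / d with hAdef
    have hA : 0 < A := by positivity
    have h_up : ∀ x, a x ≤ Real.exp ε * A := by
      intro x
      have h1 : (d:ℝ) * a x ≤ Real.exp ε * T := by
        calc (d:ℝ) * a x = ∑ _x' : Fin d, a x := by
              rw [Finset.sum_const, Finset.card_univ, Fintype.card_fin, nsmul_eq_mul]
          _ ≤ ∑ x' : Fin d, Real.exp ε * a x' :=
              Finset.sum_le_sum (fun x' _ => hpriv x x' y)
          _ = Real.exp ε * T := by rw [← Finset.mul_sum]
      rw [show Real.exp ε * A = Real.exp ε * T / d by rw [hAdef]; ring, le_div_iff₀ hdR0]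
      linarith
    have h_lo : ∀ x, Real.exp (-ε) * A ≤ a x := by
      intro x
      have h1 : T ≤ (d:ℝ) * (Real.exp ε * a x) := by
        calc T = ∑ x', a x' := hTdef
          _ ≤ ∑ _x' : Fin d, Real.exp ε * a x :=
              Finset.sum_le_sum (fun x' _ => hpriv x' x y)
          _ = (d:ℝ) * (Real.exp ε * a x) := by
              rw [Finset.sum_const, Finset.card_univ, Fintype.card_fin, nsmul_eq_mul]
      have h3 : A ≤ Real.exp ε * a x := by
        rw [hAdef, div_le_iff₀ hdR0]; linarith
      have h4 : Real.exp (-ε) * Real.exp ε = 1 := by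
        rw [← Real.exp_add]; simp
      have h5 := mul_le_mul_of_nonneg_left h3 (Real.exp_pos (-ε)).le
      have h6 : Real.exp (-ε) * (Real.exp ε * a x) = a x := by
        rw [← mul_assoc, h4, one_mul]
      linarith [h5, h6]
    clear_value a T A
    set t : Fin d → ℝ := fun x => a x / A - 1 with htdef
    have hsum : ∑ x, t x = 0 := by
      have h1 : ∑ x, t x = T / A - d := by
        simp only [htdef]
        rw [Finset.sum_sub_distrib, Finset.sum_const, Finset.card_univ, Fintype.card_fin,
          nsmul_eq_mul, mul_one, ← Finset.sum_div, ← hTdef]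
      have h2 : T / A = d := by rw [hAdef]; field_simp
      rw [h1, h2]; ring
    set R₀ : ℝ := Real.exp ε - Real.exp (-ε) with hR₀def
    have hR₀ : 0 < R₀ := by
      rw [hR₀def]
      have : Real.exp (-ε) < Real.exp ε := Real.exp_lt_exp.2 (by linarith)
      linarith
    have hRt : ∀ p q, t p - t q ≤ R₀ := by
      intro p q
      have h1 := h_up p
      have h2 := h_lo q
      have h3 : t p - t q = (a p - a q) / A := by rw [htdef]; ring
      rw [h3, div_le_iff₀ hA, hR₀def]
      nlinarith
    clear_value t R₀
    set s : ℝ := 1 - Real.exp (-v) with hsdef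
    have hs0 : 0 < s := by
      rw [hsdef]
      have : Real.exp (-v) < 1 := by
        rw [← Real.exp_zero]; exact Real.exp_lt_exp.2 (by linarith)
      linarith
    have hs1 : v / 2 ≤ s := by
      have h1v : (0:ℝ) < 1 + v := by linarith
      have hq0 : (0:ℝ) < (1 + v)⁻¹ := by positivity
      have hinv2 : (1 + v)⁻¹ * (1 + v) = 1 := inv_mul_cancel₀ (ne_of_gt h1v)
      have hev : v + 1 ≤ Real.exp v := Real.add_one_le_exp v
      have hinv : Real.exp (-v) ≤ (1 + v)⁻¹ := by
        rw [Real.exp_neg]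
        apply inv_anti₀ h1v
        linarith
      have key : 1 / (1 + v) ≤ 1 - v / 2 := by
        rw [div_le_iff₀ h1v]; nlinarith [hv0.le, hv1]
      rw [one_div] at key
      rw [hsdef]
      linarith [hinv, key]
    clear_value s
    set a' : ℝ := (n : ℝ) * s with ha'def
    have ha' : 0 ≤ a' := by positivity
    clear_value a'
    have hnR0 : (0:ℝ) < (n:ℝ) := by exact_mod_cast hn
    -- non-leaky criterion
    have hnotleak : ∀ H ∈ K, ¬ (a' ≤ ∑ x ∈ H, t x) → ¬ (a' ≤ ∑ x ∈ H, -t x) →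
        ¬ leaky R H v y := by
      intro H hH h1 h2 hlk
      push_neg at h1 h2
      rw [Finset.sum_neg_distrib, neg_lt] at h2
      have hHn : H.card = n := by
        rw [hKdef] at hH
        rw [hndef]
        exact Finset.mem_powersetCard_univ.1 hH
      set St := ∑ x ∈ H, t x with hStdef
      have hsa : ∑ x ∈ H, a x = A * ((n:ℝ) + St) := by
        have : St = (∑ x ∈ H, a x) / A - (n:ℝ) := by
          rw [hStdef]
          simp only [htdef]
          rw [Finset.sum_sub_distrib, Finset.sum_const, hHn, nsmul_eq_mul, mul_one,
            ← Finset.sum_div]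
        rw [this]
        field_simp
        ring
      have hpH : probU R H y = A * ((n:ℝ) + St) / n := by
        have he : probU R H y = (∑ x ∈ H, a x) / (n:ℝ) := by
          simp only [probU, hadef, hHn]
        rw [he, hsa]
      have hpU : probU R Finset.univ y = A := by
        have he : probU R Finset.univ y = T / (d:ℝ) := by
          simp only [probU, Finset.card_univ, Fintype.card_fin]
          rw [hTdef]
          simp only [hadef]
        rw [he, hAdef]
      have hratio : probU R H y / probU R Finset.univ y = ((n:ℝ) + St) / n := by
        rw [hpH, hpU]
        field_simp
      -- bounds on the ratio
      have hub : (n:ℝ) + St ≤ (n:ℝ) * Real.exp v := by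
        have hsle : s ≤ Real.exp v - 1 := by
          have he1 : v + 1 ≤ Real.exp v := Real.add_one_le_exp v
          have he2 : (-v) + 1 ≤ Real.exp (-v) := Real.add_one_le_exp (-v)
          rw [hsdef]; linarith
        have h1' : St < (n:ℝ) * s := by rw [← ha'def]; exact h1
        nlinarith [hnR0]
      have hlb : (n:ℝ) * Real.exp (-v) ≤ (n:ℝ) + St := by
        have h2' : -((n:ℝ) * s) < St := by rw [← ha'def]; exact h2
        have hes : Real.exp (-v) = 1 - s := by rw [hsdef]; ring
        nlinarith [hnR0]
      have hrpos : (0:ℝ) < ((n:ℝ) + St) / n := by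
        have : (0:ℝ) < (n:ℝ) + St :=
          lt_of_lt_of_le (by positivity : (0:ℝ) < (n:ℝ) * Real.exp (-v)) hlb
        positivity
      have hlog1 : Real.log (((n:ℝ) + St) / n) ≤ v := by
        have hle : ((n:ℝ) + St) / n ≤ Real.exp v := by
          rw [div_le_iff₀ hnR0]; linarith
        calc Real.log (((n:ℝ) + St) / n) ≤ Real.log (Real.exp v) :=
              Real.log_le_log hrpos hle
          _ = v := Real.log_exp v
      have hlog2 : -v ≤ Real.log (((n:ℝ) + St) / n) := by
        have hle : Real.exp (-v) ≤ ((n:ℝ) + St) / n := by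
          rw [le_div_iff₀ hnR0]; linarith
        calc (-v) = Real.log (Real.exp (-v)) := (Real.log_exp _).symm
          _ ≤ Real.log (((n:ℝ) + St) / n) :=
              Real.log_le_log (Real.exp_pos _) hle
      rw [leaky, hratio] at hlk
      have habs : |Real.log (((n:ℝ) + St) / n)| ≤ v := abs_le.2 ⟨hlog2, hlog1⟩
      linarith
    have hsum_neg : ∑ x, -t x = 0 := by rw [Finset.sum_neg_distrib, hsum, neg_zero]
    have hRt_neg : ∀ p q : Fin d, -t p - -t q ≤ R₀ := by
      intro p q; have := hRt q p; linarith
    have hRR : R₀ ≤ R' := by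
      rw [hR₀def, hR'def]
      have hu : 1 ≤ Real.exp ε := Real.one_le_exp hε.le
      have h2e : Real.exp (2 * ε) = Real.exp ε * Real.exp ε := by
        rw [← Real.exp_add]; ring_nf
      have hie : Real.exp (-ε) * Real.exp ε = 1 := by rw [← Real.exp_add]; simp
      nlinarith [mul_nonneg (Real.exp_pos (-ε)).le (by linarith : (0:ℝ) ≤ Real.exp ε - 1),
        mul_nonneg (by linarith : (0:ℝ) ≤ Real.exp ε - 1) (by linarith : (0:ℝ) ≤ Real.exp ε),
        h2e, hie]
    have hnv : (n:ℝ) * v ^ 2 / 2 = R' ^ 2 * L := by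
      rw [hv2, hdR]
      field_simp
      ring
    have hexple : Real.exp (-(2 * a' ^ 2 / ((n:ℝ) * R₀ ^ 2))) ≤ β / 2 := by
      have hEge : L ≤ 2 * a' ^ 2 / ((n:ℝ) * R₀ ^ 2) := by
        rw [ha'def, le_div_iff₀ (by positivity : (0:ℝ) < (n:ℝ) * R₀ ^ 2)]
        have hs2 : v ^ 2 / 4 ≤ s ^ 2 := by nlinarith [hs1, hv0.le]
        have e1 : 2 * ((n:ℝ) ^ 2) * (v ^ 2 / 4) ≤ 2 * ((n:ℝ) * s) ^ 2 := by
          nlinarith [hs2, hnR0]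
        have hsq : R₀ ^ 2 ≤ R' ^ 2 := pow_le_pow_left₀ hR₀.le hRR 2
        have e4 : (n:ℝ) * (R₀ ^ 2 * L) ≤ (n:ℝ) * (R' ^ 2 * L) :=
          mul_le_mul_of_nonneg_left (mul_le_mul_of_nonneg_right hsq hL.le) hnR0.le
        have hnv2 : (n:ℝ) * ((n:ℝ) * v ^ 2 / 2) = (n:ℝ) * (R' ^ 2 * L) := by rw [hnv]
        linarith [e1, e4, hnv2]
      have hexpL : Real.exp (-L) = β / 2 := by
        rw [hLdef, Real.exp_neg, Real.exp_log (by positivity), inv_div]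
      calc Real.exp (-(2 * a' ^ 2 / ((n:ℝ) * R₀ ^ 2)))
          ≤ Real.exp (-L) := Real.exp_le_exp.2 (by linarith)
        _ = β / 2 := hexpL
    have htail : ∀ u : Fin d → ℝ, (∑ p, u p = 0) → (∀ p q, u p - u q ≤ R₀) →
        ((K.filter (fun H => a' ≤ ∑ x ∈ H, u x)).card : ℝ) ≤ (β / 2) * K.card := by
      intro u hu1 hu2
      have h1 := subset_tail_d hn hdn u R₀ a' hR₀ ha' hu1 hu2
      have hKn : K = powersetCard n (univ : Finset (Fin d)) := by rw [hKdef, hndef]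
      rw [← hKn] at h1
      refine h1.trans ?_
      exact mul_le_mul_of_nonneg_right hexple hKpos.le
    have hsub : K.filter (fun H => leaky R H v y) ⊆
        (K.filter (fun H => a' ≤ ∑ x ∈ H, t x))
          ∪ (K.filter (fun H => a' ≤ ∑ x ∈ H, -t x)) := by
      intro H hH
      rw [Finset.mem_filter] at hH
      obtain ⟨hHK, hlk⟩ := hH
      rw [Finset.mem_union, Finset.mem_filter, Finset.mem_filter]
      by_cases c1 : a' ≤ ∑ x ∈ H, t x
      · exact Or.inl ⟨hHK, c1⟩
      by_cases c2 : a' ≤ ∑ x ∈ H, -t x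
      · exact Or.inr ⟨hHK, c2⟩
      exact absurd hlk (hnotleak H hHK c1 c2)
    have hbad : ((K.filter (fun H => leaky R H v y)).card : ℝ) ≤ β * K.card := by
      calc ((K.filter (fun H => leaky R H v y)).card : ℝ)
          ≤ (((K.filter (fun H => a' ≤ ∑ x ∈ H, t x))
              ∪ (K.filter (fun H => a' ≤ ∑ x ∈ H, -t x))).card : ℝ) := by
            exact_mod_cast Finset.card_le_card hsub
        _ ≤ ((K.filter (fun H => a' ≤ ∑ x ∈ H, t x)).card : ℝ)
            + ((K.filter (fun H => a' ≤ ∑ x ∈ H, -t x)).card : ℝ) := by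
            exact_mod_cast Finset.card_union_le _ _
        _ ≤ (β / 2) * K.card + (β / 2) * K.card :=
            add_le_add (htail t hsum hRt) (htail (fun x => -t x) hsum_neg hRt_neg)
        _ = β * K.card := by ring
    have hsplit := Finset.card_filter_add_card_filter_not
      (s := K) (p := fun H => leaky R H v y)
    have hsplit' : ((K.filter (fun H => leaky R H v y)).card : ℝ)
        + ((K.filter (fun H => ¬ leaky R H v y)).card : ℝ) = (K.card : ℝ) := by
      exact_mod_cast hsplit
    linarith
end

section
/- Fix ε > 0, a vector R⃗ = (R_1,…,R_n) of ε-private randomizers from [d] to a finite message set 𝒴, and an even integer d > 4(e^{2ε}−1)²·ln(12·|𝒴|·|R⃗|_≠), where |R⃗|_≠ is the number of distinct randomizers among R_1,…,R_n. If H is chosen uniformly at random among subsets of [d] of size d/2, then with probability at least 5/6 over the choice of H: for every y ∈ 𝒴 and every i ∈ [n], the message y is not v-leaky with respect to H and R_i, where v = (e^{2ε}−1)·√((4/d)·ln(12·|𝒴|·|R⃗|_≠)). -/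
open scoped Classical

open Finset

namespace Stmt4Aux

variable {k d : ℕ}

noncomputable def pick (e : Fin d ≃ Fin k × Bool) (s : Fin k → Bool) : Finset (Fin d) :=
  Finset.univ.filter (fun x => (e x).2 = s (e x).1)

lemma pick_inj (e : Fin d ≃ Fin k × Bool) (s : Fin k → Bool) :
    Function.Injective (fun j => e.symm (j, s j)) := by
  intro a b h
  have := congrArg e h
  simp only [Equiv.apply_symm_apply] at this
  exact (Prod.mk.injEq _ _ _ _).mp this |>.1

lemma pick_eq_image (e : Fin d ≃ Fin k × Bool) (s : Fin k → Bool) :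
    pick e s = Finset.image (fun j => e.symm (j, s j)) Finset.univ := by
  ext x
  simp only [pick, mem_filter, mem_univ, true_and, mem_image]
  constructor
  · intro h
    refine ⟨(e x).1, ?_⟩
    have : ((e x).1, s (e x).1) = e x := by
      rw [← h]
    rw [this, Equiv.symm_apply_apply]
  · rintro ⟨j, rfl⟩
    simp [Equiv.apply_symm_apply]

lemma pick_card (e : Fin d ≃ Fin k × Bool) (s : Fin k → Bool) :
    (pick e s).card = k := by
  rw [pick_eq_image, Finset.card_image_of_injective _ (pick_inj e s), card_univ,
    Fintype.card_fin]

lemma sum_pick (e : Fin d ≃ Fin k × Bool) (s : Fin k → Bool) (c : Fin d → ℝ) :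
    ∑ x ∈ pick e s, c x = ∑ j, c (e.symm (j, s j)) := by
  rw [pick_eq_image, Finset.sum_image]
  intro a _ b _ h
  exact pick_inj e s h

lemma chernoff_one (δ : Fin k → ℝ) (t B : ℝ) (ht : 0 < t) (hB : 0 < B)
    (hδ : ∑ j, δ j ^ 2 ≤ B) :
    ((univ.filter (fun s : Fin k → Bool =>
        t < ∑ j, (if s j then δ j else -δ j))).card : ℝ)
      ≤ Real.exp (-t ^ 2 / (2 * B)) * 2 ^ k := by
  set lam := t / B with hlam
  have hlampos : 0 < lam := div_pos ht hB
  set F : Finset (Fin k → Bool) := univ.filter (fun s =>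
      t < ∑ j, (if s j then δ j else -δ j)) with hF
  have h1 : (F.card : ℝ) * Real.exp (lam * t)
      ≤ ∑ s ∈ F, Real.exp (lam * ∑ j, (if s j then δ j else -δ j)) := by
    have := Finset.card_nsmul_le_sum F
      (fun s => Real.exp (lam * ∑ j, (if s j then δ j else -δ j)))
      (Real.exp (lam * t)) ?_
    · simpa [nsmul_eq_mul] using this
    · intro s hs
      rw [hF, mem_filter] at hs
      exact Real.exp_le_exp.mpr (by nlinarith [hs.2])
  have h2 : ∑ s ∈ F, Real.exp (lam * ∑ j, (if s j then δ j else -δ j))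
      ≤ ∑ s : Fin k → Bool, Real.exp (lam * ∑ j, (if s j then δ j else -δ j)) :=
    Finset.sum_le_sum_of_subset_of_nonneg (filter_subset _ _)
      (fun _ _ _ => (Real.exp_pos _).le)
  have h3 : ∑ s : Fin k → Bool, Real.exp (lam * ∑ j, (if s j then δ j else -δ j))
      = ∏ j, (Real.exp (lam * δ j) + Real.exp (-(lam * δ j))) := by
    have : ∀ s : Fin k → Bool, Real.exp (lam * ∑ j, (if s j then δ j else -δ j))
        = ∏ j, Real.exp (lam * (if s j then δ j else -δ j)) := by
      intro s
      rw [← Real.exp_sum, Finset.mul_sum]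
    simp_rw [this]
    rw [← Fintype.prod_sum (fun j (b : Bool) => Real.exp (lam * (if b then δ j else -δ j)))]
    congr 1
    ext j
    rw [Fintype.sum_bool]
    simp [mul_neg]
  have h4 : ∏ j, (Real.exp (lam * δ j) + Real.exp (-(lam * δ j)))
      ≤ 2 ^ k * Real.exp (lam ^ 2 * B / 2) := by
    have hc : ∀ j : Fin k, Real.exp (lam * δ j) + Real.exp (-(lam * δ j))
        ≤ 2 * Real.exp ((lam * δ j) ^ 2 / 2) := by
      intro j
      have := Real.cosh_le_exp_half_sq (lam * δ j)
      rw [Real.cosh_eq] at this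
      nlinarith [this]
    calc ∏ j, (Real.exp (lam * δ j) + Real.exp (-(lam * δ j)))
        ≤ ∏ j, (2 * Real.exp ((lam * δ j) ^ 2 / 2)) := by
          apply Finset.prod_le_prod
          · intro j _; positivity
          · intro j _; exact hc j
      _ = 2 ^ k * Real.exp (∑ j, (lam * δ j) ^ 2 / 2) := by
          rw [Finset.prod_mul_distrib, Finset.prod_const, Real.exp_sum, card_univ,
            Fintype.card_fin]
      _ ≤ 2 ^ k * Real.exp (lam ^ 2 * B / 2) := by
          apply mul_le_mul_of_nonneg_left _ (by positivity)
          apply Real.exp_le_exp.mpr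
          have : ∑ j, (lam * δ j) ^ 2 / 2 = lam ^ 2 * (∑ j, δ j ^ 2) / 2 := by
            rw [Finset.mul_sum, Finset.sum_div]
            congr 1; ext j; ring
          rw [this]
          nlinarith [sq_nonneg lam]
  have h5 : (F.card : ℝ) * Real.exp (lam * t) ≤ 2 ^ k * Real.exp (lam ^ 2 * B / 2) :=
    le_trans h1 (le_trans h2 (le_of_le_of_eq (le_of_eq h3) rfl |>.trans h4))
  have hexp : Real.exp (lam ^ 2 * B / 2) / Real.exp (lam * t)
      = Real.exp (-t ^ 2 / (2 * B)) := by
    rw [← Real.exp_sub]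
    congr 1
    rw [hlam]
    field_simp
    ring
  have h6 : (F.card : ℝ) ≤ 2 ^ k * (Real.exp (lam ^ 2 * B / 2) / Real.exp (lam * t)) := by
    rw [← mul_div_assoc, le_div_iff₀ (Real.exp_pos _)]
    exact h5
  rw [hexp] at h6
  linarith [h6]

lemma chernoff_two (δ : Fin k → ℝ) (t B : ℝ) (ht : 0 < t) (hB : 0 < B)
    (hδ : ∑ j, δ j ^ 2 ≤ B) :
    ((univ.filter (fun s : Fin k → Bool =>
        t < |∑ j, (if s j then δ j else -δ j)|)).card : ℝ)
      ≤ 2 * Real.exp (-t ^ 2 / (2 * B)) * 2 ^ k := by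
  have hsub : univ.filter (fun s : Fin k → Bool => t < |∑ j, (if s j then δ j else -δ j)|)
      ⊆ (univ.filter (fun s : Fin k → Bool => t < ∑ j, (if s j then δ j else -δ j)))
        ∪ (univ.filter (fun s : Fin k → Bool =>
            t < ∑ j, (if s j then (fun i => -δ i) j else -(fun i => -δ i) j))) := by
    intro s hs
    rw [mem_filter] at hs
    rcases lt_abs.mp hs.2 with h | h
    · exact mem_union_left _ (mem_filter.mpr ⟨mem_univ _, h⟩)
    · refine mem_union_right _ (mem_filter.mpr ⟨mem_univ _, ?_⟩)
      have hneg : -∑ j, (if s j then δ j else -δ j)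
          = ∑ j, (if s j then (fun i => -δ i) j else -(fun i => -δ i) j) := by
        rw [← Finset.sum_neg_distrib]
        apply Finset.sum_congr rfl
        intro j _
        by_cases hj : s j <;> simp [hj]
      rw [← hneg]
      linarith [h]
  have h1 := chernoff_one δ t B ht hB hδ
  have h2 := chernoff_one (fun i => -δ i) t B ht hB (by simpa using hδ)
  have hcard := Finset.card_le_card hsub
  have hcard2 := Finset.card_union_le
    (univ.filter (fun s : Fin k → Bool => t < ∑ j, (if s j then δ j else -δ j)))
    (univ.filter (fun s : Fin k → Bool =>
      t < ∑ j, (if s j then (fun i => -δ i) j else -(fun i => -δ i) j)))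
  have : ((univ.filter (fun s : Fin k → Bool =>
      t < |∑ j, (if s j then δ j else -δ j)|)).card : ℝ)
      ≤ ((univ.filter (fun s : Fin k → Bool => t < ∑ j, (if s j then δ j else -δ j))).card : ℝ)
        + ((univ.filter (fun s : Fin k → Bool =>
            t < ∑ j, (if s j then (fun i => -δ i) j else -(fun i => -δ i) j))).card : ℝ) := by
    exact_mod_cast le_trans hcard hcard2
  linarith [this, h1, h2]

lemma exists_perm_map (H H' : Finset (Fin d)) (hcard : H.card = H'.card) :
    ∃ π : Equiv.Perm (Fin d), H.map π.toEmbedding = H' := by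
  have h1 : Fintype.card {x : Fin d // x ∈ H} = Fintype.card {x : Fin d // x ∈ H'} := by
    simp [Fintype.card_coe, hcard]
  have h2 : Fintype.card {x : Fin d // ¬ x ∈ H} = Fintype.card {x : Fin d // ¬ x ∈ H'} := by
    rw [Fintype.card_subtype_compl, Fintype.card_subtype_compl, h1]
  let eH : {x : Fin d // x ∈ H} ≃ {x : Fin d // x ∈ H'} := Fintype.equivOfCardEq h1
  let eC : {x : Fin d // ¬ x ∈ H} ≃ {x : Fin d // ¬ x ∈ H'} := Fintype.equivOfCardEq h2
  refine ⟨(Equiv.sumCompl (· ∈ H)).symm.trans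
    ((eH.sumCongr eC).trans (Equiv.sumCompl (· ∈ H'))), ?_⟩
  apply Finset.eq_of_subset_of_card_le
  · intro y hy
    rw [Finset.mem_map] at hy
    obtain ⟨x, hx, rfl⟩ := hy
    simp only [Equiv.coe_toEmbedding, Equiv.trans_apply]
    rw [Equiv.sumCompl_symm_apply_of_pos hx]
    simp only [Equiv.sumCongr_apply, Sum.map_inl, Equiv.sumCompl_apply_inl]
    exact (eH ⟨x, hx⟩).2
  · rw [Finset.card_map, hcard]

lemma pick_trans (π : Equiv.Perm (Fin d)) (e : Fin d ≃ Fin k × Bool) (s : Fin k → Bool) :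
    pick ((π.symm : Fin d ≃ Fin d).trans e) s = (pick e s).map π.toEmbedding := by
  ext x
  rw [Finset.mem_map_equiv]
  simp only [pick, mem_filter, mem_univ, true_and, Equiv.trans_apply]
  exact Finset.mem_filter.trans (and_iff_right (mem_univ _))

noncomputable def fib (k : ℕ) (H : Finset (Fin d)) : ℕ :=
  (Finset.univ.filter (fun p : (Fin d ≃ Fin k × Bool) × (Fin k → Bool) =>
    pick p.1 p.2 = H)).card

lemma map_symm_of_map (π : Equiv.Perm (Fin d)) {H H' : Finset (Fin d)}
    (hπ : H.map π.toEmbedding = H') : H'.map (π.symm : Fin d ≃ Fin d).toEmbedding = H := by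
  ext x
  rw [Finset.mem_map_equiv]
  have : π x ∈ H' ↔ π x ∈ H.map π.toEmbedding := by rw [hπ]
  rw [Equiv.symm_symm, this, Finset.mem_map_equiv, Equiv.symm_apply_apply]

lemma fib_eq (H H' : Finset (Fin d)) (hc : H.card = H'.card) : fib k H = fib k H' := by
  obtain ⟨π, hπ⟩ := exists_perm_map H H' hc
  apply Finset.card_bij
    (fun (p : (Fin d ≃ Fin k × Bool) × (Fin k → Bool)) _ =>
      (((π.symm : Fin d ≃ Fin d).trans p.1), p.2))
  · intro p hp
    rw [mem_filter] at hp ⊢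
    refine ⟨mem_univ _, ?_⟩
    rw [pick_trans, hp.2, hπ]
  · intro p hp q hq hpq
    rw [Prod.mk.injEq] at hpq
    have h1 : p.1 = q.1 := by
      apply Equiv.ext
      intro x
      have := congrArg (fun (e : Fin d ≃ Fin k × Bool) => e (π x)) hpq.1
      simp only [Equiv.trans_apply, Equiv.symm_apply_apply] at this
      exact this
    exact Prod.ext h1 hpq.2
  · intro q hq
    rw [mem_filter] at hq
    refine ⟨(((π : Fin d ≃ Fin d).trans q.1), q.2), ?_, ?_⟩
    · rw [mem_filter]
      refine ⟨mem_univ _, ?_⟩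
      have h2 := pick_trans π.symm q.1 q.2
      rw [Equiv.symm_symm] at h2
      rw [h2, hq.2, map_symm_of_map π hπ]
    · refine Prod.ext ?_ rfl
      apply Equiv.ext
      intro x
      simp

lemma reduction (hdk : d = 2 * k) (P : Finset (Fin d) → Prop) [DecidablePred P]
    (bound : ℝ)
    (hper : ∀ e : Fin d ≃ Fin k × Bool,
      ((univ.filter (fun s : Fin k → Bool => P (pick e s))).card : ℝ) ≤ bound * 2 ^ k) :
    (((Finset.powersetCard k (univ : Finset (Fin d))).filter P).card : ℝ)
      ≤ bound * ((Finset.powersetCard k (univ : Finset (Fin d))).card : ℝ) := by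
  classical
  set Ω := Finset.powersetCard k (univ : Finset (Fin d)) with hΩ
  have hmem : ∀ p : (Fin d ≃ Fin k × Bool) × (Fin k → Bool), pick p.1 p.2 ∈ Ω := by
    intro p
    rw [hΩ, Finset.mem_powersetCard]
    exact ⟨Finset.subset_univ _, pick_card p.1 p.2⟩
  set N := (univ.filter (fun p : (Fin d ≃ Fin k × Bool) × (Fin k → Bool) =>
      P (pick p.1 p.2))).card with hN
  -- N as a sum of fibers over the good sets
  have e1 : N = ∑ H ∈ Ω.filter P, fib k H := by
    rw [hN]
    rw [Finset.card_eq_sum_card_fiberwise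
      (f := fun p : (Fin d ≃ Fin k × Bool) × (Fin k → Bool) => pick p.1 p.2)
      (t := Ω.filter P) ?_]
    · apply Finset.sum_congr rfl
      intro H hH
      rw [Finset.mem_filter] at hH
      unfold fib
      congr 1
      ext p
      simp only [Finset.mem_filter, mem_univ, true_and]
      constructor
      · rintro ⟨_, h⟩; exact h
      · rintro rfl; exact ⟨hH.2, rfl⟩
    · intro p hp
      rw [Finset.mem_coe, Finset.mem_filter] at hp ⊢
      exact ⟨hmem p, hp.2⟩
  -- total count of pairs as a sum of fibers over all sets
  have e2 : Fintype.card ((Fin d ≃ Fin k × Bool) × (Fin k → Bool)) = ∑ H ∈ Ω, fib k H := by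
    rw [← Finset.card_univ]
    rw [Finset.card_eq_sum_card_fiberwise
      (f := fun p : (Fin d ≃ Fin k × Bool) × (Fin k → Bool) => pick p.1 p.2)
      (t := Ω) (fun p _ => hmem p)]
    rfl
  -- all fibers over Ω are equal
  have e3 : ∀ H ∈ Ω, ∀ H' ∈ Ω, fib k H = fib k H' := by
    intro H hH H' hH'
    rw [hΩ, Finset.mem_powersetCard] at hH hH'
    exact fib_eq H H' (hH.2.trans hH'.2.symm)
  -- key identity: N * |Ω| = |filter| * total
  have key : N * Ω.card = (Ω.filter P).card
      * Fintype.card ((Fin d ≃ Fin k × Bool) × (Fin k → Bool)) := by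
    rw [e1, Finset.sum_mul]
    have : ∀ H ∈ Ω.filter P, fib k H * Ω.card
        = Fintype.card ((Fin d ≃ Fin k × Bool) × (Fin k → Bool)) := by
      intro H hH
      rw [e2]
      have hHΩ : H ∈ Ω := Finset.mem_of_mem_filter _ hH
      rw [Finset.sum_congr rfl (fun H' hH' => e3 H' hH' H hHΩ), Finset.sum_const,
        smul_eq_mul, mul_comm]
    rw [Finset.sum_congr rfl this, Finset.sum_const, smul_eq_mul]
  -- bound N using the per-e hypothesis
  have e4 : N = ∑ e : Fin d ≃ Fin k × Bool,
      (univ.filter (fun s : Fin k → Bool => P (pick e s))).card := by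
    rw [hN, Finset.card_filter, Fintype.sum_prod_type]
    apply Finset.sum_congr rfl
    intro e _
    rw [Finset.card_filter]
  have e5 : (N : ℝ) ≤ (Fintype.card (Fin d ≃ Fin k × Bool) : ℝ) * (bound * 2 ^ k) := by
    rw [e4]
    push_cast
    calc ∑ e : Fin d ≃ Fin k × Bool,
        ((univ.filter (fun s : Fin k → Bool => P (pick e s))).card : ℝ)
        ≤ ∑ _e : Fin d ≃ Fin k × Bool, bound * 2 ^ k := Finset.sum_le_sum (fun e _ => hper e)
      _ = (Fintype.card (Fin d ≃ Fin k × Bool) : ℝ) * (bound * 2 ^ k) := by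
          rw [Finset.sum_const, Finset.card_univ, nsmul_eq_mul]
  -- finish
  have hEcard : Fintype.card ((Fin d ≃ Fin k × Bool) × (Fin k → Bool))
      = Fintype.card (Fin d ≃ Fin k × Bool) * 2 ^ k := by
    rw [Fintype.card_prod, Fintype.card_fun]
    simp
  have hEpos : 0 < (Fintype.card (Fin d ≃ Fin k × Bool) : ℝ) := by
    have : Nonempty (Fin d ≃ Fin k × Bool) := by
      refine ⟨Fintype.equivOfCardEq ?_⟩
      simp [hdk, Fintype.card_prod]
      ring
    have := Fintype.card_pos (α := Fin d ≃ Fin k × Bool)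
    exact_mod_cast this
  have hkey : (N : ℝ) * Ω.card = ((Ω.filter P).card : ℝ)
      * ((Fintype.card (Fin d ≃ Fin k × Bool) : ℝ) * 2 ^ k) := by
    have := congrArg (fun m : ℕ => (m : ℝ)) key
    push_cast [hEcard] at this
    push_cast
    linarith [this]
  have h2k : (0:ℝ) < 2 ^ k := by positivity
  have hfin : ((Ω.filter P).card : ℝ)
      * ((Fintype.card (Fin d ≃ Fin k × Bool) : ℝ) * 2 ^ k)
      ≤ bound * (Ω.card : ℝ) * ((Fintype.card (Fin d ≃ Fin k × Bool) : ℝ) * 2 ^ k) := by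
    rw [← hkey]
    calc (N : ℝ) * Ω.card ≤ (Fintype.card (Fin d ≃ Fin k × Bool) : ℝ)
        * (bound * 2 ^ k) * Ω.card := by
          apply mul_le_mul_of_nonneg_right e5 (by positivity)
      _ = bound * (Ω.card : ℝ) * ((Fintype.card (Fin d ≃ Fin k × Bool) : ℝ) * 2 ^ k) := by
          ring
  exact le_of_mul_le_mul_right hfin (by positivity)

lemma not_leaky_of_close {q p v : ℝ} (hp : 0 < p) (hv : 0 < v)
    (hq : |q - p| ≤ p * (1 - Real.exp (-v))) : |Real.log (q / p)| ≤ v := by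
  have hE1 : Real.exp (-v) < 1 := Real.exp_lt_one_iff.mpr (by linarith)
  have hEpos : 0 < Real.exp (-v) := Real.exp_pos _
  rw [abs_le] at hq
  have hql : p * Real.exp (-v) ≤ q := by nlinarith [hq.1]
  have hsum2 : 2 ≤ Real.exp v + Real.exp (-v) := by
    have h1 := Real.add_one_le_exp v
    have h2 := Real.add_one_le_exp (-v)
    linarith
  have hqu : q ≤ p * Real.exp v := by nlinarith [hq.2]
  have hqpos : 0 < q := lt_of_lt_of_le (by positivity) hql
  rw [abs_le]
  constructor
  · have : Real.exp (-v) ≤ q / p := (le_div_iff₀ hp).mpr (by linarith)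
    calc -v = Real.log (Real.exp (-v)) := (Real.log_exp _).symm
      _ ≤ Real.log (q / p) := Real.log_le_log (by positivity) this
  · have : q / p ≤ Real.exp v := (div_le_iff₀ hp).mpr (by linarith)
    calc Real.log (q / p) ≤ Real.log (Real.exp v) :=
        Real.log_le_log (by positivity) this
      _ = v := Real.log_exp _

lemma per_e {Y : Type*} [Fintype Y] (hdk : d = 2 * k) (hk : 0 < k)
    (ε L v : ℝ) (hε : 0 < ε) (hL : 0 < L) (hv0 : 0 < v) (hv1 : v ≤ 1)
    (hnum : L ≤ k * v ^ 2 / (2 * (Real.exp ε - 1) ^ 2))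
    (Q : Fin d → Y → ℝ) (y : Y)
    (hc0 : ∀ x z, 0 ≤ Q x z) (hpriv : ∀ x x' z, Q x z ≤ Real.exp ε * Q x' z)
    (e : Fin d ≃ Fin k × Bool) :
    ((univ.filter (fun s : Fin k → Bool => leaky Q (pick e s) v y)).card : ℝ)
      ≤ 2 * Real.exp (-L) * 2 ^ k := by
  classical
  set c : Fin d → ℝ := fun x => Q x y with hc
  set T : ℝ := ∑ x, c x with hT
  have hcnn : ∀ x, 0 ≤ c x := fun x => hc0 x y
  have hdpos : 0 < d := by omega
  have hcardu : ((univ : Finset (Fin d)).card : ℝ) = d := by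
    rw [Finset.card_univ, Fintype.card_fin]
  by_cases hT0 : T = 0
  · -- all values vanish; nothing is leaky
    have hzero : ∀ x ∈ (univ : Finset (Fin d)), c x = 0 := by
      rw [← Finset.sum_eq_zero_iff_of_nonneg (fun x _ => hcnn x)]
      exact hT0
    have : ∀ s : Fin k → Bool, ¬ leaky Q (pick e s) v y := by
      intro s
      unfold leaky probU
      have h1 : ∑ x ∈ pick e s, Q x y = 0 :=
        Finset.sum_eq_zero (fun x _ => hzero x (mem_univ x))
      have h2 : ∑ x ∈ (univ : Finset (Fin d)), Q x y = 0 :=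
        Finset.sum_eq_zero (fun x _ => hzero x (mem_univ x))
      rw [h1, h2]
      simp
      linarith
    rw [Finset.filter_false_of_mem (fun s _ => this s)]
    simp
    positivity
  · have hTpos : 0 < T := lt_of_le_of_ne (Finset.sum_nonneg (fun x _ => hcnn x)) (Ne.symm hT0)
    set p : ℝ := T / d with hp
    have hppos : 0 < p := div_pos hTpos (by exact_mod_cast hdpos)
    obtain ⟨x₀, _, hx₀⟩ := Finset.exists_min_image (univ : Finset (Fin d)) c ⟨⟨0, hdpos⟩, mem_univ _⟩
    set a : ℝ := c x₀ with ha
    have hamin : ∀ x, a ≤ c x := fun x => hx₀ x (mem_univ x)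
    have hapos : 0 < a := by
      rcases lt_or_ge 0 a with h | h
      · exact h
      · exfalso
        have : ∀ x, c x = 0 := by
          intro x
          have h1 : c x ≤ Real.exp ε * a := hpriv x x₀ y
          have h2 : Real.exp ε * a ≤ 0 := mul_nonpos_of_nonneg_of_nonpos (Real.exp_pos _).le h
          exact le_antisymm (h1.trans h2) (hcnn x)
        exact hT0 (Finset.sum_eq_zero (fun x _ => this x))
    have hpa : a ≤ p := by
      rw [hp, le_div_iff₀ (by exact_mod_cast hdpos)]
      calc a * d = ∑ _x : Fin d, a := by
            rw [Finset.sum_const, Finset.card_univ, Fintype.card_fin, nsmul_eq_mul]; ring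
        _ ≤ T := Finset.sum_le_sum (fun x _ => hamin x)
    have heps : 0 < Real.exp ε - 1 := by
      have h := Real.exp_lt_exp.mpr hε
      rw [Real.exp_zero] at h
      linarith
    set δ : Fin k → ℝ := fun j => (c (e.symm (j, true)) - c (e.symm (j, false))) / 2 with hδ
    have hdR : (d : ℝ) = 2 * k := by rw [hdk]; push_cast; ring
    have hkR : (0:ℝ) < k := by exact_mod_cast hk
    have hsum : ∀ s : Fin k → Bool,
        ∑ x ∈ pick e s, c x = k * p + ∑ j, (if s j then δ j else -δ j) := by
      intro s
      rw [sum_pick]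
      have hpt : ∀ j, c (e.symm (j, s j)) =
          (c (e.symm (j, true)) + c (e.symm (j, false))) / 2
            + (if s j then δ j else -δ j) := by
        intro j
        by_cases hj : s j <;> simp [hj, hδ] <;> ring
      rw [Finset.sum_congr rfl (fun j _ => hpt j), Finset.sum_add_distrib]
      congr 1
      have h1 : ∑ j, (c (e.symm (j, true)) + c (e.symm (j, false))) / 2
          = (∑ q : Fin k × Bool, c (e.symm q)) / 2 := by
        rw [Fintype.sum_prod_type, Finset.sum_div]
        apply Finset.sum_congr rfl
        intro j _
        rw [Fintype.sum_bool]
      rw [h1, Equiv.sum_comp e.symm c, ← hT, hp, hdR]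
      field_simp
    set t : ℝ := k * p * (1 - Real.exp (-v)) with ht
    have hE1 : Real.exp (-v) < 1 := Real.exp_lt_one_iff.mpr (by linarith)
    have htpos : 0 < t := by
      apply mul_pos (mul_pos hkR hppos)
      linarith
    have hqval : ∀ s : Fin k → Bool, probU Q (pick e s) y
        = (k * p + ∑ j, (if s j then δ j else -δ j)) / k := by
      intro s
      unfold probU
      rw [pick_card]
      congr 1
      exact hsum s
    have hpuniv : probU Q (univ : Finset (Fin d)) y = p := by
      unfold probU
      rw [hcardu]
    have hsubset : univ.filter (fun s : Fin k → Bool => leaky Q (pick e s) v y)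
        ⊆ univ.filter (fun s : Fin k → Bool =>
            t < |∑ j, (if s j then δ j else -δ j)|) := by
      intro s hs
      rw [mem_filter] at hs ⊢
      refine ⟨mem_univ _, ?_⟩
      by_contra hcon
      push_neg at hcon
      have hclose : |probU Q (pick e s) y - p| ≤ p * (1 - Real.exp (-v)) := by
        rw [hqval s]
        have hdiff : (k * p + ∑ j, (if s j then δ j else -δ j)) / k - p
            = (∑ j, (if s j then δ j else -δ j)) / k := by
          field_simp
          ring
        rw [hdiff, abs_div, abs_of_pos hkR, div_le_iff₀ hkR]
        calc |∑ j, (if s j then δ j else -δ j)| ≤ t := hcon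
          _ = p * (1 - Real.exp (-v)) * k := by rw [ht]; ring
      have hnl := not_leaky_of_close hppos hv0 hclose
      have hs2 : v < |Real.log (probU Q (pick e s) y
          / probU Q (univ : Finset (Fin d)) y)| := hs.2
      rw [hpuniv] at hs2
      exact absurd hs2 (not_lt.mpr hnl)
    have hcards := Finset.card_le_card hsubset
    set B : ℝ := k * ((Real.exp ε - 1) * a) ^ 2 / 4 with hB
    have hBpos : 0 < B :=
      div_pos (mul_pos hkR (pow_pos (mul_pos heps hapos) 2)) (by norm_num)
    have hδB : ∑ j, δ j ^ 2 ≤ B := by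
      have hbd : ∀ j : Fin k, δ j ^ 2 ≤ ((Real.exp ε - 1) * a) ^ 2 / 4 := by
        intro j
        have h1 : c (e.symm (j, true)) ≤ Real.exp ε * a := hpriv _ x₀ y
        have h2 : c (e.symm (j, false)) ≤ Real.exp ε * a := hpriv _ x₀ y
        have h3 := hamin (e.symm (j, true))
        have h4 := hamin (e.symm (j, false))
        have hδj : δ j = (c (e.symm (j, true)) - c (e.symm (j, false))) / 2 := rfl
        rw [hδj]
        nlinarith [h1, h2, h3, h4, hapos]
      calc ∑ j, δ j ^ 2 ≤ ∑ _j : Fin k, ((Real.exp ε - 1) * a) ^ 2 / 4 :=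
          Finset.sum_le_sum (fun j _ => hbd j)
        _ = B := by
            rw [Finset.sum_const, Finset.card_univ, Fintype.card_fin, nsmul_eq_mul, hB]
            ring
    have hcher := chernoff_two δ t B htpos hBpos hδB
    have hvhalf : v / 2 ≤ 1 - Real.exp (-v) := by
      have h1 : 1 + v ≤ Real.exp v := by
        have := Real.add_one_le_exp v
        linarith
      have h3 : Real.exp (-v) ≤ 1 / (1 + v) := by
        rw [Real.exp_neg, inv_eq_one_div]
        exact one_div_le_one_div_of_le (by linarith) h1
      have h4 : 1 - 1 / (1 + v) = v / (1 + v) := by field_simp; ring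
      have h5 : v / 2 ≤ v / (1 + v) := by
        apply div_le_div_of_nonneg_left (le_of_lt hv0) (by linarith) (by linarith)
      linarith
    have hLle : L ≤ t ^ 2 / (2 * B) := by
      have hEq : t ^ 2 / (2 * B) = 2 * k * (p * (1 - Real.exp (-v))) ^ 2
          / ((Real.exp ε - 1) ^ 2 * a ^ 2) := by
        rw [ht, hB]
        field_simp
        ring
      rw [hEq]
      have hpe : a * (v / 2) ≤ p * (1 - Real.exp (-v)) :=
        mul_le_mul hpa hvhalf (by positivity) (le_of_lt hppos)
      have hsq : (a * (v / 2)) ^ 2 ≤ (p * (1 - Real.exp (-v))) ^ 2 :=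
        pow_le_pow_left₀ (by positivity) hpe 2
      have hstep : k * v ^ 2 / (2 * (Real.exp ε - 1) ^ 2)
          ≤ 2 * k * (p * (1 - Real.exp (-v))) ^ 2
            / ((Real.exp ε - 1) ^ 2 * a ^ 2) := by
        rw [div_le_div_iff₀ (by positivity) (by positivity)]
        calc k * v ^ 2 * ((Real.exp ε - 1) ^ 2 * a ^ 2)
            = 4 * k * (Real.exp ε - 1) ^ 2 * (a * (v / 2)) ^ 2 := by ring
          _ ≤ 4 * k * (Real.exp ε - 1) ^ 2 * (p * (1 - Real.exp (-v))) ^ 2 := by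
              apply mul_le_mul_of_nonneg_left hsq (by positivity)
          _ = 2 * k * (p * (1 - Real.exp (-v))) ^ 2 * (2 * (Real.exp ε - 1) ^ 2) := by
              ring
      linarith
    calc ((univ.filter (fun s : Fin k → Bool => leaky Q (pick e s) v y)).card : ℝ)
        ≤ ((univ.filter (fun s : Fin k → Bool =>
            t < |∑ j, (if s j then δ j else -δ j)|)).card : ℝ) := by
          exact_mod_cast hcards
      _ ≤ 2 * Real.exp (-t ^ 2 / (2 * B)) * 2 ^ k := hcher
      _ ≤ 2 * Real.exp (-L) * 2 ^ k := by
          apply mul_le_mul_of_nonneg_right _ (by positivity)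
          apply mul_le_mul_of_nonneg_left _ (by norm_num)
          apply Real.exp_le_exp.mpr
          rw [neg_div]
          exact neg_le_neg hLle

end Stmt4Aux

set_option maxHeartbeats 2000000 in
/-- for `ε > 0`, a vector `R = (R_1,…,R_n)` of `ε`-private randomizers
from `[d]` to a finite message set `𝒴`, and even
`d > 4(e^{2ε}-1)² ln(12 |𝒴| |R|_≠)` where `|R|_≠` is the number of distinct
randomizers: if `H` is uniform among size-`d/2` subsets of `[d]`, then with
probability at least `5/6` over `H`, for every `y ∈ 𝒴` and `i ∈ [n]`, `y` is not
`(e^{2ε}-1)√((4/d) ln(12 |𝒴| |R|_≠))`-leaky w.r.t. `H, R_i`. -/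
theorem stmt_4 {Y : Type*} [Fintype Y] (ε : ℝ) (n d : ℕ)
    (hε : 0 < ε) (hd : Even d)
    (R : Fin n → Fin d → Y → ℝ)
    (hd2 : 4 * (Real.exp (2 * ε) - 1) ^ 2 *
        Real.log (12 * (Fintype.card Y : ℝ) * ((Finset.univ.image R).card : ℝ)) < (d : ℝ))
    (hR0 : ∀ i x y, 0 ≤ R i x y) (hR1 : ∀ i x, ∑ y, R i x y = 1)
    (hpriv : ∀ i x x' y, R i x y ≤ Real.exp ε * R i x' y) :
    5 / 6 ≤
      (((Finset.powersetCard (d / 2) (Finset.univ : Finset (Fin d))).filter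
          (fun H => ∀ y : Y, ∀ i : Fin n, ¬ leaky (R i) H
            ((Real.exp (2 * ε) - 1) * Real.sqrt (4 / (d : ℝ) *
              Real.log (12 * (Fintype.card Y : ℝ) * ((Finset.univ.image R).card : ℝ)))) y)).card : ℝ)
        / ((Finset.powersetCard (d / 2) (Finset.univ : Finset (Fin d))).card : ℝ) := by
  classical
  open Finset in
  set m := (Finset.univ.image R).card with hm
  set YC := Fintype.card Y with hYC
  set L := Real.log (12 * (YC : ℝ) * (m : ℝ)) with hL
  set A := Real.exp (2 * ε) - 1 with hA
  set v := A * Real.sqrt (4 / (d : ℝ) * L) with hv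
  have hΩne : (Finset.powersetCard (d / 2) (Finset.univ : Finset (Fin d))).Nonempty := by
    apply Finset.powersetCard_nonempty.mpr
    simp [Nat.div_le_self]
  have hΩpos : (0:ℝ) < ((Finset.powersetCard (d / 2)
      (Finset.univ : Finset (Fin d))).card : ℝ) := by
    exact_mod_cast Finset.card_pos.mpr hΩne
  by_cases hzero : YC * m = 0
  · have hall : ∀ H ∈ Finset.powersetCard (d / 2) (Finset.univ : Finset (Fin d)),
        (∀ y : Y, ∀ i : Fin n, ¬ leaky (R i) H v y) := by
      intro H _
      rcases Nat.mul_eq_zero.mp hzero with h | h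
      · haveI : IsEmpty Y := Fintype.card_eq_zero_iff.mp h
        intro y
        exact (IsEmpty.false y).elim
      · have h1 : (Finset.univ.image R) = ∅ := Finset.card_eq_zero.mp h
        have h2 : (Finset.univ : Finset (Fin n)) = ∅ := Finset.image_eq_empty.mp h1
        haveI : IsEmpty (Fin n) := Finset.univ_eq_empty_iff.mp h2
        intro y i
        exact (IsEmpty.false i).elim
    rw [Finset.filter_true_of_mem hall, div_self (ne_of_gt hΩpos)]
    norm_num
  · have hYpos : 0 < YC := by
      rcases Nat.eq_zero_or_pos YC with h | h
      · exact absurd (by rw [h]; ring) hzero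
      · exact h
    have hmpos : 0 < m := by
      rcases Nat.eq_zero_or_pos m with h | h
      · exact absurd (by rw [h]; ring) hzero
      · exact h
    have hprod1 : (1:ℝ) ≤ (YC : ℝ) * m := by
      have : 1 ≤ YC * m := Nat.one_le_iff_ne_zero.mpr hzero
      exact_mod_cast this
    have hLpos : 0 < L := by
      rw [hL]
      apply Real.log_pos
      nlinarith
    have hApos : 0 < A := by
      rw [hA]
      have h := Real.exp_lt_exp.mpr (by linarith : (0:ℝ) < 2 * ε)
      rw [Real.exp_zero] at h
      linarith
    have hdRpos : (0:ℝ) < d := lt_of_le_of_lt (by positivity) hd2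
    have hdpos : 0 < d := by exact_mod_cast hdRpos
    obtain ⟨r, hr⟩ := hd
    have hdk : d = 2 * r := by omega
    have hkpos : 0 < r := by omega
    have hd2k : d / 2 = r := by omega
    have hdR : (d:ℝ) = 2 * r := by exact_mod_cast hdk
    have hvsq : v ^ 2 = A ^ 2 * (4 / (d:ℝ) * L) := by
      rw [hv, mul_pow, Real.sq_sqrt (by positivity)]
    have hv0 : 0 < v := by
      rw [hv]
      apply mul_pos hApos
      apply Real.sqrt_pos.mpr
      positivity
    have hv1 : v ≤ 1 := by
      have h1 : v ^ 2 < 1 := by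
        rw [hvsq]
        have he : A ^ 2 * (4 / (d:ℝ) * L) = 4 * A ^ 2 * L / d := by ring
        rw [he]
        exact (div_lt_one hdRpos).mpr hd2
      nlinarith
    have heps : 0 < Real.exp ε - 1 := by
      have h := Real.exp_lt_exp.mpr hε
      rw [Real.exp_zero] at h
      linarith
    have hAge : 2 * (Real.exp ε - 1) ≤ A := by
      have hA2 : A = (Real.exp ε) ^ 2 - 1 := by
        rw [hA, two_mul, Real.exp_add, sq]
      nlinarith [heps]
    have hnum : L ≤ (r:ℝ) * v ^ 2 / (2 * (Real.exp ε - 1) ^ 2) := by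
      have hrR : (0:ℝ) < (r:ℝ) := by exact_mod_cast hkpos
      have hkv : (r:ℝ) * v ^ 2 = 2 * A ^ 2 * L := by
        rw [hvsq, hdR]
        field_simp
        ring
      rw [hkv, le_div_iff₀ (by positivity)]
      have hsq : (2 * (Real.exp ε - 1)) ^ 2 ≤ A ^ 2 :=
        pow_le_pow_left₀ (by linarith) hAge 2
      have h4 : 4 * (Real.exp ε - 1) ^ 2 ≤ A ^ 2 := by nlinarith [hsq]
      have h5 := mul_le_mul_of_nonneg_left h4 hLpos.le
      nlinarith [h5, mul_nonneg hLpos.le (sq_nonneg (Real.exp ε - 1))]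
    -- switch to k-form
    rw [hd2k] at hΩpos ⊢
    -- union bound
    have hbadsub : (Finset.powersetCard r (Finset.univ : Finset (Fin d))).filter
          (fun H => ¬ (∀ y : Y, ∀ i : Fin n, ¬ leaky (R i) H v y)) ⊆
        (Finset.univ ×ˢ Finset.univ.image R).biUnion
          (fun yQ => (Finset.powersetCard r (Finset.univ : Finset (Fin d))).filter
            (fun H => leaky yQ.2 H v yQ.1)) := by
      intro H hH
      rw [Finset.mem_filter] at hH
      have hH2 := hH.2
      push_neg at hH2
      obtain ⟨y, i, hyi⟩ := hH2
      rw [Finset.mem_biUnion]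
      exact ⟨(y, R i), Finset.mem_product.mpr
        ⟨Finset.mem_univ _, Finset.mem_image_of_mem R (Finset.mem_univ i)⟩,
        Finset.mem_filter.mpr ⟨hH.1, hyi⟩⟩
    have hpair : ∀ yQ ∈ Finset.univ ×ˢ Finset.univ.image R,
        (((Finset.powersetCard r (Finset.univ : Finset (Fin d))).filter
            (fun H => leaky yQ.2 H v yQ.1)).card : ℝ)
          ≤ 2 * Real.exp (-L) *
            ((Finset.powersetCard r (Finset.univ : Finset (Fin d))).card : ℝ) := by
      intro yQ hyQ
      rw [Finset.mem_product] at hyQ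
      obtain ⟨i, _, hi⟩ := Finset.mem_image.mp hyQ.2
      have hQ0 : ∀ x z, 0 ≤ yQ.2 x z := by rw [← hi]; exact hR0 i
      have hQpriv : ∀ x x' z, yQ.2 x z ≤ Real.exp ε * yQ.2 x' z := by
        rw [← hi]; intro x x' z; exact hpriv i x x' z
      exact Stmt4Aux.reduction hdk (fun H => leaky yQ.2 H v yQ.1)
        (2 * Real.exp (-L))
        (fun e => Stmt4Aux.per_e hdk hkpos ε L v hε hLpos hv0 hv1 hnum yQ.2 yQ.1 hQ0 hQpriv e)
    have hbadcard : (((Finset.powersetCard r (Finset.univ : Finset (Fin d))).filter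
          (fun H => ¬ (∀ y : Y, ∀ i : Fin n, ¬ leaky (R i) H v y))).card : ℝ)
        ≤ ((YC : ℝ) * m) * (2 * Real.exp (-L)) *
          ((Finset.powersetCard r (Finset.univ : Finset (Fin d))).card : ℝ) := by
      have h1 := Finset.card_le_card hbadsub
      have h2 := Finset.card_biUnion_le (s := Finset.univ ×ˢ Finset.univ.image R)
        (t := fun yQ => (Finset.powersetCard r (Finset.univ : Finset (Fin d))).filter
          (fun H => leaky yQ.2 H v yQ.1))
      have h3 : (((Finset.powersetCard r (Finset.univ : Finset (Fin d))).filter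
          (fun H => ¬ (∀ y : Y, ∀ i : Fin n, ¬ leaky (R i) H v y))).card : ℝ)
          ≤ ∑ yQ ∈ Finset.univ ×ˢ Finset.univ.image R,
            (((Finset.powersetCard r (Finset.univ : Finset (Fin d))).filter
              (fun H => leaky yQ.2 H v yQ.1)).card : ℝ) := by
        have := le_trans h1 h2
        exact_mod_cast this
      calc _ ≤ _ := h3
        _ ≤ ∑ _yQ ∈ Finset.univ ×ˢ Finset.univ.image R,
            (2 * Real.exp (-L) *
              ((Finset.powersetCard r (Finset.univ : Finset (Fin d))).card : ℝ)) :=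
          Finset.sum_le_sum hpair
        _ = ((YC : ℝ) * m) * (2 * Real.exp (-L)) *
            ((Finset.powersetCard r (Finset.univ : Finset (Fin d))).card : ℝ) := by
          rw [Finset.sum_const, Finset.card_product, Finset.card_univ, ← hYC, ← hm,
            nsmul_eq_mul]
          push_cast
          ring
    have hexpL : Real.exp (-L) = 1 / (12 * (YC:ℝ) * m) := by
      rw [hL, Real.exp_neg, Real.exp_log (by nlinarith), inv_eq_one_div]
    have hbound : ((YC : ℝ) * m) * (2 * Real.exp (-L)) = 1 / 6 := by
      rw [hexpL]
      have hY0 : ((YC:ℝ)) ≠ 0 := by exact_mod_cast Nat.pos_iff_ne_zero.mp hYpos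
      have hm0 : ((m:ℝ)) ≠ 0 := by exact_mod_cast Nat.pos_iff_ne_zero.mp hmpos
      field_simp
      ring
    have hsplit := Finset.card_filter_add_card_filter_not
      (s := Finset.powersetCard r (Finset.univ : Finset (Fin d)))
      (p := fun H => ∀ y : Y, ∀ i : Fin n, ¬ leaky (R i) H v y)
    have hsplitR : (((Finset.powersetCard r (Finset.univ : Finset (Fin d))).filter
          (fun H => ∀ y : Y, ∀ i : Fin n, ¬ leaky (R i) H v y)).card : ℝ)
        + (((Finset.powersetCard r (Finset.univ : Finset (Fin d))).filter
          (fun H => ¬ (∀ y : Y, ∀ i : Fin n, ¬ leaky (R i) H v y))).card : ℝ)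
        = ((Finset.powersetCard r (Finset.univ : Finset (Fin d))).card : ℝ) := by
      exact_mod_cast hsplit
    rw [le_div_iff₀ hΩpos]
    rw [hbound] at hbadcard
    linarith
end

section
/- Fix ε > 0, a vector R⃗ = (R_1,…,R_n) of ε-private randomizers from [d] to a finite message set 𝒴, and an even integer d > 4(e^{2ε}−1)²·ln(12·|𝒴|·|R⃗|_≠), where |R⃗|_≠ is the number of distinct randomizers among R_1,…,R_n. If H is chosen uniformly at random among subsets of [d] of size d/2, then with probability at least 2/3 over the choice of H, every randomizer Q_{H,R_i} for i ∈ [n] is ε'-private, where ε' = (e^{2ε}−1)·√((16/d)·ln(12·|𝒴|·|R⃗|_≠)). -/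
open scoped Classical

/-- `QPrivate R H ε'` says that the two-input randomizer `Q_{H,R}`, which on
input `+1` samples from `R(U_H)` and on input `-1` samples from `R(U_{H̄})`,
is `ε'`-private: each of its two output distributions is pointwise within a
factor `e^{ε'}` of the other. -/
noncomputable def QPrivate {d : ℕ} {Y : Type*} (R : Fin d → Y → ℝ)
    (H : Finset (Fin d)) (ε' : ℝ) : Prop :=
  ∀ y : Y, probU R H y ≤ Real.exp ε' * probU R (Finset.univ \ H) y ∧
    probU R (Finset.univ \ H) y ≤ Real.exp ε' * probU R H y

noncomputable section Stmt5Aux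

variable {d m : ℕ}

def Hmap (g : (Fin m × Bool) ≃ Fin d) (s : Fin m → Bool) : Finset (Fin d) :=
  Finset.univ.image (fun k => g (k, s k))

lemma Hmap_card (g : (Fin m × Bool) ≃ Fin d) (s : Fin m → Bool) :
    (Hmap g s).card = m := by
  rw [Hmap, Finset.card_image_of_injective _ ?_, Finset.card_univ, Fintype.card_fin]
  intro a b hab
  exact congrArg Prod.fst (g.injective hab)

lemma Hmap_mem (g : (Fin m × Bool) ≃ Fin d) (s : Fin m → Bool) :
    Hmap g s ∈ Finset.powersetCard m (Finset.univ : Finset (Fin d)) := by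
  rw [Finset.mem_powersetCard]
  exact ⟨Finset.subset_univ _, Hmap_card g s⟩

lemma Hmap_surj (hdm : d = 2 * m) (H : Finset (Fin d))
    (hH : H ∈ Finset.powersetCard m (Finset.univ : Finset (Fin d))) :
    ∃ (g : (Fin m × Bool) ≃ Fin d) (s : Fin m → Bool), Hmap g s = H := by
  obtain ⟨-, hcard⟩ := Finset.mem_powersetCard.1 hH
  have hcard' : Fintype.card {x : Fin d // x ∈ H} = m := by
    simpa [Fintype.card_coe] using hcard
  have hcardc : Fintype.card {x : Fin d // ¬ x ∈ H} = m := by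
    rw [Fintype.card_subtype_compl, hcard', Fintype.card_fin, hdm]; omega
  let e1 : Fin m ≃ {x : Fin d // x ∈ H} := (Fintype.equivFinOfCardEq hcard').symm
  let e2 : Fin m ≃ {x : Fin d // ¬ x ∈ H} := (Fintype.equivFinOfCardEq hcardc).symm
  let g : (Fin m × Bool) ≃ Fin d :=
    (Equiv.prodComm (Fin m) Bool).trans
      ((Equiv.boolProdEquivSum (Fin m)).trans
        ((Equiv.sumCongr e1 e2).trans (Equiv.sumCompl (· ∈ H))))
  refine ⟨g, fun _ => false, ?_⟩
  have hsub : Hmap g (fun _ => false) ⊆ H := by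
    intro x hx
    simp only [Hmap, Finset.mem_image] at hx
    obtain ⟨k, -, rfl⟩ := hx
    simp only [g, Equiv.trans_apply, Equiv.prodComm_apply, Prod.swap,
      Equiv.boolProdEquivSum_apply, Equiv.sumCongr_apply, Sum.map_inl,
      Equiv.sumCompl_apply_inl]
    exact (e1 k).2
  exact Finset.eq_of_subset_of_card_le hsub (by rw [Hmap_card, hcard])

lemma fiber_const_s5 (H H' : Finset (Fin d))
    (hH : H ∈ Finset.powersetCard m (Finset.univ : Finset (Fin d)))
    (hH' : H' ∈ Finset.powersetCard m (Finset.univ : Finset (Fin d))) :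
    ((Finset.univ : Finset (((Fin m × Bool) ≃ Fin d) × (Fin m → Bool))).filter
        (fun gs => Hmap gs.1 gs.2 = H)).card =
    ((Finset.univ : Finset (((Fin m × Bool) ≃ Fin d) × (Fin m → Bool))).filter
        (fun gs => Hmap gs.1 gs.2 = H')).card := by
  obtain ⟨-, hc⟩ := Finset.mem_powersetCard.1 hH
  obtain ⟨-, hc'⟩ := Finset.mem_powersetCard.1 hH'
  have hcc : Fintype.card {x : Fin d // x ∈ H} = Fintype.card {x : Fin d // x ∈ H'} := by
    simp [Fintype.card_coe, hc, hc']
  let e : {x : Fin d // x ∈ H} ≃ {x : Fin d // x ∈ H'} := Fintype.equivOfCardEq hcc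
  have hccc : Fintype.card {x : Fin d // ¬ x ∈ H} = Fintype.card {x : Fin d // ¬ x ∈ H'} := by
    rw [Fintype.card_subtype_compl, Fintype.card_subtype_compl, hcc]
  let f : {x : Fin d // ¬ x ∈ H} ≃ {x : Fin d // ¬ x ∈ H'} := Fintype.equivOfCardEq hccc
  let τ : Equiv.Perm (Fin d) := Equiv.subtypeCongr e f
  have hτ : ∀ x ∈ H, τ x ∈ H' := by
    intro x hx
    have : τ x = (e ⟨x, hx⟩ : Fin d) := by
      simp [τ, Equiv.subtypeCongr, Equiv.sumCompl_symm_apply_of_pos (p := (· ∈ H)) hx]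
    rw [this]; exact (e ⟨x, hx⟩).2
  have himg : Finset.image τ H = H' := by
    apply Finset.eq_of_subset_of_card_le
    · intro x hx
      obtain ⟨a, ha, rfl⟩ := Finset.mem_image.1 hx
      exact hτ a ha
    · rw [Finset.card_image_of_injective _ τ.injective, hc, hc']
  have hcomp : ∀ (σ : Equiv.Perm (Fin d)) (g : (Fin m × Bool) ≃ Fin d) (s : Fin m → Bool),
      Hmap (g.trans σ) s = Finset.image σ (Hmap g s) := by
    intro σ g s
    simp [Hmap, Finset.image_image]
    rfl
  apply Finset.card_bij (fun gs _ => (gs.1.trans τ, gs.2))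
  · rintro ⟨g, s⟩ hgs
    simp only [Finset.mem_filter, Finset.mem_univ, true_and] at hgs ⊢
    rw [hcomp, hgs, himg]
  · rintro ⟨g1, s1⟩ h1 ⟨g2, s2⟩ h2 heq
    simp only [Prod.mk.injEq] at heq
    obtain ⟨hg, hs⟩ := heq
    have : g1 = g2 := by
      ext x : 1
      have := congrFun (congrArg (fun (q : (Fin m × Bool) ≃ Fin d) => (q : Fin m × Bool → Fin d)) hg) x
      simp only [Equiv.trans_apply] at this
      exact τ.injective this
    exact Prod.ext this hs
  · rintro ⟨g, s⟩ hgs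
    simp only [Finset.mem_filter, Finset.mem_univ, true_and] at hgs
    have hmem : Hmap (g.trans τ.symm) s = H := by
      rw [hcomp, hgs, ← himg, Finset.image_image]
      have : (⇑τ.symm ∘ ⇑τ) = id := by ext x; simp
      rw [this, Finset.image_id]
    refine ⟨(g.trans τ.symm, s), by simpa using hmem, ?_⟩
    simp only [Prod.mk.injEq]
    exact ⟨by ext x : 1; simp, trivial⟩

lemma transfer (hdm : d = 2 * m) :
    ∃ N : ℕ, 0 < N ∧ ∀ f : Finset (Fin d) → ℝ,
      ∑ gs : ((Fin m × Bool) ≃ Fin d) × (Fin m → Bool), f (Hmap gs.1 gs.2) =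
      (N : ℝ) * ∑ H ∈ Finset.powersetCard m (Finset.univ : Finset (Fin d)), f H := by
  have hne : (Finset.powersetCard m (Finset.univ : Finset (Fin d))).Nonempty := by
    apply Finset.powersetCard_nonempty.2
    rw [Finset.card_univ, Fintype.card_fin]; omega
  obtain ⟨H₀, hH₀⟩ := hne
  set N := ((Finset.univ : Finset (((Fin m × Bool) ≃ Fin d) × (Fin m → Bool))).filter
      (fun gs => Hmap gs.1 gs.2 = H₀)).card with hNdef
  refine ⟨N, ?_, ?_⟩
  · obtain ⟨g, s, hgs⟩ := Hmap_surj hdm H₀ hH₀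
    rw [hNdef, Finset.card_pos]
    exact ⟨(g, s), by simp [hgs]⟩
  · intro f
    have h1 := Finset.sum_fiberwise_of_maps_to'
      (s := (Finset.univ : Finset (((Fin m × Bool) ≃ Fin d) × (Fin m → Bool))))
      (t := Finset.powersetCard m (Finset.univ : Finset (Fin d)))
      (g := fun gs => Hmap gs.1 gs.2) (fun gs _ => Hmap_mem gs.1 gs.2) f
    rw [← h1, Finset.mul_sum]
    apply Finset.sum_congr rfl
    intro H hH
    rw [Finset.sum_const, fiber_const_s5 H H₀ hH hH₀, nsmul_eq_mul]

lemma chernoff (hdm : d = 2 * m) (p : Fin d → ℝ) (c t lam : ℝ)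
    (hc : ∀ x x', p x - p x' ≤ c) (hlam : 0 ≤ lam) :
    (((Finset.powersetCard m (Finset.univ : Finset (Fin d))).filter
        (fun H => (∑ x, p x) / 2 + t ≤ ∑ x ∈ H, p x)).card : ℝ) ≤
      Real.exp (lam ^ 2 * m * c ^ 2 / 8 - lam * t) *
        ((Finset.powersetCard m (Finset.univ : Finset (Fin d))).card : ℝ) := by
  obtain ⟨N, hN, htr⟩ := transfer hdm
  set C := Finset.powersetCard m (Finset.univ : Finset (Fin d)) with hC
  set μ := (∑ x, p x) / 2 with hμ
  set B := lam ^ 2 * m * c ^ 2 / 8 - lam * t with hB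
  have hsum_ind : ∑ H ∈ C, (if μ + t ≤ ∑ x ∈ H, p x then (1:ℝ) else 0)
      = ((C.filter (fun H => μ + t ≤ ∑ x ∈ H, p x)).card : ℝ) := by
    rw [Finset.sum_ite, Finset.sum_const_zero, add_zero, Finset.sum_const,
      nsmul_eq_mul, mul_one]
  have hS : ∀ (g : (Fin m × Bool) ≃ Fin d) (s : Fin m → Bool),
      ∑ x ∈ Hmap g s, p x = ∑ k, p (g (k, s k)) := by
    intro g s
    rw [Hmap, Finset.sum_image]
    intro a _ b _ hab
    exact congrArg Prod.fst (g.injective hab)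
  have hT : ∀ (g : (Fin m × Bool) ≃ Fin d),
      μ = ∑ k, (p (g (k, false)) + p (g (k, true))) / 2 := by
    intro g
    rw [hμ, ← Equiv.sum_comp g p, Fintype.sum_prod_type, Finset.sum_div]
    apply Finset.sum_congr rfl
    intro k _
    rw [Fintype.sum_bool]
    ring
  have hpoint : ∀ gs : ((Fin m × Bool) ≃ Fin d) × (Fin m → Bool),
      (if μ + t ≤ ∑ x ∈ Hmap gs.1 gs.2, p x then (1:ℝ) else 0) ≤
        Real.exp (lam * ((∑ x ∈ Hmap gs.1 gs.2, p x) - μ - t)) := by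
    intro gs
    split_ifs with h
    · rw [← Real.exp_zero]
      apply Real.exp_le_exp.2
      have : 0 ≤ (∑ x ∈ Hmap gs.1 gs.2, p x) - μ - t := by linarith
      positivity
    · positivity
  have hperg : ∀ g : (Fin m × Bool) ≃ Fin d,
      ∑ s : Fin m → Bool, Real.exp (lam * ((∑ x ∈ Hmap g s, p x) - μ - t)) ≤
        (2:ℝ) ^ m * Real.exp B := by
    intro g
    have key : ∀ s : Fin m → Bool,
        Real.exp (lam * ((∑ x ∈ Hmap g s, p x) - μ - t)) =
          Real.exp (-(lam * t)) * ∏ k, Real.exp (lam *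
            (p (g (k, s k)) - (p (g (k, false)) + p (g (k, true))) / 2)) := by
      intro s
      rw [← Real.exp_sum, ← Real.exp_add, hS, hT g]
      congr 1
      rw [← Finset.sum_sub_distrib, ← Finset.mul_sum]
      ring
    simp only [key]
    rw [← Finset.mul_sum]
    have hswap : ∑ s : Fin m → Bool, ∏ k, Real.exp (lam *
        (p (g (k, s k)) - (p (g (k, false)) + p (g (k, true))) / 2)) =
        ∏ k, ∑ b : Bool, Real.exp (lam *
        (p (g (k, b)) - (p (g (k, false)) + p (g (k, true))) / 2)) := by
      rw [Finset.prod_univ_sum (fun _ => (Finset.univ : Finset Bool))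
        (fun k b => Real.exp (lam *
          (p (g (k, b)) - (p (g (k, false)) + p (g (k, true))) / 2)))]
      rw [Fintype.piFinset_univ]
    rw [hswap]
    have hfac : ∀ k : Fin m, ∑ b : Bool, Real.exp (lam *
        (p (g (k, b)) - (p (g (k, false)) + p (g (k, true))) / 2)) ≤
        2 * Real.exp (lam ^ 2 * c ^ 2 / 8) := by
      intro k
      rw [Fintype.sum_bool]
      set x := lam * ((p (g (k, true)) - p (g (k, false))) / 2) with hx
      have h1 : lam * (p (g (k, true)) - (p (g (k, false)) + p (g (k, true))) / 2) = x := by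
        rw [hx]; ring
      have h2 : lam * (p (g (k, false)) - (p (g (k, false)) + p (g (k, true))) / 2) = -x := by
        rw [hx]; ring
      rw [h1, h2]
      have hcosh : Real.exp x + Real.exp (-x) ≤ 2 * Real.exp (x ^ 2 / 2) := by
        have := Real.cosh_le_exp_half_sq x
        rw [Real.cosh_eq] at this
        linarith
      have hxb : x ^ 2 / 2 ≤ lam ^ 2 * c ^ 2 / 8 := by
        have hd1 : p (g (k, true)) - p (g (k, false)) ≤ c := hc _ _
        have hd2 : p (g (k, false)) - p (g (k, true)) ≤ c := hc _ _
        have hDsq : (p (g (k, true)) - p (g (k, false))) ^ 2 ≤ c ^ 2 := by nlinarith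
        have hxsq : x ^ 2 = lam ^ 2 * (p (g (k, true)) - p (g (k, false))) ^ 2 / 4 := by
          rw [hx]; ring
        nlinarith [mul_le_mul_of_nonneg_left hDsq (sq_nonneg lam)]
      calc Real.exp x + Real.exp (-x) ≤ 2 * Real.exp (x ^ 2 / 2) := hcosh
        _ ≤ 2 * Real.exp (lam ^ 2 * c ^ 2 / 8) := by
            have := Real.exp_le_exp.2 hxb
            linarith
    calc Real.exp (-(lam * t)) * ∏ k, ∑ b : Bool, Real.exp (lam *
          (p (g (k, b)) - (p (g (k, false)) + p (g (k, true))) / 2))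
        ≤ Real.exp (-(lam * t)) * ∏ _k : Fin m, (2 * Real.exp (lam ^ 2 * c ^ 2 / 8)) := by
          apply mul_le_mul_of_nonneg_left _ (Real.exp_nonneg _)
          apply Finset.prod_le_prod
          · intro k _
            apply Finset.sum_nonneg
            intro b _
            positivity
          · intro k _
            exact hfac k
      _ = (2:ℝ) ^ m * Real.exp B := by
          rw [Finset.prod_const, Finset.card_univ, Fintype.card_fin, mul_pow,
            ← Real.exp_nat_mul, hB,
            show lam ^ 2 * (m:ℝ) * c ^ 2 / 8 - lam * t
              = (m:ℝ) * (lam ^ 2 * c ^ 2 / 8) + (-(lam * t)) by ring,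
            Real.exp_add]
          ring
  -- total count of pairs
  have htotal : ((Fintype.card (((Fin m × Bool) ≃ Fin d) × (Fin m → Bool))) : ℝ)
      = (N : ℝ) * (C.card : ℝ) := by
    have := htr (fun _ => (1:ℝ))
    simpa [Finset.card_univ] using this
  have hcardE : (Fintype.card (((Fin m × Bool) ≃ Fin d) × (Fin m → Bool)) : ℝ)
      = (Fintype.card ((Fin m × Bool) ≃ Fin d) : ℝ) * (2:ℝ) ^ m := by
    rw [Fintype.card_prod]
    push_cast
    congr 1
    rw [Fintype.card_fun, Fintype.card_bool, Fintype.card_fin]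
    push_cast
    rfl
  have hmain : (N : ℝ) * ((C.filter (fun H => μ + t ≤ ∑ x ∈ H, p x)).card : ℝ) ≤
      (N : ℝ) * (Real.exp B * (C.card : ℝ)) := by
    calc (N : ℝ) * ((C.filter (fun H => μ + t ≤ ∑ x ∈ H, p x)).card : ℝ)
        = ∑ gs : ((Fin m × Bool) ≃ Fin d) × (Fin m → Bool),
            (if μ + t ≤ ∑ x ∈ Hmap gs.1 gs.2, p x then (1:ℝ) else 0) := by
          rw [htr (fun H => if μ + t ≤ ∑ x ∈ H, p x then (1:ℝ) else 0), hsum_ind]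
      _ ≤ ∑ gs : ((Fin m × Bool) ≃ Fin d) × (Fin m → Bool),
            Real.exp (lam * ((∑ x ∈ Hmap gs.1 gs.2, p x) - μ - t)) :=
          Finset.sum_le_sum (fun gs _ => hpoint gs)
      _ = ∑ g : (Fin m × Bool) ≃ Fin d, ∑ s : Fin m → Bool,
            Real.exp (lam * ((∑ x ∈ Hmap g s, p x) - μ - t)) := by
          rw [Fintype.sum_prod_type]
      _ ≤ ∑ _g : (Fin m × Bool) ≃ Fin d, ((2:ℝ) ^ m * Real.exp B) :=
          Finset.sum_le_sum (fun g _ => hperg g)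
      _ = (N : ℝ) * (Real.exp B * (C.card : ℝ)) := by
          rw [Finset.sum_const, Finset.card_univ, nsmul_eq_mul]
          rw [show (Fintype.card ((Fin m × Bool) ≃ Fin d) : ℝ) * ((2:ℝ) ^ m * Real.exp B)
            = ((Fintype.card ((Fin m × Bool) ≃ Fin d) : ℝ) * (2:ℝ) ^ m) * Real.exp B by ring,
            ← hcardE, htotal]
          ring
  have hNpos : (0:ℝ) < N := by exact_mod_cast hN
  exact le_of_mul_le_mul_left hmain hNpos
lemma ratio_lem (e' S T : ℝ) (h0 : 0 ≤ e') (h2 : e' ≤ 2) (hT : 0 ≤ T)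
    (hlow : T / 2 - e' * T / 8 ≤ S) (hhigh : S ≤ T / 2 + e' * T / 8) :
    S ≤ Real.exp e' * (T - S) ∧ T - S ≤ Real.exp e' * S := by
  have hexp := Real.add_one_le_exp e'
  have hTS : 0 ≤ T - S := by nlinarith
  have hS0 : 0 ≤ S := by nlinarith
  constructor
  · calc S ≤ (e' + 1) * (T - S) := by nlinarith
      _ ≤ Real.exp e' * (T - S) := mul_le_mul_of_nonneg_right hexp hTS
  · calc T - S ≤ (e' + 1) * S := by nlinarith
      _ ≤ Real.exp e' * S := mul_le_mul_of_nonneg_right hexp hS0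

set_option maxHeartbeats 2000000 in
lemma perpair (hm : 0 < m) (hdm : d = 2 * m) (ε e' : ℝ) (hε : 0 < ε)
    (h0 : 0 ≤ e') (he2 : e' ≤ 2) (p : Fin d → ℝ)
    (hp0 : ∀ x, 0 ≤ p x) (hpriv : ∀ x x', p x ≤ Real.exp ε * p x') :
    (((Finset.powersetCard m (Finset.univ : Finset (Fin d))).filter
        (fun H => ¬((∑ x ∈ H, p x) ≤ Real.exp e' * ((∑ x, p x) - ∑ x ∈ H, p x) ∧
          ((∑ x, p x) - ∑ x ∈ H, p x) ≤ Real.exp e' * ∑ x ∈ H, p x))).card : ℝ) ≤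
      2 * Real.exp (-(e' ^ 2 * m / (16 * (Real.exp ε - 1) ^ 2))) *
        ((Finset.powersetCard m (Finset.univ : Finset (Fin d))).card : ℝ) := by
  set C := Finset.powersetCard m (Finset.univ : Finset (Fin d)) with hC
  set T := ∑ x, p x with hTdef
  by_cases hall : ∀ x, p x = 0
  · have hfe : (C.filter (fun H => ¬((∑ x ∈ H, p x) ≤ Real.exp e' * (T - ∑ x ∈ H, p x) ∧
        (T - ∑ x ∈ H, p x) ≤ Real.exp e' * ∑ x ∈ H, p x))) = ∅ := by
      apply Finset.filter_eq_empty_iff.2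
      intro H _
      have h1 : ∑ x ∈ H, p x = 0 := Finset.sum_eq_zero (fun x _ => hall x)
      have h2 : T = 0 := Finset.sum_eq_zero (fun x _ => hall x)
      rw [h1, h2]
      simp
    rw [hfe]
    simp only [Finset.card_empty, Nat.cast_zero]
    positivity
  · push_neg at hall
    obtain ⟨x₀, hx₀⟩ := hall
    obtain ⟨xm, -, hmin⟩ := Finset.exists_min_image Finset.univ p ⟨x₀, Finset.mem_univ x₀⟩
    set a := p xm with ha
    have ha0 : 0 < a := by
      rcases lt_or_eq_of_le (hp0 xm) with h | h
      · exact h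
      · exfalso
        apply hx₀
        have := hpriv x₀ xm
        rw [← h] at this
        simp only [mul_zero] at this
        exact le_antisymm this (hp0 x₀)
    have hexpε : 1 < Real.exp ε := by nlinarith [Real.add_one_le_exp ε]
    have hε1 : 0 < Real.exp ε - 1 := by linarith
    set c := (Real.exp ε - 1) * a with hc
    have hcpos : 0 < c := mul_pos hε1 ha0
    have hcb : ∀ x x', p x - p x' ≤ c := by
      intro x x'
      have h1 : p x ≤ Real.exp ε * a := hpriv x xm
      have h2 : a ≤ p x' := hmin x' (Finset.mem_univ x')
      rw [hc]; nlinarith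
    have hTa : 2 * m * a ≤ T := by
      rw [hTdef]
      calc 2 * (m:ℝ) * a = ∑ _x : Fin d, a := by
            rw [Finset.sum_const, Finset.card_univ, Fintype.card_fin, nsmul_eq_mul, hdm]
            push_cast; ring
        _ ≤ ∑ x, p x := Finset.sum_le_sum (fun x _ => hmin x (Finset.mem_univ x))
    have hT0 : 0 ≤ T := le_trans (by positivity) hTa
    set t := e' * T / 8 with ht
    have ht0 : 0 ≤ t := by rw [ht]; positivity
    set lam := 4 * t / (m * c ^ 2) with hlam
    have hlam0 : 0 ≤ lam := by rw [hlam]; positivity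
    have hup := chernoff hdm p c t lam hcb hlam0
    rw [← hC, ← hTdef] at hup
    have hlo := chernoff hdm (fun x => -p x) c t lam (fun x x' => by
      have := hcb x' x; linarith) hlam0
    rw [← hC] at hlo
    have hlo' : ((C.filter (fun H => ∑ x ∈ H, p x ≤ T / 2 - t)).card : ℝ) ≤
        Real.exp (lam ^ 2 * m * c ^ 2 / 8 - lam * t) * (C.card : ℝ) := by
      have heq : (C.filter (fun H => (∑ x, (fun x => -p x) x) / 2 + t ≤
          ∑ x ∈ H, (fun x => -p x) x)) =
          (C.filter (fun H => ∑ x ∈ H, p x ≤ T / 2 - t)) := by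
        apply Finset.filter_congr
        intro H _
        simp only [Finset.sum_neg_distrib, ← hTdef]
        constructor
        · intro h; linarith
        · intro h; linarith
      rw [← heq]
      exact hlo
    have hsub : (C.filter (fun H => ¬((∑ x ∈ H, p x) ≤ Real.exp e' * (T - ∑ x ∈ H, p x) ∧
        (T - ∑ x ∈ H, p x) ≤ Real.exp e' * ∑ x ∈ H, p x))) ⊆
        (C.filter (fun H => T / 2 + t ≤ ∑ x ∈ H, p x)) ∪
        (C.filter (fun H => ∑ x ∈ H, p x ≤ T / 2 - t)) := by
      intro H hH
      rw [Finset.mem_filter] at hH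
      obtain ⟨hHC, hbad⟩ := hH
      rw [Finset.mem_union, Finset.mem_filter, Finset.mem_filter]
      by_contra hcon
      push_neg at hcon
      obtain ⟨hc1, hc2⟩ := hcon
      have h1 := hc1 hHC
      have h2 := hc2 hHC
      exact hbad (ratio_lem e' _ T h0 he2 hT0 (by rw [← ht]; linarith)
        (by rw [← ht]; linarith))
    have hexpeq : lam ^ 2 * m * c ^ 2 / 8 - lam * t = -(2 * t ^ 2 / (m * c ^ 2)) := by
      rw [hlam]
      have hmpos : (0:ℝ) < m := by exact_mod_cast hm
      field_simp
      ring
    have hexpineq : -(2 * t ^ 2 / (m * c ^ 2)) ≤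
        -(e' ^ 2 * m / (16 * (Real.exp ε - 1) ^ 2)) := by
      rw [neg_le_neg_iff]
      have htlb : e' * m * a / 4 ≤ t := by
        rw [ht]
        have : e' * (2 * m * a) ≤ e' * T := mul_le_mul_of_nonneg_left hTa h0
        linarith
      have htsq : (e' * m * a / 4) ^ 2 ≤ t ^ 2 := by
        apply sq_le_sq' _ htlb
        have : 0 ≤ e' * m * a / 4 := by positivity
        linarith
      have hmpos : (0:ℝ) < m := by exact_mod_cast hm
      rw [div_le_div_iff₀ (mul_pos (by norm_num) (pow_pos hε1 2)) (by positivity)]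
      have hcsq : c ^ 2 = (Real.exp ε - 1) ^ 2 * a ^ 2 := by rw [hc]; ring
      calc e' ^ 2 * (m:ℝ) * ((m:ℝ) * c ^ 2)
          = (e' * m * a / 4) ^ 2 * (16 * (Real.exp ε - 1) ^ 2) := by rw [hcsq]; ring
        _ ≤ t ^ 2 * (16 * (Real.exp ε - 1) ^ 2) :=
            mul_le_mul_of_nonneg_right htsq (by positivity)
        _ ≤ 2 * t ^ 2 * (16 * (Real.exp ε - 1) ^ 2) := by nlinarith [sq_nonneg t, pow_pos hε1 2]
    have hexple : Real.exp (lam ^ 2 * m * c ^ 2 / 8 - lam * t) ≤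
        Real.exp (-(e' ^ 2 * m / (16 * (Real.exp ε - 1) ^ 2))) := by
      rw [hexpeq]
      exact Real.exp_le_exp.2 hexpineq
    clear_value C T a c t lam
    calc (((C.filter (fun H => ¬((∑ x ∈ H, p x) ≤ Real.exp e' * (T - ∑ x ∈ H, p x) ∧
        (T - ∑ x ∈ H, p x) ≤ Real.exp e' * ∑ x ∈ H, p x)))).card : ℝ)
        ≤ (((C.filter (fun H => T / 2 + t ≤ ∑ x ∈ H, p x)) ∪
            (C.filter (fun H => ∑ x ∈ H, p x ≤ T / 2 - t))).card : ℝ) := by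
          exact_mod_cast Finset.card_le_card hsub
      _ ≤ ((C.filter (fun H => T / 2 + t ≤ ∑ x ∈ H, p x)).card : ℝ) +
          ((C.filter (fun H => ∑ x ∈ H, p x ≤ T / 2 - t)).card : ℝ) := by
          exact_mod_cast Finset.card_union_le _ _
      _ ≤ Real.exp (lam ^ 2 * m * c ^ 2 / 8 - lam * t) * (C.card : ℝ) +
          Real.exp (lam ^ 2 * m * c ^ 2 / 8 - lam * t) * (C.card : ℝ) := by
          exact add_le_add hup hlo'
      _ ≤ 2 * Real.exp (-(e' ^ 2 * m / (16 * (Real.exp ε - 1) ^ 2))) * (C.card : ℝ) := by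
          have hCpos : (0:ℝ) ≤ (C.card : ℝ) := Nat.cast_nonneg _
          nlinarith [hexple]
end Stmt5Aux

set_option maxHeartbeats 2000000 in
/-- for `ε > 0`, a vector `R = (R_1,…,R_n)` of `ε`-private randomizers
from `[d]` to a finite message set `𝒴`, and even `d > 4(e^{2ε}-1)² ln(12 |𝒴| |R|_≠)`:
if `H` is uniform among size-`d/2` subsets of `[d]`, then with probability at least
`2/3` over `H`, every randomizer `Q_{H,R_i}` is `ε'`-private for
`ε' = (e^{2ε}-1)√((16/d) ln(12 |𝒴| |R|_≠))`. -/
theorem stmt_5 {Y : Type*} [Fintype Y] (ε : ℝ) (n d : ℕ)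
    (hε : 0 < ε) (hd : Even d)
    (R : Fin n → Fin d → Y → ℝ)
    (hd2 : 4 * (Real.exp (2 * ε) - 1) ^ 2 *
        Real.log (12 * (Fintype.card Y : ℝ) * ((Finset.univ.image R).card : ℝ)) < (d : ℝ))
    (hR0 : ∀ i x y, 0 ≤ R i x y) (hR1 : ∀ i x, ∑ y, R i x y = 1)
    (hpriv : ∀ i x x' y, R i x y ≤ Real.exp ε * R i x' y) :
    2 / 3 ≤
      (((Finset.powersetCard (d / 2) (Finset.univ : Finset (Fin d))).filter
          (fun H => ∀ i : Fin n, QPrivate (R i) H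
            ((Real.exp (2 * ε) - 1) * Real.sqrt (16 / (d : ℝ) *
              Real.log (12 * (Fintype.card Y : ℝ) * ((Finset.univ.image R).card : ℝ)))))).card : ℝ)
        / ((Finset.powersetCard (d / 2) (Finset.univ : Finset (Fin d))).card : ℝ) := by
  set e' := (Real.exp (2 * ε) - 1) * Real.sqrt (16 / (d : ℝ) *
      Real.log (12 * (Fintype.card Y : ℝ) * ((Finset.univ.image R).card : ℝ))) with he'
  set C := Finset.powersetCard (d / 2) (Finset.univ : Finset (Fin d)) with hCdef
  have hCpos : 0 < C.card := by
    rw [hCdef, Finset.card_powersetCard, Finset.card_univ, Fintype.card_fin]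
    exact Nat.choose_pos (Nat.div_le_self d 2)
  have hCpos' : (0:ℝ) < (C.card : ℝ) := by exact_mod_cast hCpos
  by_cases hn : n = 0
  · subst hn
    have hfe : C.filter (fun H => ∀ i : Fin 0, QPrivate (R i) H e') = C :=
      Finset.filter_true_of_mem (fun H _ => fun i => i.elim0)
    rw [hfe, div_self (ne_of_gt hCpos')]
    norm_num
  by_cases hd0 : d = 0
  · subst hd0
    have hfe : C.filter (fun H => ∀ i : Fin n, QPrivate (R i) H e') = C := by
      apply Finset.filter_true_of_mem
      intro H _ i y
      have hH : H = ∅ := Finset.eq_empty_of_isEmpty H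
      simp [probU, hH, Finset.univ_eq_empty]
    rw [hfe, div_self (ne_of_gt hCpos')]
    norm_num
  -- main case
  have hn' : 0 < n := Nat.pos_of_ne_zero hn
  have hd' : 0 < d := Nat.pos_of_ne_zero hd0
  set m := d / 2 with hmdef
  have hdm : d = 2 * m := by
    obtain ⟨k, hk⟩ := hd
    omega
  have hm : 0 < m := by omega
  have hY : 0 < Fintype.card Y := by
    rcases Nat.eq_zero_or_pos (Fintype.card Y) with h | h
    · exfalso
      haveI hempty : IsEmpty Y := Fintype.card_eq_zero_iff.1 h
      have := hR1 ⟨0, hn'⟩ ⟨0, hd'⟩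
      rw [Finset.univ_eq_empty, Finset.sum_empty] at this
      norm_num at this
    · exact h
  have hM : 0 < (Finset.univ.image R).card := by
    haveI : Nonempty (Fin n) := ⟨⟨0, hn'⟩⟩
    apply Finset.card_pos.2
    exact (Finset.univ_nonempty).image R
  set K := 12 * (Fintype.card Y : ℝ) * ((Finset.univ.image R).card : ℝ) with hK
  have hY1 : (1:ℝ) ≤ (Fintype.card Y : ℝ) := by exact_mod_cast hY
  have hM1 : (1:ℝ) ≤ ((Finset.univ.image R).card : ℝ) := by exact_mod_cast hM
  have hK12 : 12 ≤ K := by rw [hK]; nlinarith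
  have hKpos : 0 < K := by linarith
  set L := Real.log K with hL
  have hL0 : 0 < L := Real.log_pos (by linarith)
  set E := Real.exp (2 * ε) - 1 with hE
  have hE0 : 0 < E := by
    rw [hE]
    have : (1:ℝ) < Real.exp (2 * ε ) := by nlinarith [Real.add_one_le_exp (2 * ε)]
    linarith
  have hdr : (d:ℝ) = 2 * (m:ℝ) := by exact_mod_cast hdm
  have hdpos : (0:ℝ) < (d:ℝ) := by exact_mod_cast hd'
  have harg0 : 0 ≤ 16 / (d:ℝ) * L := by positivity
  have h0 : 0 ≤ e' := by
    rw [he']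
    exact mul_nonneg hE0.le (Real.sqrt_nonneg _)
  have he2 : e' ≤ 2 := by
    have harg : 16 / (d:ℝ) * L ≤ (2 / E) ^ 2 := by
      rw [div_pow]
      rw [div_mul_eq_mul_div, div_le_div_iff₀ hdpos (by positivity)]
      nlinarith [hd2]
    calc e' = E * Real.sqrt (16 / (d:ℝ) * L) := he'
      _ ≤ E * Real.sqrt ((2 / E) ^ 2) := by
          apply mul_le_mul_of_nonneg_left (Real.sqrt_le_sqrt harg) (le_of_lt hE0)
      _ = E * (2 / E) := by rw [Real.sqrt_sq (by positivity)]
      _ = 2 := by field_simp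
  have hexp2 : e' ^ 2 = E ^ 2 * (16 / (d:ℝ) * L) := by
    rw [he', mul_pow, Real.sq_sqrt harg0]
  have hexpe : 1 < Real.exp ε := by nlinarith [Real.add_one_le_exp ε]
  have heps1 : 0 < Real.exp ε - 1 := by linarith
  have hEfac : E = (Real.exp ε - 1) * (Real.exp ε + 1) := by
    rw [hE, show (2:ℝ) * ε = ε + ε by ring, Real.exp_add]
    ring
  have hexpbound : 2 * L ≤ e' ^ 2 * (m:ℝ) / (16 * (Real.exp ε - 1) ^ 2) := by
    have hcomp : e' ^ 2 * (m:ℝ) / (16 * (Real.exp ε - 1) ^ 2)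
        = L * (Real.exp ε + 1) ^ 2 / 2 := by
      rw [hexp2, hEfac, hdr]
      have hmpos : (0:ℝ) < (m:ℝ) := by exact_mod_cast hm
      field_simp
    rw [hcomp]
    nlinarith [hL0, hexpe]
  -- per pair bound
  have hperpair : ∀ Rf ∈ Finset.univ.image R, ∀ y : Y,
      ((C.filter (fun H => ¬((∑ x ∈ H, Rf x y) ≤ Real.exp e' * ((∑ x, Rf x y) - ∑ x ∈ H, Rf x y) ∧
          ((∑ x, Rf x y) - ∑ x ∈ H, Rf x y) ≤ Real.exp e' * ∑ x ∈ H, Rf x y))).card : ℝ) ≤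
        2 / K ^ 2 * (C.card : ℝ) := by
    intro Rf hRf y
    obtain ⟨i, -, rfl⟩ := Finset.mem_image.1 hRf
    have hper := perpair hm hdm ε e' hε h0 he2 (fun x => R i x y)
      (fun x => hR0 i x y) (fun x x' => hpriv i x x' y)
    beta_reduce at hper
    calc ((C.filter (fun H => ¬((∑ x ∈ H, R i x y) ≤ Real.exp e' * ((∑ x, R i x y) - ∑ x ∈ H, R i x y) ∧
          ((∑ x, R i x y) - ∑ x ∈ H, R i x y) ≤ Real.exp e' * ∑ x ∈ H, R i x y))).card : ℝ)
        ≤ 2 * Real.exp (-(e' ^ 2 * m / (16 * (Real.exp ε - 1) ^ 2))) * (C.card : ℝ) := by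
          rw [hCdef]; exact hper
      _ ≤ 2 / K ^ 2 * (C.card : ℝ) := by
          apply mul_le_mul_of_nonneg_right _ (le_of_lt hCpos')
          have h1 : Real.exp (-(e' ^ 2 * m / (16 * (Real.exp ε - 1) ^ 2))) ≤
              Real.exp (-(2 * L)) := Real.exp_le_exp.2 (by linarith)
          have h2 : Real.exp (-(2 * L)) = 1 / K ^ 2 := by
            rw [Real.exp_neg, two_mul, Real.exp_add, Real.exp_log hKpos]
            rw [one_div]
            congr 1
            ring
          rw [h2] at h1
          calc 2 * Real.exp (-(e' ^ 2 * m / (16 * (Real.exp ε - 1) ^ 2)))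
              ≤ 2 * (1 / K ^ 2) := by linarith
            _ = 2 / K ^ 2 := by ring
  -- translation
  have htrans : ∀ H ∈ C, ∀ (Rf : Fin d → Y → ℝ) (y : Y),
      ((∑ x ∈ H, Rf x y) ≤ Real.exp e' * ((∑ x, Rf x y) - ∑ x ∈ H, Rf x y) ∧
        ((∑ x, Rf x y) - ∑ x ∈ H, Rf x y) ≤ Real.exp e' * ∑ x ∈ H, Rf x y) →
      (probU Rf H y ≤ Real.exp e' * probU Rf (Finset.univ \ H) y ∧
        probU Rf (Finset.univ \ H) y ≤ Real.exp e' * probU Rf H y) := by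
    intro H hH Rf y hsum
    rw [hCdef, Finset.mem_powersetCard] at hH
    obtain ⟨hsub, hcard⟩ := hH
    have hcard' : (Finset.univ \ H).card = m := by
      rw [Finset.card_sdiff_of_subset hsub, Finset.card_univ, Fintype.card_fin, hcard]
      omega
    have hsdiff : ∑ x ∈ Finset.univ \ H, Rf x y = (∑ x, Rf x y) - ∑ x ∈ H, Rf x y :=
      Finset.sum_sdiff_eq_sub hsub
    have hmpos : (0:ℝ) < (m:ℝ) := by exact_mod_cast hm
    rw [probU, probU, hcard, hcard', hsdiff]
    constructor
    · rw [← mul_div_assoc]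
      exact (div_le_div_iff_of_pos_right hmpos).2 hsum.1
    · rw [← mul_div_assoc]
      exact (div_le_div_iff_of_pos_right hmpos).2 hsum.2
  -- union bound
  have hsubset : C.filter (fun H => ¬ ∀ i : Fin n, QPrivate (R i) H e') ⊆
      (Finset.univ.image R).biUnion (fun Rf => Finset.univ.biUnion (fun y =>
        C.filter (fun H => ¬((∑ x ∈ H, Rf x y) ≤ Real.exp e' * ((∑ x, Rf x y) - ∑ x ∈ H, Rf x y) ∧
          ((∑ x, Rf x y) - ∑ x ∈ H, Rf x y) ≤ Real.exp e' * ∑ x ∈ H, Rf x y)))) := by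
    intro H hH
    rw [Finset.mem_filter] at hH
    obtain ⟨hHC, hnot⟩ := hH
    push_neg at hnot
    obtain ⟨i, hi⟩ := hnot
    rw [QPrivate] at hi
    push_neg at hi
    obtain ⟨y, hy⟩ := hi
    rw [Finset.mem_biUnion]
    refine ⟨R i, Finset.mem_image_of_mem R (Finset.mem_univ i), ?_⟩
    rw [Finset.mem_biUnion]
    refine ⟨y, Finset.mem_univ y, ?_⟩
    rw [Finset.mem_filter]
    refine ⟨hHC, fun hsum => ?_⟩
    have := htrans H hHC (R i) y hsum
    rcases hy this.1 with hgt
    exact absurd this.2 (not_le.2 hgt)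
  have hbadnat : (C.filter (fun H => ¬ ∀ i : Fin n, QPrivate (R i) H e')).card ≤
      ∑ Rf ∈ Finset.univ.image R, ∑ y : Y,
        (C.filter (fun H => ¬((∑ x ∈ H, Rf x y) ≤ Real.exp e' * ((∑ x, Rf x y) - ∑ x ∈ H, Rf x y) ∧
          ((∑ x, Rf x y) - ∑ x ∈ H, Rf x y) ≤ Real.exp e' * ∑ x ∈ H, Rf x y))).card := by
    calc (C.filter (fun H => ¬ ∀ i : Fin n, QPrivate (R i) H e')).card
        ≤ ((Finset.univ.image R).biUnion (fun Rf => Finset.univ.biUnion (fun y =>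
            C.filter (fun H => ¬((∑ x ∈ H, Rf x y) ≤ Real.exp e' * ((∑ x, Rf x y) - ∑ x ∈ H, Rf x y) ∧
              ((∑ x, Rf x y) - ∑ x ∈ H, Rf x y) ≤ Real.exp e' * ∑ x ∈ H, Rf x y))))).card :=
          Finset.card_le_card hsubset
      _ ≤ ∑ Rf ∈ Finset.univ.image R, (Finset.univ.biUnion (fun y =>
            C.filter (fun H => ¬((∑ x ∈ H, Rf x y) ≤ Real.exp e' * ((∑ x, Rf x y) - ∑ x ∈ H, Rf x y) ∧
              ((∑ x, Rf x y) - ∑ x ∈ H, Rf x y) ≤ Real.exp e' * ∑ x ∈ H, Rf x y)))).card :=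
          Finset.card_biUnion_le
      _ ≤ _ := Finset.sum_le_sum (fun Rf _ => Finset.card_biUnion_le)
  have hbadcard : ((C.filter (fun H => ¬ ∀ i : Fin n, QPrivate (R i) H e')).card : ℝ) ≤
      ((Finset.univ.image R).card : ℝ) * (Fintype.card Y : ℝ) * (2 / K ^ 2 * (C.card : ℝ)) := by
    have h1 : ((C.filter (fun H => ¬ ∀ i : Fin n, QPrivate (R i) H e')).card : ℝ) ≤
        ∑ Rf ∈ Finset.univ.image R, ∑ y : Y,
          ((C.filter (fun H => ¬((∑ x ∈ H, Rf x y) ≤ Real.exp e' * ((∑ x, Rf x y) - ∑ x ∈ H, Rf x y) ∧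
            ((∑ x, Rf x y) - ∑ x ∈ H, Rf x y) ≤ Real.exp e' * ∑ x ∈ H, Rf x y))).card : ℝ) := by
      exact_mod_cast hbadnat
    calc ((C.filter (fun H => ¬ ∀ i : Fin n, QPrivate (R i) H e')).card : ℝ)
        ≤ ∑ Rf ∈ Finset.univ.image R, ∑ y : Y,
          ((C.filter (fun H => ¬((∑ x ∈ H, Rf x y) ≤ Real.exp e' * ((∑ x, Rf x y) - ∑ x ∈ H, Rf x y) ∧
            ((∑ x, Rf x y) - ∑ x ∈ H, Rf x y) ≤ Real.exp e' * ∑ x ∈ H, Rf x y))).card : ℝ) := h1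
      _ ≤ ∑ Rf ∈ Finset.univ.image R, ∑ _y : Y, (2 / K ^ 2 * (C.card : ℝ)) := by
          apply Finset.sum_le_sum
          intro Rf hRf
          apply Finset.sum_le_sum
          intro y _
          exact hperpair Rf hRf y
      _ = ((Finset.univ.image R).card : ℝ) * (Fintype.card Y : ℝ) * (2 / K ^ 2 * (C.card : ℝ)) := by
          rw [Finset.sum_const, Finset.sum_const, Finset.card_univ, nsmul_eq_mul, nsmul_eq_mul]
          ring
  have h13 : ((Finset.univ.image R).card : ℝ) * (Fintype.card Y : ℝ) * (2 / K ^ 2) ≤ 1 / 3 := by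
    rw [show ((Finset.univ.image R).card : ℝ) * (Fintype.card Y : ℝ) * (2 / K ^ 2)
      = (2 * ((Finset.univ.image R).card : ℝ) * (Fintype.card Y : ℝ)) / K ^ 2 by ring]
    rw [div_le_div_iff₀ (pow_pos hKpos 2) (by norm_num : (0:ℝ) < 3)]
    have hKsq : K ^ 2 = 144 * (Fintype.card Y : ℝ) ^ 2 * ((Finset.univ.image R).card : ℝ) ^ 2 := by
      rw [hK]; ring
    nlinarith [hY1, hM1, mul_le_mul hY1 hM1 (by norm_num) (by linarith)]
  have hbadfinal : ((C.filter (fun H => ¬ ∀ i : Fin n, QPrivate (R i) H e')).card : ℝ) ≤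
      1 / 3 * (C.card : ℝ) := by
    calc ((C.filter (fun H => ¬ ∀ i : Fin n, QPrivate (R i) H e')).card : ℝ)
        ≤ ((Finset.univ.image R).card : ℝ) * (Fintype.card Y : ℝ) * (2 / K ^ 2 * (C.card : ℝ)) :=
          hbadcard
      _ = (((Finset.univ.image R).card : ℝ) * (Fintype.card Y : ℝ) * (2 / K ^ 2)) * (C.card : ℝ) := by
          ring
      _ ≤ 1 / 3 * (C.card : ℝ) := mul_le_mul_of_nonneg_right h13 (le_of_lt hCpos')
  have hsplit : (C.filter (fun H => ∀ i : Fin n, QPrivate (R i) H e')).card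
      + (C.filter (fun H => ¬ ∀ i : Fin n, QPrivate (R i) H e')).card = C.card :=
    Finset.card_filter_add_card_filter_not (p := fun H => ∀ i : Fin n, QPrivate (R i) H e')
  have hsplit' : ((C.filter (fun H => ∀ i : Fin n, QPrivate (R i) H e')).card : ℝ)
      + ((C.filter (fun H => ¬ ∀ i : Fin n, QPrivate (R i) H e')).card : ℝ) = (C.card : ℝ) := by
    exact_mod_cast hsplit
  rw [le_div_iff₀ hCpos']
  linarith
end

section
/- Fix ε > 0, β ∈ (0,1), an even integer d > 4(e^{2ε}−1)²·ln(2/β), and n ε-private randomizers R_1,…,R_n from [d] to a countable message set 𝒴. If H is sampled uniformly among subsets of [d] of size d/2, then with probability at least 5/6 over the choice of H: for every i ∈ [n], Pr[ R_i(U) ∈ Leak(v, H, R_i) ] < 6βn, where v = (e^{2ε}−1)·√((4/d)·ln(2/β)). -/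
set_option maxHeartbeats 1000000

open scoped Classical

/-- `probLeak R S H v` is `Pr[R(U_S) ∈ Leak(v, H, R)]`, the probability that a
sample from `R(U_S)` lands in the set of `v`-leaky messages w.r.t. `H, R`. -/
noncomputable def probLeak {d : ℕ} {Y : Type*} (R : Fin d → Y → ℝ)
    (S H : Finset (Fin d)) (v : ℝ) : ℝ :=
  ∑' y : Y, if leaky R H v y then probU R S y else 0

namespace Stmt6Aux

variable {ι : Type*}

/-- Elementary symmetric sum over `k`-subsets of `s`. -/
noncomputable def esum (w : ι → ℝ) (k : ℕ) (s : Finset ι) : ℝ :=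
  ∑ H ∈ s.powersetCard k, ∏ x ∈ H, w x

lemma esum_nonneg {w : ι → ℝ} (hw : ∀ x, 0 ≤ w x) (k : ℕ) (s : Finset ι) :
    0 ≤ esum w k s :=
  Finset.sum_nonneg fun H _ => Finset.prod_nonneg fun x _ => hw x

lemma esum_insert (w : ι → ℝ) {u : ι} {t : Finset ι} (hu : u ∉ t) (k : ℕ) :
    esum w (k+1) (insert u t) = esum w (k+1) t + w u * esum w k t := by
  classical
  unfold esum
  rw [Finset.powersetCard_succ_insert hu, Finset.sum_union, Finset.sum_image, Finset.mul_sum]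
  · congr 1
    refine Finset.sum_congr rfl fun H hH => ?_
    rw [Finset.mem_powersetCard] at hH
    rw [Finset.prod_insert (fun hc => hu (hH.1 hc))]
  · intro H1 h1 H2 h2 he
    rw [Finset.mem_coe, Finset.mem_powersetCard] at h1 h2
    have e1 : u ∉ H1 := fun hc => hu (h1.1 hc)
    have e2 : u ∉ H2 := fun hc => hu (h2.1 hc)
    have := congrArg (Finset.erase · u) he
    simpa [Finset.erase_insert e1, Finset.erase_insert e2] using this
  · rw [Finset.disjoint_left]
    intro H h1 h2
    rw [Finset.mem_powersetCard] at h1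
    obtain ⟨H', hH', rfl⟩ := Finset.mem_image.1 h2
    exact (fun hc => hu (h1.1 hc)) (Finset.mem_insert_self u H')

lemma esum_erase_sum (w : ι → ℝ) {k : ℕ} {t : Finset ι} :
    ∑ v ∈ t, esum w k (t.erase v) = ((t.card - k : ℕ) : ℝ) * esum w k t := by
  classical
  unfold esum
  rw [Finset.mul_sum]
  have swap : ∑ v ∈ t, ∑ H ∈ (t.erase v).powersetCard k, ∏ x ∈ H, w x
      = ∑ H ∈ t.powersetCard k, ∑ v ∈ t \ H, ∏ x ∈ H, w x := by
    refine Finset.sum_comm' ?_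
    intro v H
    simp only [Finset.mem_powersetCard, Finset.mem_sdiff]
    constructor
    · rintro ⟨hv, hHsub, hcard⟩
      exact ⟨⟨hv, fun hvH => (Finset.mem_erase.1 (hHsub hvH)).1 rfl⟩,
        (hHsub.trans (Finset.erase_subset _ _)), hcard⟩
    · rintro ⟨⟨hv, hvH⟩, hHsub, hcard⟩
      refine ⟨hv, fun x hx => Finset.mem_erase.2 ⟨?_, hHsub hx⟩, hcard⟩
      rintro rfl; exact hvH hx
  rw [swap]
  refine Finset.sum_congr rfl fun H hH => ?_
  rw [Finset.mem_powersetCard] at hH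
  rw [Finset.sum_const, Finset.card_sdiff_of_subset hH.1, hH.2, nsmul_eq_mul]

lemma esum_mul_erase_sum (w : ι → ℝ) (k : ℕ) (t : Finset ι) :
    ∑ v ∈ t, w v * esum w k (t.erase v) = ((k+1 : ℕ) : ℝ) * esum w (k+1) t := by
  classical
  unfold esum
  have rhs : ((k+1 : ℕ) : ℝ) * ∑ H ∈ t.powersetCard (k+1), ∏ x ∈ H, w x
      = ∑ H ∈ t.powersetCard (k+1), ∑ v ∈ H, ∏ x ∈ H, w x := by
    rw [Finset.mul_sum]
    refine Finset.sum_congr rfl fun H hH => ?_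
    rw [Finset.mem_powersetCard] at hH
    rw [Finset.sum_const, hH.2, nsmul_eq_mul]
  rw [rhs]
  have lhs : ∑ v ∈ t, w v * ∑ H ∈ (t.erase v).powersetCard k, ∏ x ∈ H, w x
      = ∑ v ∈ t, ∑ H ∈ (t.erase v).powersetCard k, ∏ x ∈ insert v H, w x := by
    refine Finset.sum_congr rfl fun v hv => ?_
    rw [Finset.mul_sum]
    refine Finset.sum_congr rfl fun H hH => ?_
    rw [Finset.mem_powersetCard] at hH
    rw [Finset.prod_insert (fun hc => (Finset.mem_erase.1 (hH.1 hc)).1 rfl)]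
  rw [lhs]
  rw [Finset.sum_sigma' t (fun v => (t.erase v).powersetCard k)
        (fun v H => ∏ x ∈ insert v H, w x),
      Finset.sum_sigma' (t.powersetCard (k+1)) (fun H => H)
        (fun H v => ∏ x ∈ H, w x)]
  refine Finset.sum_nbij' (fun p => ⟨insert p.1 p.2, p.1⟩) (fun p => ⟨p.2, p.1.erase p.2⟩)
      ?_ ?_ ?_ ?_ ?_
  · rintro ⟨v, H⟩ hp
    simp only [Finset.mem_sigma, Finset.mem_powersetCard] at hp ⊢
    obtain ⟨hv, hHsub, hcard⟩ := hp
    have hvH : v ∉ H := fun hc => (Finset.mem_erase.1 (hHsub hc)).1 rfl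
    refine ⟨⟨Finset.insert_subset hv (hHsub.trans (Finset.erase_subset _ _)), ?_⟩,
      Finset.mem_insert_self _ _⟩
    rw [Finset.card_insert_of_notMem hvH, hcard]
  · rintro ⟨H, v⟩ hp
    simp only [Finset.mem_sigma, Finset.mem_powersetCard] at hp ⊢
    obtain ⟨⟨hHsub, hcard⟩, hv⟩ := hp
    refine ⟨hHsub hv, ?_, ?_⟩
    · exact fun x hx => Finset.mem_erase.2
        ⟨(Finset.mem_erase.1 hx).1, hHsub (Finset.mem_erase.1 hx).2⟩
    · rw [Finset.card_erase_of_mem hv, hcard]; rfl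
  · rintro ⟨v, H⟩ hp
    simp only [Finset.mem_sigma, Finset.mem_powersetCard] at hp
    have hvH : v ∉ H := fun hc => (Finset.mem_erase.1 (hp.2.1 hc)).1 rfl
    simp [Finset.erase_insert hvH]
  · rintro ⟨H, v⟩ hp
    simp only [Finset.mem_sigma, Finset.mem_powersetCard] at hp
    simp [Finset.insert_erase hp.2]
  · rintro ⟨v, H⟩ _; rfl

lemma esum_rec (w : ι → ℝ) {m : ℕ} {s : Finset ι} (hs : s.card = 2*(m+1))
    {u : ι} (hu : u ∈ s) :
    ((m+1 : ℕ) : ℝ) * esum w (m+1) s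
      = ∑ v ∈ s.erase u, (w u + w v) * esum w m ((s.erase u).erase v) := by
  classical
  set t := s.erase u with ht
  have htc : t.card = 2*m+1 := by
    rw [ht, Finset.card_erase_of_mem hu, hs]; omega
  have hsplit : ∑ v ∈ t, (w u + w v) * esum w m (t.erase v)
      = w u * ∑ v ∈ t, esum w m (t.erase v) + ∑ v ∈ t, w v * esum w m (t.erase v) := by
    rw [Finset.mul_sum, ← Finset.sum_add_distrib]
    exact Finset.sum_congr rfl fun v _ => by ring
  rw [hsplit, esum_erase_sum, esum_mul_erase_sum, htc]
  have h1 : (2*m+1 - m : ℕ) = m+1 := by omega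
  rw [h1]
  have h2 : s = insert u t := by rw [ht, Finset.insert_erase hu]
  rw [h2, esum_insert w (Finset.notMem_erase u s) m]
  ring

lemma pair_exp_bound {p q c : ℝ} (hp : |p| ≤ c) (hq : |q| ≤ c) :
    Real.exp p + Real.exp q ≤ 2 * Real.exp ((p+q)/2 + c^2/2) := by
  have ea : Real.exp ((p+q)/2) * Real.exp ((p-q)/2) = Real.exp p := by
    rw [← Real.exp_add]; ring_nf
  have eb : Real.exp ((p+q)/2) * Real.exp (-((p-q)/2)) = Real.exp q := by
    rw [← Real.exp_add]; ring_nf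
  have key : Real.exp p + Real.exp q = 2 * Real.exp ((p+q)/2) * Real.cosh ((p-q)/2) := by
    rw [Real.cosh_eq]
    linear_combination -ea - eb
  rw [key]
  have h1 : Real.cosh ((p-q)/2) ≤ Real.exp (((p-q)/2)^2/2) := Real.cosh_le_exp_half_sq _
  have h2 : ((p-q)/2)^2/2 ≤ c^2/2 := by
    have habs : |p - q| ≤ 2*c := by
      calc |p - q| ≤ |p| + |q| := abs_sub _ _
        _ ≤ 2*c := by linarith
    have := sq_abs (p - q)
    nlinarith [abs_nonneg (p-q), sq_nonneg (|p-q| - 2*c)]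
  calc 2 * Real.exp ((p+q)/2) * Real.cosh ((p-q)/2)
      ≤ 2 * Real.exp ((p+q)/2) * Real.exp (c^2/2) := by
        have := (h1.trans (Real.exp_le_exp.2 h2))
        nlinarith [Real.exp_pos ((p+q)/2)]
    _ = 2 * Real.exp ((p+q)/2 + c^2/2) := by rw [Real.exp_add]; ring

lemma choose_id (m : ℕ) :
    (m+1) * ((2*(m+1)).choose (m+1)) = 2 * (2*m+1) * ((2*m).choose m) := by
  apply Nat.eq_of_mul_eq_mul_right (Nat.succ_pos m)
  have e1 : (2*(m+1)).choose (m+1) * (m+1) = (2*m+2) * ((2*m+1).choose m) := by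
    have h := Nat.add_one_mul_choose_eq (2*m+1) m
    have h2 : 2*(m+1) = 2*m+1+1 := by omega
    have h3 : 2*m+1+1 = 2*m+2 := by omega
    rw [h2]
    rw [h3] at h
    exact h.symm
  have e2 : (2*m+1).choose (m+1) * (m+1) = (2*m+1) * ((2*m).choose m) := by
    have h := Nat.add_one_mul_choose_eq (2*m) m
    have h3 : 2*m+1 = 2*m+1 := rfl
    exact h.symm
  have e3 : (2*m+1).choose (m+1) = (2*m+1).choose m := by
    rw [← Nat.choose_symm (by omega : m+1 ≤ 2*m+1)]
    congr 1; omega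
  calc (m+1) * ((2*(m+1)).choose (m+1)) * (m+1)
      = (m+1) * ((2*(m+1)).choose (m+1) * (m+1)) := by ring
    _ = (m+1) * ((2*m+2) * ((2*m+1).choose m)) := by rw [e1]
    _ = (2*m+2) * ((2*m+1).choose m * (m+1)) := by ring
    _ = (2*m+2) * ((2*m+1).choose (m+1) * (m+1)) := by rw [e3]
    _ = (2*m+2) * ((2*m+1) * ((2*m).choose m)) := by rw [e2]
    _ = 2 * (2*m+1) * ((2*m).choose m) * (m+1) := by ring

lemma key (c : ℝ) (hc : 0 ≤ c) :
    ∀ (m : ℕ) (s : Finset ι) (B : ι → ℝ), s.card = 2*m → (∀ x ∈ s, |B x| ≤ c) →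
    esum (fun x => Real.exp (B x)) m s
      ≤ ((2*m).choose m : ℝ) * Real.exp ((∑ x ∈ s, B x)/2 + m*(c^2/2)) := by
  intro m
  induction m with
  | zero =>
    intro s B hs hB
    have hse : s = ∅ := Finset.card_eq_zero.1 (by simpa using hs)
    subst hse
    simp [esum, Finset.powersetCard_zero]
  | succ m ih =>
    intro s B hs hB
    have hsne : s.Nonempty := by
      rw [← Finset.card_pos, hs]; omega
    obtain ⟨u, hu⟩ := hsne
    set w : ι → ℝ := fun x => Real.exp (B x) with hw
    have hwpos : ∀ x, 0 ≤ w x := fun x => (Real.exp_pos _).le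
    set t := s.erase u with htdef
    have htc : t.card = 2*m+1 := by
      rw [htdef, Finset.card_erase_of_mem hu, hs]; omega
    have hrec := esum_rec w (by omega : s.card = 2*(m+1)) hu
    -- bound each term
    have hterm : ∀ v ∈ t, (w u + w v) * esum w m (t.erase v)
        ≤ 2 * ((2*m).choose m : ℝ)
          * Real.exp ((∑ x ∈ s, B x)/2 + (m+1)*(c^2/2)) := by
      intro v hv
      have hvs : v ∈ s := Finset.mem_of_mem_erase hv
      have hcardtv : (t.erase v).card = 2*m := by
        rw [Finset.card_erase_of_mem hv, htc]; omega
      have hBtv : ∀ x ∈ t.erase v, |B x| ≤ c := fun x hx =>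
        hB x (Finset.mem_of_mem_erase (Finset.mem_of_mem_erase hx))
      have h1 : esum w m (t.erase v)
          ≤ ((2*m).choose m : ℝ) * Real.exp ((∑ x ∈ t.erase v, B x)/2 + m*(c^2/2)) :=
        ih (t.erase v) B hcardtv hBtv
      have h2 : w u + w v ≤ 2 * Real.exp ((B u + B v)/2 + c^2/2) :=
        pair_exp_bound (hB u hu) (hB v hvs)
      have hsum : ∑ x ∈ t.erase v, B x = (∑ x ∈ s, B x) - B u - B v := by
        have e1 : ∑ x ∈ t.erase v, B x + B v = ∑ x ∈ t, B x :=
          Finset.sum_erase_add t B hv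
        have e2 : ∑ x ∈ t, B x + B u = ∑ x ∈ s, B x :=
          Finset.sum_erase_add s B hu
        linarith
      calc (w u + w v) * esum w m (t.erase v)
          ≤ (2 * Real.exp ((B u + B v)/2 + c^2/2))
              * (((2*m).choose m : ℝ) * Real.exp ((∑ x ∈ t.erase v, B x)/2 + m*(c^2/2))) := by
            apply mul_le_mul h2 h1 (esum_nonneg hwpos _ _)
            positivity
        _ = 2 * ((2*m).choose m : ℝ)
              * (Real.exp ((B u + B v)/2 + c^2/2)
                 * Real.exp ((∑ x ∈ t.erase v, B x)/2 + m*(c^2/2))) := by ring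
        _ = 2 * ((2*m).choose m : ℝ)
              * Real.exp ((∑ x ∈ s, B x)/2 + (m+1)*(c^2/2)) := by
            rw [← Real.exp_add, hsum]
            congr 2
            ring
    have hsumbound : ((m+1 : ℕ) : ℝ) * esum w (m+1) s
        ≤ (2*m+1 : ℝ) * (2 * ((2*m).choose m : ℝ)
            * Real.exp ((∑ x ∈ s, B x)/2 + (m+1)*(c^2/2))) := by
      rw [hrec]
      calc ∑ v ∈ t, (w u + w v) * esum w m (t.erase v)
          ≤ ∑ v ∈ t, 2 * ((2*m).choose m : ℝ)
              * Real.exp ((∑ x ∈ s, B x)/2 + (m+1)*(c^2/2)) :=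
            Finset.sum_le_sum hterm
        _ = (t.card : ℝ) * (2 * ((2*m).choose m : ℝ)
              * Real.exp ((∑ x ∈ s, B x)/2 + (m+1)*(c^2/2))) := by
            rw [Finset.sum_const, nsmul_eq_mul]
        _ = _ := by rw [htc]; push_cast; ring
    have hchoose : ((m+1 : ℕ) : ℝ) * ((2*(m+1)).choose (m+1) : ℝ)
        = 2 * (2*m+1 : ℝ) * ((2*m).choose m : ℝ) := by
      have := choose_id m
      exact_mod_cast congrArg (fun x : ℕ => (x : ℝ)) this
    have hmpos : (0:ℝ) < ((m+1 : ℕ) : ℝ) := by positivity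
    rw [← mul_le_mul_iff_right₀ hmpos]
    calc ((m+1 : ℕ) : ℝ) * esum w (m+1) s
        ≤ (2*m+1 : ℝ) * (2 * ((2*m).choose m : ℝ)
            * Real.exp ((∑ x ∈ s, B x)/2 + (m+1)*(c^2/2))) := hsumbound
      _ = ((m+1 : ℕ) : ℝ) * (((2*(m+1)).choose (m+1) : ℝ)
            * Real.exp ((∑ x ∈ s, B x)/2 + ((m+1:ℕ):ℝ)*(c^2/2))) := by
          push_cast at hchoose ⊢
          linear_combination -Real.exp ((∑ x ∈ s, B x)/2 + ((m:ℝ)+1)*(c^2/2)) * hchoose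

lemma chernoff {d m : ℕ} (hdm : d = 2*m) (hm : 0 < m) (b : Fin d → ℝ) {c s₀ : ℝ}
    (hc : 0 < c) (hb : ∀ x, |b x| ≤ c) (hsum : ∑ x, b x = 0) (hs : 0 < s₀) :
    (((Finset.powersetCard m (Finset.univ : Finset (Fin d))).filter
        (fun H => s₀ ≤ ∑ x ∈ H, b x)).card : ℝ)
      ≤ (d.choose m : ℝ) * Real.exp (-(s₀^2/((d:ℝ)*c^2))) := by
  classical
  set lam : ℝ := s₀ / ((m:ℝ) * c^2) with hlam
  have hmpos : (0:ℝ) < (m:ℝ) := by exact_mod_cast hm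
  have hlampos : 0 < lam := by
    apply div_pos hs; positivity
  set PC := (Finset.powersetCard m (Finset.univ : Finset (Fin d))) with hPC
  have step1 : ((PC.filter (fun H => s₀ ≤ ∑ x ∈ H, b x)).card : ℝ)
      ≤ ∑ H ∈ PC, Real.exp (lam * (∑ x ∈ H, b x) - lam * s₀) := by
    rw [Finset.card_eq_sum_ones, Nat.cast_sum]
    calc (∑ _H ∈ PC.filter (fun H => s₀ ≤ ∑ x ∈ H, b x), ((1:ℕ):ℝ))
        ≤ ∑ H ∈ PC.filter (fun H => s₀ ≤ ∑ x ∈ H, b x),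
            Real.exp (lam * (∑ x ∈ H, b x) - lam * s₀) := by
          apply Finset.sum_le_sum
          intro H hH
          rw [Finset.mem_filter] at hH
          have : (0:ℝ) ≤ lam * (∑ x ∈ H, b x) - lam * s₀ := by
            have := mul_le_mul_of_nonneg_left hH.2 hlampos.le
            linarith
          simpa using Real.one_le_exp this
      _ ≤ ∑ H ∈ PC, Real.exp (lam * (∑ x ∈ H, b x) - lam * s₀) := by
          apply Finset.sum_le_sum_of_subset_of_nonneg (Finset.filter_subset _ _)
          intro H _ _; positivity
  have step2 : ∑ H ∈ PC, Real.exp (lam * (∑ x ∈ H, b x) - lam * s₀)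
      = Real.exp (-(lam * s₀)) * esum (fun x => Real.exp (lam * b x)) m Finset.univ := by
    rw [esum, Finset.mul_sum]
    refine Finset.sum_congr rfl fun H _ => ?_
    rw [← Real.exp_sum, ← Real.exp_add]
    congr 1
    rw [Finset.mul_sum]
    ring
  have hcard : (Finset.univ : Finset (Fin d)).card = 2*m := by
    simp [hdm]
  have step3 : esum (fun x => Real.exp (lam * b x)) m Finset.univ
      ≤ ((2*m).choose m : ℝ) * Real.exp ((∑ x : Fin d, lam * b x)/2 + m*((lam*c)^2/2)) :=
    key (lam*c) (by positivity) m Finset.univ (fun x => lam * b x) hcard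
      (fun x _ => by
        rw [abs_mul, abs_of_pos hlampos]
        exact mul_le_mul_of_nonneg_left (hb x) hlampos.le)
  have hBsum : (∑ x : Fin d, lam * b x) = 0 := by
    rw [← Finset.mul_sum, hsum, mul_zero]
  have hexp : -(lam * s₀) + ((0:ℝ)/2 + m*((lam*c)^2/2)) = -(s₀^2/((d:ℝ)*c^2)) := by
    rw [hlam, hdm]
    push_cast
    field_simp
    ring
  calc ((PC.filter (fun H => s₀ ≤ ∑ x ∈ H, b x)).card : ℝ)
      ≤ Real.exp (-(lam * s₀)) * esum (fun x => Real.exp (lam * b x)) m Finset.univ := by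
        rw [← step2]; exact step1
    _ ≤ Real.exp (-(lam * s₀)) * (((2*m).choose m : ℝ)
          * Real.exp ((∑ x : Fin d, lam * b x)/2 + m*((lam*c)^2/2))) := by
        apply mul_le_mul_of_nonneg_left step3 (Real.exp_pos _).le
    _ = ((2*m).choose m : ℝ) * (Real.exp (-(lam * s₀)) * Real.exp ((0:ℝ)/2 + m*((lam*c)^2/2))) := by
        rw [hBsum]; ring
    _ = ((2*m).choose m : ℝ) * Real.exp (-(lam * s₀) + ((0:ℝ)/2 + m*((lam*c)^2/2))) := by
        rw [← Real.exp_add]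
    _ = (d.choose m : ℝ) * Real.exp (-(s₀^2/((d:ℝ)*c^2))) := by
        rw [hexp, hdm]

lemma count_leaky {Y : Type*} {d m : ℕ} (hdm : d = 2*m) (hm : 0 < m)
    {ε β : ℝ} (hε : 0 < ε) (hβ0 : 0 < β) (hβ1 : β < 1)
    (hd2 : 4 * (Real.exp (2 * ε) - 1) ^ 2 * Real.log (2 / β) < (d : ℝ))
    (Q : Fin d → Y → ℝ) (y : Y) (h0 : ∀ x, 0 ≤ Q x y)
    (hpriv : ∀ x x', Q x y ≤ Real.exp ε * Q x' y) (hApos : 0 < probU Q Finset.univ y) :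
    (((Finset.powersetCard m (Finset.univ : Finset (Fin d))).filter
        (fun H => leaky Q H
          ((Real.exp (2 * ε) - 1) * Real.sqrt (4 / (d : ℝ) * Real.log (2 / β))) y)).card : ℝ)
      ≤ β * (d.choose m : ℝ) := by
  classical
  set a : Fin d → ℝ := fun x => Q x y with ha
  set A : ℝ := probU Q Finset.univ y with hA
  set L : ℝ := Real.log (2 / β) with hL
  set v : ℝ := (Real.exp (2 * ε) - 1) * Real.sqrt (4 / (d : ℝ) * L) with hv
  have hdpos : 0 < d := by omega
  have hdR : (0:ℝ) < d := by exact_mod_cast hdpos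
  have hmR : (0:ℝ) < (m:ℝ) := by exact_mod_cast hm
  have hdm' : (d:ℝ) = 2*(m:ℝ) := by rw [hdm]; push_cast; ring
  have hAeq : A = (∑ x, a x) / (d:ℝ) := by
    rw [hA, probU]; simp [ha]
  have hApos' : (0:ℝ) < A := hApos
  have hsuma : 0 < ∑ x, a x := by
    by_contra h
    push_neg at h
    have : A ≤ 0 := by
      rw [hAeq]; exact div_nonpos_of_nonpos_of_nonneg h hdR.le
    linarith
  have hexpε : 1 < Real.exp ε := by
    rw [← Real.exp_zero]; exact Real.exp_lt_exp.2 hε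
  have hapos : ∀ x, 0 < a x := by
    intro x
    rcases lt_or_eq_of_le (h0 x) with h | h
    · exact h
    · exfalso
      have hz : ∀ x', a x' ≤ 0 := by
        intro x'
        have : a x' ≤ Real.exp ε * a x := hpriv x' x
        have hx0 : a x = 0 := h.symm
        rw [hx0, mul_zero] at this
        exact this
      have : ∑ x, a x ≤ 0 := Finset.sum_nonpos fun x' _ => hz x'
      linarith
  have hub : ∀ x, a x ≤ Real.exp ε * A := by
    intro x
    have h1 : (d:ℝ) * a x ≤ Real.exp ε * ∑ x', a x' := by
      calc (d:ℝ) * a x = ∑ _x' : Fin d, a x := by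
            rw [Finset.sum_const, Finset.card_univ, Fintype.card_fin, nsmul_eq_mul]
        _ ≤ ∑ x', Real.exp ε * a x' := Finset.sum_le_sum fun x' _ => hpriv x x'
        _ = Real.exp ε * ∑ x', a x' := by rw [Finset.mul_sum]
    rw [hAeq, ← mul_div_assoc, le_div_iff₀ hdR]
    linarith
  have hlb : ∀ x, A ≤ Real.exp ε * a x := by
    intro x
    have h1 : ∑ x', a x' ≤ (d:ℝ) * (Real.exp ε * a x) := by
      calc ∑ x', a x' ≤ ∑ _x' : Fin d, Real.exp ε * a x :=
            Finset.sum_le_sum fun x' _ => hpriv x' x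
        _ = (d:ℝ) * (Real.exp ε * a x) := by
            rw [Finset.sum_const, Finset.card_univ, Fintype.card_fin, nsmul_eq_mul]
    rw [hAeq, div_le_iff₀ hdR]
    linarith
  set c : ℝ := (Real.exp ε - 1) * A with hc
  have hcpos : 0 < c := by
    rw [hc]; apply mul_pos _ hApos'; linarith
  set b : Fin d → ℝ := fun x => a x - A with hb
  have hbsum : ∑ x, b x = 0 := by
    simp only [hb]
    rw [Finset.sum_sub_distrib, Finset.sum_const, Finset.card_univ, Fintype.card_fin,
      nsmul_eq_mul, hAeq]
    field_simp
    ring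
  have hbabs : ∀ x, |b x| ≤ c := by
    intro x
    have hbx : b x = a x - A := rfl
    rw [abs_le, hbx]
    constructor
    · have h5 : Real.exp (-ε) * A ≤ a x := by
        rw [Real.exp_neg, inv_mul_le_iff₀ (by positivity)]
        exact hlb x
      have h2 : 2 ≤ Real.exp ε + Real.exp (-ε) := by
        rw [Real.exp_neg]
        have hinv : Real.exp ε * (Real.exp ε)⁻¹ = 1 :=
          mul_inv_cancel₀ (ne_of_gt (Real.exp_pos ε))
        nlinarith [sq_nonneg (Real.exp ε - 1), Real.exp_pos ε, hinv]
      rw [hc]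
      nlinarith [hApos']
    · have := hub x
      rw [hc]
      nlinarith
  have hL0 : 0 < L := by
    rw [hL]
    apply Real.log_pos
    rw [lt_div_iff₀ hβ0]; linarith
  have he2 : 1 < Real.exp (2*ε) := by
    rw [← Real.exp_zero]; exact Real.exp_lt_exp.2 (by linarith)
  have hvpos : 0 < v := by
    rw [hv]
    apply mul_pos (by linarith)
    apply Real.sqrt_pos.2
    positivity
  have hv2 : v^2 = (Real.exp (2*ε) - 1)^2 * (4/(d:ℝ) * L) := by
    rw [hv, mul_pow, Real.sq_sqrt (by positivity)]
  have hvlt1 : v < 1 := by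
    have h1 : v^2 < 1 := by
      rw [hv2, show (Real.exp (2*ε) - 1)^2 * (4/(d:ℝ)*L)
          = (4*(Real.exp (2*ε) - 1)^2*L)/(d:ℝ) from by ring, div_lt_one hdR]
      exact hd2
    nlinarith
  set s₀ : ℝ := (m:ℝ) * v * A / 2 with hs₀
  have hs₀pos : 0 < s₀ := by rw [hs₀]; positivity
  clear_value a A L v c b s₀
  have hsubset : (Finset.powersetCard m (Finset.univ : Finset (Fin d))).filter
        (fun H => leaky Q H v y)
      ⊆ ((Finset.powersetCard m (Finset.univ : Finset (Fin d))).filter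
          (fun H => s₀ ≤ ∑ x ∈ H, b x))
        ∪ ((Finset.powersetCard m (Finset.univ : Finset (Fin d))).filter
          (fun H => s₀ ≤ ∑ x ∈ H, (-b) x)) := by
    intro H hH
    rw [Finset.mem_filter] at hH
    obtain ⟨hHPC, hHleaky⟩ := hH
    have hHcard : H.card = m := (Finset.mem_powersetCard.1 hHPC).2
    have hHne : H.Nonempty := by rw [← Finset.card_pos, hHcard]; exact hm
    have hHsum : 0 < ∑ x ∈ H, a x :=
      Finset.sum_pos (fun x _ => hapos x) hHne
    have hPU : probU Q H y = (∑ x ∈ H, a x) / (m:ℝ) := by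
      rw [probU, hHcard]
      simp only [ha]
    have hρpos : 0 < probU Q H y / A := by
      rw [hPU]
      exact div_pos (div_pos hHsum hmR) hApos'
    have hT : ∑ x ∈ H, b x = (∑ x ∈ H, a x) - (m:ℝ) * A := by
      simp only [hb]
      rw [Finset.sum_sub_distrib, Finset.sum_const, hHcard, nsmul_eq_mul]
    rw [leaky] at hHleaky
    rw [← hA] at hHleaky
    rw [Finset.mem_union, Finset.mem_filter, Finset.mem_filter]
    have h1v : (0:ℝ) < 1 + v := by linarith
    rcases lt_abs.1 hHleaky with hcase | hcase
    · left
      refine ⟨hHPC, ?_⟩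
      have h1 : Real.exp v < probU Q H y / A := by
        calc Real.exp v < Real.exp (Real.log (probU Q H y / A)) := Real.exp_lt_exp.2 hcase
          _ = probU Q H y / A := Real.exp_log hρpos
      have h2 : 1 + v ≤ Real.exp v := by linarith [Real.add_one_le_exp v]
      have h3 : (1 + v) * A < probU Q H y := by
        rw [← lt_div_iff₀ hApos']
        linarith
      rw [hPU, lt_div_iff₀ hmR] at h3
      rw [hT, hs₀]
      nlinarith [mul_pos (mul_pos hmR hvpos) hApos']
    · right
      refine ⟨hHPC, ?_⟩
      have h1 : probU Q H y / A < Real.exp (-v) := by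
        have hlog : Real.log (probU Q H y / A) < -v := by linarith
        calc probU Q H y / A = Real.exp (Real.log (probU Q H y / A)) :=
              (Real.exp_log hρpos).symm
          _ < Real.exp (-v) := Real.exp_lt_exp.2 hlog
      have h2 : Real.exp (-v) ≤ 1/(1+v) := by
        rw [Real.exp_neg, one_div]
        exact inv_anti₀ h1v (by linarith [Real.add_one_le_exp v])
      have h3 : probU Q H y < A / (1+v) := by
        rw [div_lt_iff₀ hApos'] at h1
        rw [lt_div_iff₀ h1v]
        calc probU Q H y * (1+v) < Real.exp (-v) * A * (1+v) :=
              mul_lt_mul_of_pos_right h1 h1v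
          _ ≤ 1/(1+v) * A * (1+v) :=
              mul_le_mul_of_nonneg_right (mul_le_mul_of_nonneg_right h2 hApos'.le) h1v.le
          _ = A := by field_simp
      rw [hPU, div_lt_div_iff₀ hmR h1v] at h3
      have h4 : ∑ x ∈ H, (-b) x = (m:ℝ) * A - ∑ x ∈ H, a x := by
        have : ∀ x, (-b) x = A - a x := fun x => by simp [hb]
        rw [Finset.sum_congr rfl fun x _ => this x]
        rw [Finset.sum_sub_distrib, Finset.sum_const, hHcard, nsmul_eq_mul]
      rw [h4, hs₀]
      nlinarith [hHsum, mul_pos hmR hApos']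
  have hcount1 := chernoff hdm hm b hcpos hbabs hbsum hs₀pos
  have hbabs' : ∀ x, |(-b) x| ≤ c := fun x => by
    rw [Pi.neg_apply, abs_neg]; exact hbabs x
  have hbsum' : ∑ x, (-b) x = 0 := by
    simp only [Pi.neg_apply]
    rw [Finset.sum_neg_distrib, hbsum, neg_zero]
  have hcount2 := chernoff hdm hm (-b) hcpos hbabs' hbsum' hs₀pos
  have hfac : Real.exp (2*ε) - 1 = (Real.exp ε - 1) * (Real.exp ε + 1) := by
    rw [two_mul, Real.exp_add]; ring
  have hexp_le : Real.exp (-(s₀^2/((d:ℝ)*c^2))) ≤ β/2 := by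
    have hv2' : v^2 = 2*(Real.exp (2*ε)-1)^2 * L / (m:ℝ) := by
      rw [hv2, hdm']
      field_simp
      ring
    have heq2 : s₀^2 = (m:ℝ)*A^2*(Real.exp ε-1)^2*(Real.exp ε+1)^2*L/2 := by
      have expand : s₀^2 = (m:ℝ)^2 * A^2 * v^2 / 4 := by rw [hs₀]; ring
      rw [expand, hv2', hfac]
      field_simp
      ring
    have h4 : (4:ℝ) ≤ (Real.exp ε + 1)^2 := by nlinarith
    have hge : L ≤ s₀^2/((d:ℝ)*c^2) := by
      rw [le_div_iff₀ (by positivity : (0:ℝ) < (d:ℝ)*c^2), heq2, hc, hdm', mul_pow]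
      have hnn : 0 ≤ (m:ℝ)*A^2*(Real.exp ε-1)^2*L :=
        mul_nonneg (mul_nonneg (mul_nonneg hmR.le (sq_nonneg A)) (sq_nonneg _)) hL0.le
      have h5 : (0:ℝ) ≤ (Real.exp ε + 1)^2 - 4 := by linarith
      have h6 : 0 ≤ ((m:ℝ)*A^2*(Real.exp ε-1)^2*L) * ((Real.exp ε + 1)^2 - 4) :=
        mul_nonneg hnn h5
      linarith [h6]
    calc Real.exp (-(s₀^2/((d:ℝ)*c^2))) ≤ Real.exp (-L) := Real.exp_le_exp.2 (by linarith)
      _ = β/2 := by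
        rw [hL, Real.exp_neg, Real.exp_log (by positivity : (0:ℝ) < 2/β), inv_div]
  calc (((Finset.powersetCard m (Finset.univ : Finset (Fin d))).filter
        (fun H => leaky Q H v y)).card : ℝ)
      ≤ ((((Finset.powersetCard m (Finset.univ : Finset (Fin d))).filter
          (fun H => s₀ ≤ ∑ x ∈ H, b x))
        ∪ ((Finset.powersetCard m (Finset.univ : Finset (Fin d))).filter
          (fun H => s₀ ≤ ∑ x ∈ H, (-b) x))).card : ℝ) :=
        Nat.cast_le.2 (Finset.card_le_card hsubset)
    _ ≤ (((Finset.powersetCard m (Finset.univ : Finset (Fin d))).filter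
          (fun H => s₀ ≤ ∑ x ∈ H, b x)).card : ℝ)
        + (((Finset.powersetCard m (Finset.univ : Finset (Fin d))).filter
          (fun H => s₀ ≤ ∑ x ∈ H, (-b) x)).card : ℝ) := by
        exact_mod_cast Finset.card_union_le _ _
    _ ≤ (d.choose m : ℝ) * Real.exp (-(s₀^2/((d:ℝ)*c^2)))
        + (d.choose m : ℝ) * Real.exp (-(s₀^2/((d:ℝ)*c^2))) := add_le_add hcount1 hcount2
    _ = 2 * Real.exp (-(s₀^2/((d:ℝ)*c^2))) * (d.choose m : ℝ) := by ring
    _ ≤ 2 * (β/2) * (d.choose m : ℝ) := by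
        have hnn : (0:ℝ) ≤ (d.choose m : ℝ) := Nat.cast_nonneg _
        nlinarith [hexp_le]
    _ = β * (d.choose m : ℝ) := by ring

end Stmt6Aux

open Stmt6Aux in
/-- for `ε > 0`, `β ∈ (0,1)`, even `d > 4(e^{2ε}-1)² ln(2/β)`, and `n`
`ε`-private randomizers `R_1,…,R_n` from `[d]` to a countable `𝒴`: if `H` is
uniform among size-`d/2` subsets of `[d]`, then with probability at least `5/6`
over `H`, for every `i ∈ [n]`,
`Pr[R_i(U) ∈ Leak((e^{2ε}-1)√((4/d) ln(2/β)), H, R_i)] < 6βn`. -/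
theorem stmt_6 {Y : Type*} [Countable Y] (ε β : ℝ) (n d : ℕ)
    (hε : 0 < ε) (hβ : β ∈ Set.Ioo (0 : ℝ) 1) (hd : Even d)
    (hd2 : 4 * (Real.exp (2 * ε) - 1) ^ 2 * Real.log (2 / β) < (d : ℝ))
    (R : Fin n → Fin d → Y → ℝ)
    (hR0 : ∀ i x y, 0 ≤ R i x y) (hR1 : ∀ i x, ∑' y, R i x y = 1)
    (hpriv : ∀ i x x' y, R i x y ≤ Real.exp ε * R i x' y) :
    5 / 6 ≤
      (((Finset.powersetCard (d / 2) (Finset.univ : Finset (Fin d))).filter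
          (fun H => ∀ i : Fin n,
            probLeak (R i) Finset.univ H
              ((Real.exp (2 * ε) - 1) * Real.sqrt (4 / (d : ℝ) * Real.log (2 / β)))
              < 6 * β * n)).card : ℝ)
        / ((Finset.powersetCard (d / 2) (Finset.univ : Finset (Fin d))).card : ℝ) := by
  classical
  obtain ⟨hβ0, hβ1⟩ := hβ
  set v : ℝ := (Real.exp (2 * ε) - 1) * Real.sqrt (4 / (d : ℝ) * Real.log (2 / β)) with hv
  set m : ℕ := d / 2 with hmdef
  have hL0 : 0 < Real.log (2 / β) := by
    apply Real.log_pos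
    rw [lt_div_iff₀ hβ0]; linarith
  have he2 : 1 < Real.exp (2*ε) := by
    rw [← Real.exp_zero]; exact Real.exp_lt_exp.2 (by linarith)
  have hdR : (0:ℝ) < (d:ℝ) := by
    calc (0:ℝ) < 4 * (Real.exp (2 * ε) - 1) ^ 2 * Real.log (2 / β) := by
          apply mul_pos _ hL0
          nlinarith [he2]
      _ < (d:ℝ) := hd2
  have hdpos : 0 < d := by exact_mod_cast hdR
  have hdm : d = 2*m := by
    have := Nat.even_iff.1 hd
    omega
  have hm : 0 < m := by omega
  set PC := Finset.powersetCard m (Finset.univ : Finset (Fin d)) with hPC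
  have hNcard : PC.card = d.choose m := by
    rw [hPC, Finset.card_powersetCard, Finset.card_univ, Fintype.card_fin]
  have hNpos : 0 < PC.card := by
    rw [hNcard]
    exact Nat.choose_pos (by omega)
  set N : ℝ := (PC.card : ℝ) with hN
  have hNR : (0:ℝ) < N := by rw [hN]; exact_mod_cast hNpos
  -- trivial case n = 0
  rcases Nat.eq_zero_or_pos n with hn0 | hnpos
  · have heq : PC.filter (fun H => ∀ i : Fin n,
        probLeak (R i) Finset.univ H v < 6 * β * n) = PC := by
      apply Finset.filter_true_of_mem
      intro H _ i
      exact absurd i.2 (by omega)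
    rw [heq, hN, div_self (ne_of_gt (by exact_mod_cast hNpos : (0:ℝ) < (PC.card:ℝ)))]
    norm_num
  -- summability facts
  have hsumm : ∀ i x, Summable (fun y => R i x y) := by
    intro i x
    by_contra h
    have := tsum_eq_zero_of_not_summable h
    rw [hR1 i x] at this
    norm_num at this
  have hAdef : ∀ i y, probU (R i) Finset.univ y = (∑ x, R i x y) / (d:ℝ) := by
    intro i y
    rw [probU]; simp
  have hAnonneg : ∀ i y, 0 ≤ probU (R i) Finset.univ y := by
    intro i y
    rw [hAdef]
    apply div_nonneg _ hdR.le
    exact Finset.sum_nonneg fun x _ => hR0 i x y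
  have hAsumm : ∀ i, Summable (fun y => probU (R i) Finset.univ y) := by
    intro i
    have : Summable (fun y => (∑ x, R i x y) / (d:ℝ)) := by
      apply Summable.div_const
      exact summable_sum (fun x _ => hsumm i x)
    apply this.congr
    intro y
    rw [hAdef]
  have hAtsum : ∀ i, ∑' y, probU (R i) Finset.univ y = 1 := by
    intro i
    have h1 : ∑' y, probU (R i) Finset.univ y = ∑' y, (∑ x, R i x y) / (d:ℝ) := by
      apply tsum_congr; intro y; rw [hAdef]
    rw [h1, tsum_div_const, Summable.tsum_finsetSum (fun x _ => hsumm i x)]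
    rw [Finset.sum_congr rfl (fun x _ => hR1 i x)]
    rw [Finset.sum_const, Finset.card_univ, Fintype.card_fin, nsmul_eq_mul, mul_one]
    field_simp
  have hitesumm : ∀ i H, Summable (fun y =>
      if leaky (R i) H v y then probU (R i) Finset.univ y else 0) := by
    intro i H
    apply Summable.of_nonneg_of_le _ _ (hAsumm i)
    · intro y; split <;> simp [hAnonneg i y]
    · intro y; split
      · exact le_refl _
      · exact hAnonneg i y
  -- per-i bound on sum over PC
  have hSi : ∀ i : Fin n, ∑ H ∈ PC, probLeak (R i) Finset.univ H v ≤ β * N := by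
    intro i
    have hswap : ∑ H ∈ PC, probLeak (R i) Finset.univ H v
        = ∑' y : Y, ∑ H ∈ PC,
            (if leaky (R i) H v y then probU (R i) Finset.univ y else 0) := by
      simp only [probLeak]
      rw [Summable.tsum_finsetSum (fun H _ => hitesumm i H)]
    have hcnt : ∀ y : Y, ∑ H ∈ PC,
          (if leaky (R i) H v y then probU (R i) Finset.univ y else 0)
        = ((PC.filter (fun H => leaky (R i) H v y)).card : ℝ)
            * probU (R i) Finset.univ y := by
      intro y
      rw [← Finset.sum_filter, Finset.sum_const, nsmul_eq_mul]
    have hper : ∀ y : Y, ((PC.filter (fun H => leaky (R i) H v y)).card : ℝ)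
            * probU (R i) Finset.univ y
        ≤ (β * N) * probU (R i) Finset.univ y := by
      intro y
      rcases eq_or_lt_of_le (hAnonneg i y) with h | h
      · rw [← h, mul_zero, mul_zero]
      · apply mul_le_mul_of_nonneg_right _ h.le
        have hcl := count_leaky hdm hm hε hβ0 hβ1 hd2 (R i) y
          (fun x => hR0 i x y) (fun x x' => hpriv i x x' y) h
        rw [← hPC] at hcl
        rw [hN, hNcard]
        exact hcl
    have hsummL : Summable (fun y : Y => ((PC.filter (fun H => leaky (R i) H v y)).card : ℝ)
        * probU (R i) Finset.univ y) := by
      apply Summable.of_nonneg_of_le _ _ (((hAsumm i)).mul_left (β * N))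
      · intro y
        exact mul_nonneg (Nat.cast_nonneg _) (hAnonneg i y)
      · intro y
        exact hper y
    have hsummR : Summable (fun y : Y => (β * N) * probU (R i) Finset.univ y) :=
      (hAsumm i).mul_left (β * N)
    calc ∑ H ∈ PC, probLeak (R i) Finset.univ H v
        = ∑' y : Y, ((PC.filter (fun H => leaky (R i) H v y)).card : ℝ)
            * probU (R i) Finset.univ y := by
          rw [hswap]; exact tsum_congr hcnt
      _ ≤ ∑' y : Y, (β * N) * probU (R i) Finset.univ y :=
          Summable.tsum_le_tsum hper hsummL hsummR
      _ = (β * N) * ∑' y : Y, probU (R i) Finset.univ y := tsum_mul_left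
      _ = β * N := by rw [hAtsum i, mul_one]
  -- nonnegativity of probLeak
  have hPLnn : ∀ (i : Fin n) H, 0 ≤ probLeak (R i) Finset.univ H v := by
    intro i H
    apply tsum_nonneg
    intro y
    split
    · exact hAnonneg i y
    · exact le_refl 0
  set Bad := PC.filter (fun H => ¬ ∀ i : Fin n,
      probLeak (R i) Finset.univ H v < 6 * β * (n:ℝ)) with hBad
  have hXbound : ∀ H ∈ Bad, 6 * β * (n:ℝ)
      ≤ ∑ i : Fin n, probLeak (R i) Finset.univ H v := by
    intro H hH
    rw [hBad, Finset.mem_filter] at hH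
    push_neg at hH
    obtain ⟨i₀, hi₀⟩ := hH.2
    calc 6 * β * (n:ℝ) ≤ probLeak (R i₀) Finset.univ H v := hi₀
      _ ≤ ∑ i : Fin n, probLeak (R i) Finset.univ H v :=
        Finset.single_le_sum (fun i _ => hPLnn i H) (Finset.mem_univ i₀)
  have htotal : ∑ H ∈ PC, ∑ i : Fin n, probLeak (R i) Finset.univ H v
      ≤ (n:ℝ) * (β * N) := by
    rw [Finset.sum_comm]
    calc ∑ i : Fin n, ∑ H ∈ PC, probLeak (R i) Finset.univ H v
        ≤ ∑ _i : Fin n, β * N := Finset.sum_le_sum (fun i _ => hSi i)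
      _ = (n:ℝ) * (β * N) := by
          rw [Finset.sum_const, Finset.card_univ, Fintype.card_fin, nsmul_eq_mul]
  have hBadcard : 6 * β * (n:ℝ) * (Bad.card : ℝ) ≤ (n:ℝ) * (β * N) := by
    calc 6 * β * (n:ℝ) * (Bad.card : ℝ) = ∑ _H ∈ Bad, 6 * β * (n:ℝ) := by
          rw [Finset.sum_const, nsmul_eq_mul]; ring
      _ ≤ ∑ H ∈ Bad, ∑ i : Fin n, probLeak (R i) Finset.univ H v :=
          Finset.sum_le_sum hXbound
      _ ≤ ∑ H ∈ PC, ∑ i : Fin n, probLeak (R i) Finset.univ H v := by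
          apply Finset.sum_le_sum_of_subset_of_nonneg (Finset.filter_subset _ _)
          intro H _ _
          exact Finset.sum_nonneg fun i _ => hPLnn i H
      _ ≤ (n:ℝ) * (β * N) := htotal
  have hnR : (0:ℝ) < (n:ℝ) := by exact_mod_cast hnpos
  have hBadN : (Bad.card : ℝ) ≤ N / 6 := by
    nlinarith [mul_pos hβ0 hnR, hBadcard]
  have hGoodBad : ((PC.filter (fun H => ∀ i : Fin n,
        probLeak (R i) Finset.univ H v < 6 * β * (n:ℝ))).card : ℝ)
      + (Bad.card : ℝ) = N := by
    rw [hBad, hN]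
    exact_mod_cast Finset.card_filter_add_card_filter_not
      (fun H => ∀ i : Fin n, probLeak (R i) Finset.univ H v < 6 * β * (n:ℝ))
  rw [le_div_iff₀ hNR]
  linarith
end
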